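/- arXiv:1708.02066 — 6 statements merged into one kernel-verified Lean document; each statement's English description precedes it below -/
import Mathlib

section
/- Let 1<p≤q<∞ with conjugate exponents p',q', and let ω, σ be weights. Suppose there is a constant C such that ∫_Ω Σ_{i∈ℤ} α_i 𝔼_i(fσ) 𝔼_i(gω) dμ ≤ C ‖f‖_{L^p(σ)} ‖g‖_{L^{q'}(ω)} for all nonnegative f ∈ L^p(σ) and g ∈ L^{q'}(ω). Then both testing conditions hold with constant C: for every i∈ℤ and E∈𝓕_i⁰, (∫_E (Σ_{j≥i} 𝔼_j(σ) α_j)^q ω dμ)^{1/q} ≤ C σ(E)^{1/p} and (∫_E (Σ_{j≥i} 𝔼_j(ω) α_j)^{p'} σ dμ)^{1/p'} ≤ C ω(E)^{1/q'}. -/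
open MeasureTheory
open scoped ENNReal


lemma helper_scalar {A D b b' : ℝ} (hA : 0 ≤ A) (hD : 0 ≤ D) (hb : 1 < b)
    (hbb' : 1 / b + 1 / b' = 1) (h : A ≤ D * A ^ (1 / b')) : A ^ (1 / b) ≤ D := by
  rcases eq_or_lt_of_le hA with hA0 | hA0
  · rw [← hA0, Real.zero_rpow (by positivity)]
    exact hD
  · have h1 : A ^ (1 / b) * A ^ (1 / b') = A := by
      rw [← Real.rpow_add hA0, hbb', Real.rpow_one]
    have h2 : 0 < A ^ (1 / b') := Real.rpow_pos_of_pos hA0 _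
    have h3 : A ^ (1 / b) * A ^ (1 / b') ≤ D * A ^ (1 / b') := by rw [h1]; exact h
    exact le_of_mul_le_mul_right h3 h2

lemma helper_key
    {Ω : Type*} {m : MeasurableSpace Ω} {μ : Measure Ω} [SigmaFinite μ]
    (ℱ : Filtration ℤ m) [SigmaFiniteFiltration μ ℱ]
    (α : ℤ → Ω → ℝ) (hα_nonneg : ∀ i, 0 ≤ α i)
    (hα_meas : ∀ i, StronglyMeasurable[ℱ i] (α i))
    (hα_bdd : ∀ i, ∃ B : ℝ, ∀ x, α i x ≤ B)
    (ρ τ : Ω → ℝ) (hρ_nonneg : 0 ≤ ρ) (hτ_nonneg : 0 ≤ τ)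
    (hρ_meas : Measurable ρ) (hτ_meas : Measurable τ)
    (hρ_int : Integrable ρ μ) (hτ_int : Integrable τ μ)
    (C : ℝ) (hC : 0 ≤ C)
    (a b b' : ℝ) (ha : 0 < a) (hb : 1 < b) (hbb' : 1 / b + 1 / b' = 1)
    (i : ℤ) (E : Set Ω) (hE : MeasurableSet[ℱ i] E)
    (hbound' : ∀ u : Ω → ℝ, Measurable u → 0 ≤ u → (∃ M : ℝ, 0 ≤ M ∧ ∀ x, u x ≤ M) →
      ∫⁻ x, ∑' j : ℤ, ENNReal.ofReal
          (α j x * (μ[E.indicator τ|ℱ j]) x * (μ[fun y => u y * ρ y|ℱ j]) x) ∂μ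
        ≤ ENNReal.ofReal (C * (∫ x in E, τ x ∂μ) ^ (1 / a)
            * (∫ x, u x ^ b' * ρ x ∂μ) ^ (1 / b')))
    (s : Finset ℤ) (hs : ∀ j ∈ s, i ≤ j) (K : ℝ) (hK : 0 ≤ K) :
    (∫ x, (∑ j ∈ s, E.indicator (fun y => α j y * min (max ((μ[τ|ℱ j]) y) 0) K) x) ^ b
        * ρ x ∂μ) ^ (1 / b)
      ≤ C * (∫ x in E, τ x ∂μ) ^ (1 / a) := by
  -- basic exponent facts
  have hb0 : (0:ℝ) < b := lt_trans one_pos hb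
  have hbne : b ≠ 0 := hb0.ne'
  have hb'pos : 0 < b' := by
    have h1 : 1 / b' = 1 - 1 / b := by linarith
    have h2 : (0:ℝ) < 1 - 1 / b := by
      have : 1 / b < 1 := by rw [div_lt_one hb0]; exact hb
      linarith
    have := h1 ▸ h2
    exact one_div_pos.mp this
  have hb'val : (b - 1) * b' = b := by
    have hb'ne : b' ≠ 0 := hb'pos.ne'
    field_simp at hbb'
    nlinarith [hbb']
  have hEm : MeasurableSet E := ℱ.le i E hE
  choose B hB using hα_bdd
  -- the truncated function
  set T : Ω → ℝ := fun x => ∑ j ∈ s, E.indicator (fun y => α j y * min (max ((μ[τ|ℱ j]) y) 0) K) x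
    with hTdef
  have hαm : ∀ j, Measurable (α j) := fun j => ((hα_meas j).mono (ℱ.le j)).measurable
  have hterm_meas : ∀ j : ℤ,
      Measurable (E.indicator (fun y => α j y * min (max ((μ[τ|ℱ j]) y) 0) K)) := fun j =>
    (((hαm j).mul ((((stronglyMeasurable_condExp (m := ℱ j)).mono (ℱ.le j)).measurable.max
      measurable_const).min measurable_const))).indicator hEm
  have hterm_nonneg : ∀ j x, 0 ≤ E.indicator (fun y => α j y * min (max ((μ[τ|ℱ j]) y) 0) K) x :=
    fun j x => Set.indicator_nonneg
      (fun y _ => mul_nonneg (hα_nonneg j y) (le_min (le_max_right _ _) hK)) x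
  have hterm_bdd : ∀ j x, E.indicator (fun y => α j y * min (max ((μ[τ|ℱ j]) y) 0) K) x
      ≤ max (B j) 0 * K := by
    intro j x
    by_cases hx : x ∈ E
    · rw [Set.indicator_of_mem hx]
      exact mul_le_mul (le_max_of_le_left (hB j x)) (min_le_right _ _)
        (le_min (le_max_right _ _) hK) (by positivity)
    · rw [Set.indicator_of_notMem hx]
      positivity
  have hT_meas : Measurable T := Finset.measurable_sum _ fun j _ => hterm_meas j
  have hT_nonneg : ∀ x, 0 ≤ T x := fun x => Finset.sum_nonneg fun j _ => hterm_nonneg j x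
  obtain ⟨M, hM0, hM⟩ : ∃ M : ℝ, 0 ≤ M ∧ ∀ x, T x ≤ M := by
    refine ⟨∑ j ∈ s, max (B j) 0 * K, Finset.sum_nonneg fun j _ => by positivity, fun x => ?_⟩
    exact Finset.sum_le_sum fun j _ => hterm_bdd j x
  -- the dual test function
  set g : Ω → ℝ := fun x => T x ^ (b - 1) with hgdef
  have hg_meas : Measurable g := hT_meas.pow_const _
  have hg_nonneg : 0 ≤ g := fun x => Real.rpow_nonneg (hT_nonneg x) _
  have hg_bdd : ∀ x, g x ≤ M ^ (b - 1) := fun x =>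
    Real.rpow_le_rpow (hT_nonneg x) (hM x) (by linarith)
  have hgρ_int : Integrable (fun x => g x * ρ x) μ :=
    hρ_int.bdd_mul hg_meas.aestronglyMeasurable
      (Filter.Eventually.of_forall fun x => by
        rw [Real.norm_eq_abs, abs_of_nonneg (hg_nonneg x)]; exact hg_bdd x)
  set A : ℝ := ∫ x, T x ^ b * ρ x ∂μ with hAdef
  have hA_nonneg : 0 ≤ A :=
    integral_nonneg fun x => mul_nonneg (Real.rpow_nonneg (hT_nonneg x) _) (hρ_nonneg x)
  have hS_nonneg : (0:ℝ) ≤ ∫ x in E, τ x ∂μ := integral_nonneg fun x => hτ_nonneg x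
  -- pointwise splitting T^b = T * g
  have hsplit : ∀ x, T x ^ b * ρ x = T x * (g x * ρ x) := by
    intro x
    have h1 : T x ^ b = T x ^ (1:ℝ) * T x ^ (b - 1) := by
      rw [← Real.rpow_add' (hT_nonneg x) (by norm_num; exact hbne ∘ fun h => by linarith)]
      norm_num
    rw [h1, Real.rpow_one, hgdef, mul_assoc]
  -- expand A as a sum of integrals against conditional expectations
  have hterm_int : ∀ j : ℤ, Integrable (fun x =>
      E.indicator (fun y => α j y * min (max ((μ[τ|ℱ j]) y) 0) K) x * (g x * ρ x)) μ := by
    intro j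
    refine hgρ_int.bdd_mul (c := max (B j) 0 * K) (hterm_meas j).aestronglyMeasurable (Filter.Eventually.of_forall fun x => ?_)
    rw [Real.norm_eq_abs, abs_of_nonneg (hterm_nonneg j x)]
    exact hterm_bdd j x
  have expand : A = ∑ j ∈ s, ∫ x,
      E.indicator (fun y => α j y * min (max ((μ[τ|ℱ j]) y) 0) K) x
        * (μ[fun y => g y * ρ y|ℱ j]) x ∂μ := by
    have e1 : A = ∑ j ∈ s, ∫ x,
        E.indicator (fun y => α j y * min (max ((μ[τ|ℱ j]) y) 0) K) x * (g x * ρ x) ∂μ := by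
      rw [hAdef, ← integral_finset_sum s fun j _ => hterm_int j]
      refine integral_congr_ae (Filter.Eventually.of_forall fun x => ?_)
      show T x ^ b * ρ x = _
      rw [hsplit x, hTdef]
      exact Finset.sum_mul _ _ _
    rw [e1]
    refine Finset.sum_congr rfl fun j hj => ?_
    have hij : i ≤ j := hs j hj
    have hEj : MeasurableSet[ℱ j] E := ℱ.mono hij E hE
    have hsm : StronglyMeasurable[ℱ j]
        (E.indicator (fun y => α j y * min (max ((μ[τ|ℱ j]) y) 0) K)) :=
      (Measurable.stronglyMeasurable ((hα_meas j).measurable.mul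
        (((stronglyMeasurable_condExp (m := ℱ j)).measurable.max measurable_const).min
          measurable_const))).indicator hEj
    have hmul := condExp_mul_of_stronglyMeasurable_left (m := ℱ j) (μ := μ) hsm
      (by exact hterm_int j) hgρ_int
    calc ∫ x, E.indicator (fun y => α j y * min (max ((μ[τ|ℱ j]) y) 0) K) x * (g x * ρ x) ∂μ
        = ∫ x, (μ[(E.indicator fun y => α j y * min (max ((μ[τ|ℱ j]) y) 0) K)
            * fun y => g y * ρ y|ℱ j]) x ∂μ := (integral_condExp (ℱ.le j)).symm
      _ = ∫ x, E.indicator (fun y => α j y * min (max ((μ[τ|ℱ j]) y) 0) K) x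
            * (μ[fun y => g y * ρ y|ℱ j]) x ∂μ := integral_congr_ae hmul
  have hgρ_nonneg : 0 ≤ᵐ[μ] fun y => g y * ρ y :=
    Filter.Eventually.of_forall fun y => mul_nonneg (hg_nonneg y) (hρ_nonneg y)
  have hcond_nonneg : ∀ j : ℤ, 0 ≤ᵐ[μ] μ[fun y => g y * ρ y|ℱ j] := fun j =>
    condExp_nonneg hgρ_nonneg
  have hterm2_int : ∀ j : ℤ, Integrable (fun x =>
      E.indicator (fun y => α j y * min (max ((μ[τ|ℱ j]) y) 0) K) x
        * (μ[fun y => g y * ρ y|ℱ j]) x) μ := fun j =>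
    integrable_condExp.bdd_mul (hterm_meas j).aestronglyMeasurable
      (Filter.Eventually.of_forall fun x => by
        rw [Real.norm_eq_abs, abs_of_nonneg (hterm_nonneg j x)]; exact hterm_bdd j x)
  have step2 : ENNReal.ofReal A ≤ ∫⁻ x, ∑' j : ℤ, ENNReal.ofReal
      (α j x * (μ[E.indicator τ|ℱ j]) x * (μ[fun y => g y * ρ y|ℱ j]) x) ∂μ := by
    rw [expand, ENNReal.ofReal_sum_of_nonneg (fun j hj =>
      integral_nonneg_of_ae ((hcond_nonneg j).mono fun x hx =>
        mul_nonneg (hterm_nonneg j x) hx))]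
    have e2 : ∀ j ∈ s, ENNReal.ofReal (∫ x,
        E.indicator (fun y => α j y * min (max ((μ[τ|ℱ j]) y) 0) K) x
          * (μ[fun y => g y * ρ y|ℱ j]) x ∂μ)
        = ∫⁻ x, ENNReal.ofReal (E.indicator (fun y => α j y * min (max ((μ[τ|ℱ j]) y) 0) K) x
          * (μ[fun y => g y * ρ y|ℱ j]) x) ∂μ := fun j hj =>
      ofReal_integral_eq_lintegral_ofReal (hterm2_int j)
        ((hcond_nonneg j).mono fun x hx => mul_nonneg (hterm_nonneg j x) hx)
    rw [Finset.sum_congr rfl e2]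
    have e3 : ∀ j ∈ s, (∫⁻ x, ENNReal.ofReal
          (E.indicator (fun y => α j y * min (max ((μ[τ|ℱ j]) y) 0) K) x
            * (μ[fun y => g y * ρ y|ℱ j]) x) ∂μ)
        ≤ ∫⁻ x, ENNReal.ofReal (α j x * (μ[E.indicator τ|ℱ j]) x
            * (μ[fun y => g y * ρ y|ℱ j]) x) ∂μ := by
      intro j hj
      have hEj : MeasurableSet[ℱ j] E := ℱ.mono (hs j hj) E hE
      refine lintegral_mono_ae ?_
      filter_upwards [condExp_indicator (m := ℱ j) hτ_int hEj,
        condExp_nonneg (m := ℱ j) (μ := μ) (f := τ)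
          (Filter.Eventually.of_forall fun y => hτ_nonneg y),
        hcond_nonneg j] with x h1 h2 h3
      refine ENNReal.ofReal_le_ofReal ?_
      rw [h1]
      by_cases hx : x ∈ E
      · rw [Set.indicator_of_mem hx, Set.indicator_of_mem hx]
        refine mul_le_mul_of_nonneg_right ?_ h3
        refine mul_le_mul_of_nonneg_left ?_ (hα_nonneg j x)
        calc min (max ((μ[τ|ℱ j]) x) 0) K ≤ max ((μ[τ|ℱ j]) x) 0 := min_le_left _ _
          _ = (μ[τ|ℱ j]) x := max_eq_left h2
      · rw [Set.indicator_of_notMem hx, Set.indicator_of_notMem hx]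
        simp [mul_nonneg, mul_nonneg (mul_nonneg (hα_nonneg j x) le_rfl)]
    refine le_trans (Finset.sum_le_sum e3) ?_
    have hmeas3 : ∀ j ∈ s, Measurable fun x => ENNReal.ofReal
        (α j x * (μ[E.indicator τ|ℱ j]) x * (μ[fun y => g y * ρ y|ℱ j]) x) := fun j _ =>
      (((hαm j).mul ((stronglyMeasurable_condExp (m := ℱ j)).mono (ℱ.le j)).measurable).mul
        ((stronglyMeasurable_condExp (m := ℱ j)).mono (ℱ.le j)).measurable).ennreal_ofReal
    calc ∑ j ∈ s, ∫⁻ x, ENNReal.ofReal (α j x * (μ[E.indicator τ|ℱ j]) x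
            * (μ[fun y => g y * ρ y|ℱ j]) x) ∂μ
        = ∫⁻ x, ∑ j ∈ s, ENNReal.ofReal (α j x * (μ[E.indicator τ|ℱ j]) x
            * (μ[fun y => g y * ρ y|ℱ j]) x) ∂μ := (lintegral_finset_sum s hmeas3).symm
      _ ≤ ∫⁻ x, ∑' j : ℤ, ENNReal.ofReal (α j x * (μ[E.indicator τ|ℱ j]) x
            * (μ[fun y => g y * ρ y|ℱ j]) x) ∂μ :=
          lintegral_mono fun x => ENNReal.sum_le_tsum s
  have step3 := hbound' g hg_meas hg_nonneg ⟨M ^ (b - 1), by positivity, hg_bdd⟩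
  have hgb' : (∫ x, g x ^ b' * ρ x ∂μ) = A := by
    rw [hAdef]
    refine integral_congr_ae (Filter.Eventually.of_forall fun x => ?_)
    show g x ^ b' * ρ x = T x ^ b * ρ x
    rw [hgdef]
    simp only
    rw [← Real.rpow_mul (hT_nonneg x), hb'val]
  rw [hgb'] at step3
  have step4 : A ≤ C * (∫ x in E, τ x ∂μ) ^ (1 / a) * A ^ (1 / b') := by
    have h5 := le_trans step2 step3
    exact (ENNReal.ofReal_le_ofReal_iff (mul_nonneg (mul_nonneg hC
      (Real.rpow_nonneg hS_nonneg _)) (Real.rpow_nonneg hA_nonneg _))).mp h5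
  exact helper_scalar hA_nonneg (mul_nonneg hC (Real.rpow_nonneg hS_nonneg _)) hb hbb' step4



lemma helper_iSup_rpow {f : ℕ → ℝ≥0∞} {b : ℝ} (hb : 0 < b) :
    (⨆ n, f n) ^ b = ⨆ n, f n ^ b := by
  refine le_antisymm ?_ (iSup_le fun n => ENNReal.rpow_le_rpow (le_iSup f n) hb.le)
  have h1 : (⨆ n, f n) ≤ (⨆ n, f n ^ b) ^ (1 / b) := by
    refine iSup_le fun n => ?_
    have h2 : f n = (f n ^ b) ^ (1 / b) := by
      rw [← ENNReal.rpow_mul, mul_one_div_cancel hb.ne', ENNReal.rpow_one]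
    rw [h2]
    exact ENNReal.rpow_le_rpow (le_iSup (fun n => f n ^ b) n) (by positivity)
  calc (⨆ n, f n) ^ b ≤ ((⨆ n, f n ^ b) ^ (1 / b)) ^ b := ENNReal.rpow_le_rpow h1 hb.le
    _ = ⨆ n, f n ^ b := by
      rw [← ENNReal.rpow_mul, one_div_mul_cancel hb.ne', ENNReal.rpow_one]

section Main
variable {Ω : Type*} {m : MeasurableSpace Ω} {μ : Measure Ω} [SigmaFinite μ]
  (ℱ : Filtration ℤ m) [SigmaFiniteFiltration μ ℱ]

lemma helper_main
    (α : ℤ → Ω → ℝ) (hα_nonneg : ∀ i, 0 ≤ α i)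
    (hα_meas : ∀ i, StronglyMeasurable[ℱ i] (α i))
    (hα_bdd : ∀ i, ∃ B : ℝ, ∀ x, α i x ≤ B)
    (ρ τ : Ω → ℝ) (hρ_nonneg : 0 ≤ ρ) (hτ_nonneg : 0 ≤ τ)
    (hρ_meas : Measurable ρ) (hτ_meas : Measurable τ)
    (hρ_int : Integrable ρ μ) (hτ_int : Integrable τ μ)
    (C : ℝ) (hC : 0 ≤ C)
    (a b b' : ℝ) (ha : 0 < a) (hb : 1 < b) (hbb' : 1 / b + 1 / b' = 1)
    (i : ℤ) (E : Set Ω) (hE : MeasurableSet[ℱ i] E)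
    (hbound' : ∀ u : Ω → ℝ, Measurable u → 0 ≤ u → (∃ M : ℝ, 0 ≤ M ∧ ∀ x, u x ≤ M) →
      ∫⁻ x, ∑' j : ℤ, ENNReal.ofReal
          (α j x * (μ[E.indicator τ|ℱ j]) x * (μ[fun y => u y * ρ y|ℱ j]) x) ∂μ
        ≤ ENNReal.ofReal (C * (∫ x in E, τ x ∂μ) ^ (1 / a)
            * (∫ x, u x ^ b' * ρ x ∂μ) ^ (1 / b'))) :
    (∫⁻ x in E, (∑' j : {j : ℤ // i ≤ j},
          ENNReal.ofReal ((μ[τ|ℱ j.1]) x * α j.1 x)) ^ b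
        * ENNReal.ofReal (ρ x) ∂μ) ^ (1 / b)
      ≤ ENNReal.ofReal C * (∫⁻ x in E, ENNReal.ofReal (τ x) ∂μ) ^ (1 / a) := by
  have hb0 : (0:ℝ) < b := lt_trans one_pos hb
  have hEm : MeasurableSet E := ℱ.le i E hE
  -- the truncated sums
  set T : ℕ → Ω → ℝ := fun n x => ∑ j ∈ Finset.Icc i (i + (n:ℤ)),
      E.indicator (fun y => α j y * min (max ((μ[τ|ℱ j]) y) 0) (n:ℝ)) x with hTdef
  have hαm : ∀ j, Measurable (α j) := fun j => ((hα_meas j).mono (ℱ.le j)).measurable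
  have hcτ : ∀ j : ℤ, Measurable (μ[τ|ℱ j]) := fun j =>
    ((stronglyMeasurable_condExp (m := ℱ j)).mono (ℱ.le j)).measurable
  have hT_meas : ∀ n, Measurable (T n) := fun n =>
    Finset.measurable_sum _ fun j _ =>
      ((hαm j).mul (((hcτ j).max measurable_const).min measurable_const)).indicator hEm
  have hT_nonneg : ∀ n x, 0 ≤ T n x := fun n x =>
    Finset.sum_nonneg fun j _ => Set.indicator_nonneg
      (fun y _ => mul_nonneg (hα_nonneg j y)
        (le_min (le_max_right _ _) (Nat.cast_nonneg n))) x
  have hT_mono : ∀ x, Monotone fun n => T n x := by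
    intro x n1 n2 h12
    have hsub : Finset.Icc i (i + (n1:ℤ)) ⊆ Finset.Icc i (i + (n2:ℤ)) :=
      Finset.Icc_subset_Icc le_rfl (by omega)
    calc T n1 x ≤ ∑ j ∈ Finset.Icc i (i + (n1:ℤ)),
          E.indicator (fun y => α j y * min (max ((μ[τ|ℱ j]) y) 0) (n2:ℝ)) x := by
          refine Finset.sum_le_sum fun j _ => Set.indicator_le_indicator ?_
          exact mul_le_mul_of_nonneg_left
            (min_le_min le_rfl (by exact_mod_cast h12)) (hα_nonneg j x)
      _ ≤ T n2 x := by
          refine Finset.sum_le_sum_of_subset_of_nonneg hsub fun j _ _ =>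
            Set.indicator_nonneg (fun y _ => mul_nonneg (hα_nonneg j y)
              (le_min (le_max_right _ _) (Nat.cast_nonneg n2))) x
  -- a.e. identification of the series as a monotone limit of truncations
  have hae : ∀ᵐ x ∂μ, (∑' j : {j : ℤ // i ≤ j}, ENNReal.ofReal ((μ[τ|ℱ j.1]) x * α j.1 x))
      = ⨆ n : ℕ, ENNReal.ofReal (∑ j ∈ Finset.Icc i (i + (n:ℤ)),
          α j x * min (max ((μ[τ|ℱ j]) x) 0) (n:ℝ)) := by
    have h0 : ∀ᵐ x ∂μ, ∀ j : {j : ℤ // i ≤ j}, 0 ≤ (μ[τ|ℱ j.1]) x := by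
      rw [ae_all_iff]
      exact fun j => condExp_nonneg (Filter.Eventually.of_forall fun y => hτ_nonneg y)
    filter_upwards [h0] with x hx
    apply le_antisymm
    · rw [ENNReal.tsum_eq_iSup_sum]
      refine iSup_le fun s => ?_
      obtain ⟨n, hn1, hn2⟩ : ∃ n : ℕ, (∀ j ∈ s, (j.1 - i).toNat ≤ n)
          ∧ (∀ j ∈ s, ⌈(μ[τ|ℱ j.1]) x⌉₊ ≤ n) :=
        ⟨max (s.sup fun j => (j.1 - i).toNat) (s.sup fun j => ⌈(μ[τ|ℱ j.1]) x⌉₊),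
          fun j hj => le_trans (Finset.le_sup (f := fun j => (j.1 - i).toNat) hj)
            (le_max_left _ _),
          fun j hj => le_trans (Finset.le_sup (f := fun j => ⌈(μ[τ|ℱ j.1]) x⌉₊) hj)
            (le_max_right _ _)⟩
      have hcover : ∀ j ∈ s, j.1 ∈ Finset.Icc i (i + (n:ℤ)) := by
        intro j hj
        rw [Finset.mem_Icc]
        refine ⟨j.2, ?_⟩
        have h2 : j.1 - i ≤ (n:ℤ) := Int.toNat_le.mp (hn1 j hj)
        linarith
      have htrunc : ∀ j ∈ s, min (max ((μ[τ|ℱ j.1]) x) 0) (n:ℝ) = (μ[τ|ℱ j.1]) x := by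
        intro j hj
        rw [max_eq_left (hx j), min_eq_left]
        calc (μ[τ|ℱ j.1]) x ≤ (⌈(μ[τ|ℱ j.1]) x⌉₊ : ℝ) := Nat.le_ceil _
          _ ≤ (n:ℝ) := by exact_mod_cast hn2 j hj
      calc ∑ j ∈ s, ENNReal.ofReal ((μ[τ|ℱ j.1]) x * α j.1 x)
          = ENNReal.ofReal (∑ j ∈ s, (μ[τ|ℱ j.1]) x * α j.1 x) :=
            (ENNReal.ofReal_sum_of_nonneg fun j _ =>
              mul_nonneg (hx j) (hα_nonneg j.1 x)).symm
        _ ≤ ENNReal.ofReal (∑ j ∈ Finset.Icc i (i + (n:ℤ)),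
              α j x * min (max ((μ[τ|ℱ j]) x) 0) (n:ℝ)) := by
            refine ENNReal.ofReal_le_ofReal ?_
            have himg : ∑ j ∈ s, (μ[τ|ℱ j.1]) x * α j.1 x
                = ∑ j ∈ s.image Subtype.val,
                    α j x * min (max ((μ[τ|ℱ j]) x) 0) (n:ℝ) := by
              rw [Finset.sum_image (fun u _ v _ h => Subtype.ext h)]
              refine Finset.sum_congr rfl fun j hj => ?_
              rw [htrunc j hj, mul_comm]
            rw [himg]
            refine Finset.sum_le_sum_of_subset_of_nonneg ?_ fun j _ _ =>
              mul_nonneg (hα_nonneg j x) (le_min (le_max_right _ _) (Nat.cast_nonneg n))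
            intro j hj
            obtain ⟨u, hu, rfl⟩ := Finset.mem_image.mp hj
            exact hcover u hu
        _ ≤ ⨆ n : ℕ, ENNReal.ofReal (∑ j ∈ Finset.Icc i (i + (n:ℤ)),
              α j x * min (max ((μ[τ|ℱ j]) x) 0) (n:ℝ)) :=
            le_iSup (fun n : ℕ => ENNReal.ofReal (∑ j ∈ Finset.Icc i (i + (n:ℤ)),
              α j x * min (max ((μ[τ|ℱ j]) x) 0) (n:ℝ))) n
    · refine iSup_le fun n => ?_
      rw [ENNReal.ofReal_sum_of_nonneg (fun j _ =>
        mul_nonneg (hα_nonneg j x) (le_min (le_max_right _ _) (Nat.cast_nonneg n)))]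
      calc ∑ j ∈ Finset.Icc i (i + (n:ℤ)),
            ENNReal.ofReal (α j x * min (max ((μ[τ|ℱ j]) x) 0) (n:ℝ))
          = ∑ j ∈ (Finset.Icc i (i + (n:ℤ))).attach,
              ENNReal.ofReal (α j.1 x * min (max ((μ[τ|ℱ j.1]) x) 0) (n:ℝ)) :=
            (Finset.sum_attach _ _).symm
        _ = ∑ j ∈ (Finset.Icc i (i + (n:ℤ))).attach.map
              ⟨fun j => (⟨j.1, (Finset.mem_Icc.mp j.2).1⟩ : {j : ℤ // i ≤ j}),
                fun u v h => by simp only [Subtype.mk.injEq] at h; exact Subtype.ext h⟩,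
              ENNReal.ofReal (α j.1 x * min (max ((μ[τ|ℱ j.1]) x) 0) (n:ℝ)) :=
            (Finset.sum_map ((Finset.Icc i (i + (n:ℤ))).attach)
              ⟨fun j => (⟨j.1, (Finset.mem_Icc.mp j.2).1⟩ : {j : ℤ // i ≤ j}),
                fun u v h => by simp only [Subtype.mk.injEq] at h; exact Subtype.ext h⟩
              (fun j => ENNReal.ofReal (α j.1 x * min (max ((μ[τ|ℱ j.1]) x) 0) (n:ℝ)))).symm
        _ ≤ ∑ j ∈ (Finset.Icc i (i + (n:ℤ))).attach.map
              ⟨fun j => (⟨j.1, (Finset.mem_Icc.mp j.2).1⟩ : {j : ℤ // i ≤ j}),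
                fun u v h => by simp only [Subtype.mk.injEq] at h; exact Subtype.ext h⟩,
              ENNReal.ofReal ((μ[τ|ℱ j.1]) x * α j.1 x) := by
            refine Finset.sum_le_sum fun j _ => ENNReal.ofReal_le_ofReal ?_
            calc α j.1 x * min (max ((μ[τ|ℱ j.1]) x) 0) (n:ℝ)
                ≤ α j.1 x * (μ[τ|ℱ j.1]) x := mul_le_mul_of_nonneg_left
                  (le_trans (min_le_left _ _) (le_of_eq (max_eq_left (hx j))))
                  (hα_nonneg j.1 x)
              _ = (μ[τ|ℱ j.1]) x * α j.1 x := mul_comm _ _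
        _ ≤ ∑' j : {j : ℤ // i ≤ j}, ENNReal.ofReal ((μ[τ|ℱ j.1]) x * α j.1 x) :=
            ENNReal.sum_le_tsum _
  -- per-truncation bound from helper_key
  have key : ∀ n : ℕ, (∫ x, T n x ^ b * ρ x ∂μ) ^ (1 / b) ≤ C * (∫ x in E, τ x ∂μ) ^ (1 / a) :=
    fun n => helper_key ℱ α hα_nonneg hα_meas hα_bdd ρ τ hρ_nonneg hτ_nonneg hρ_meas hτ_meas
      hρ_int hτ_int C hC a b b' ha hb hbb' i E hE hbound'
      (Finset.Icc i (i + (n:ℤ))) (fun j hj => (Finset.mem_Icc.mp hj).1) (n:ℝ) (Nat.cast_nonneg n)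
  set S : ℝ := ∫ x in E, τ x ∂μ with hSdef
  have hS_nonneg : 0 ≤ S := integral_nonneg fun x => hτ_nonneg x
  have hSlint : ∫⁻ x in E, ENNReal.ofReal (τ x) ∂μ = ENNReal.ofReal S :=
    (ofReal_integral_eq_lintegral_ofReal hτ_int.restrict
      (Filter.Eventually.of_forall fun x => hτ_nonneg x)).symm
  have hTnb_int : ∀ n : ℕ, Integrable (fun x => T n x ^ b * ρ x) μ := by
    intro n
    obtain ⟨M, hM0, hM⟩ : ∃ M : ℝ, 0 ≤ M ∧ ∀ x, T n x ≤ M := by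
      choose B hB using hα_bdd
      refine ⟨∑ j ∈ Finset.Icc i (i + (n:ℤ)), max (B j) 0 * n,
        Finset.sum_nonneg fun j _ => by positivity, fun x => ?_⟩
      refine Finset.sum_le_sum fun j _ => ?_
      by_cases hxE : x ∈ E
      · rw [Set.indicator_of_mem hxE]
        exact mul_le_mul (le_max_of_le_left (hB j x)) (min_le_right _ _)
          (le_min (le_max_right _ _) (Nat.cast_nonneg n)) (by positivity)
      · rw [Set.indicator_of_notMem hxE]
        positivity
    refine hρ_int.bdd_mul (c := M ^ b) ((hT_meas n).pow_const _).aestronglyMeasurable (Filter.Eventually.of_forall fun x => ?_)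
    rw [Real.norm_eq_abs, abs_of_nonneg (Real.rpow_nonneg (hT_nonneg n x) _)]
    exact Real.rpow_le_rpow (hT_nonneg n x) (hM x) hb0.le
  have hL : (∫⁻ x in E, (∑' j : {j : ℤ // i ≤ j},
        ENNReal.ofReal ((μ[τ|ℱ j.1]) x * α j.1 x)) ^ b * ENNReal.ofReal (ρ x) ∂μ)
      = ⨆ n : ℕ, ENNReal.ofReal (∫ x, T n x ^ b * ρ x ∂μ) := by
    calc (∫⁻ x in E, (∑' j : {j : ℤ // i ≤ j},
            ENNReal.ofReal ((μ[τ|ℱ j.1]) x * α j.1 x)) ^ b * ENNReal.ofReal (ρ x) ∂μ)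
        = ∫⁻ x in E, (⨆ n : ℕ, ENNReal.ofReal (∑ j ∈ Finset.Icc i (i + (n:ℤ)),
            α j x * min (max ((μ[τ|ℱ j]) x) 0) (n:ℝ))) ^ b * ENNReal.ofReal (ρ x) ∂μ :=
          lintegral_congr_ae (ae_restrict_of_ae (hae.mono fun x hx => by dsimp only; rw [hx]))
      _ = ∫⁻ x in E, ⨆ n : ℕ, (ENNReal.ofReal (T n x)) ^ b * ENNReal.ofReal (ρ x) ∂μ := by
          refine setLIntegral_congr_fun hEm (fun x hxE => ?_)
          have hTx : ∀ n : ℕ, T n x = ∑ j ∈ Finset.Icc i (i + (n:ℤ)),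
              α j x * min (max ((μ[τ|ℱ j]) x) 0) (n:ℝ) := by
            intro n
            rw [hTdef]
            exact Finset.sum_congr rfl fun j _ => Set.indicator_of_mem hxE _
          simp only [hTx]
          rw [helper_iSup_rpow hb0, ENNReal.iSup_mul]
      _ = ⨆ n : ℕ, ∫⁻ x in E, (ENNReal.ofReal (T n x)) ^ b * ENNReal.ofReal (ρ x) ∂μ :=
          lintegral_iSup (fun n => ((hT_meas n).ennreal_ofReal.pow_const _).mul
              hρ_meas.ennreal_ofReal)
            (fun n1 n2 h x => mul_le_mul' (ENNReal.rpow_le_rpow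
              (ENNReal.ofReal_le_ofReal (hT_mono x h)) hb0.le) le_rfl)
      _ = ⨆ n : ℕ, ENNReal.ofReal (∫ x, T n x ^ b * ρ x ∂μ) := by
          refine iSup_congr fun n => ?_
          calc ∫⁻ x in E, (ENNReal.ofReal (T n x)) ^ b * ENNReal.ofReal (ρ x) ∂μ
              = ∫⁻ x in E, ENNReal.ofReal (T n x ^ b * ρ x) ∂μ := by
                refine lintegral_congr fun x => ?_
                rw [ENNReal.ofReal_rpow_of_nonneg (hT_nonneg n x) hb0.le,
                  ← ENNReal.ofReal_mul (Real.rpow_nonneg (hT_nonneg n x) _)]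
            _ = ENNReal.ofReal (∫ x in E, T n x ^ b * ρ x ∂μ) :=
                (ofReal_integral_eq_lintegral_ofReal (hTnb_int n).restrict
                  (Filter.Eventually.of_forall fun x =>
                    mul_nonneg (Real.rpow_nonneg (hT_nonneg n x) _) (hρ_nonneg x))).symm
            _ = ENNReal.ofReal (∫ x, T n x ^ b * ρ x ∂μ) := by
                congr 1
                rw [← integral_indicator hEm]
                refine integral_congr_ae (Filter.Eventually.of_forall fun x => ?_)
                dsimp only
                by_cases hxE : x ∈ E
                · rw [Set.indicator_of_mem hxE]
                · rw [Set.indicator_of_notMem hxE]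
                  have hT0 : T n x = 0 := by
                    rw [hTdef]
                    exact Finset.sum_eq_zero fun j _ => Set.indicator_of_notMem hxE _
                  rw [hT0, Real.zero_rpow hb0.ne', zero_mul]
  rw [hL, hSlint]
  have hDb : (⨆ n : ℕ, ENNReal.ofReal (∫ x, T n x ^ b * ρ x ∂μ))
      ≤ ENNReal.ofReal ((C * S ^ (1 / a)) ^ b) := by
    refine iSup_le fun n => ?_
    have hAn : (0:ℝ) ≤ ∫ x, T n x ^ b * ρ x ∂μ :=
      integral_nonneg fun x => mul_nonneg (Real.rpow_nonneg (hT_nonneg n x) _) (hρ_nonneg x)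
    refine ENNReal.ofReal_le_ofReal ?_
    calc ∫ x, T n x ^ b * ρ x ∂μ = ((∫ x, T n x ^ b * ρ x ∂μ) ^ (1 / b)) ^ b := by
          rw [← Real.rpow_mul hAn, one_div_mul_cancel hb0.ne', Real.rpow_one]
      _ ≤ (C * S ^ (1 / a)) ^ b :=
          Real.rpow_le_rpow (Real.rpow_nonneg hAn _) (key n) hb0.le
  refine le_trans (ENNReal.rpow_le_rpow hDb (by positivity)) ?_
  have hconv : ENNReal.ofReal ((C * S ^ (1 / a)) ^ b)
      = (ENNReal.ofReal C * ENNReal.ofReal S ^ (1 / a)) ^ b := by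
    rw [← ENNReal.ofReal_rpow_of_nonneg
        (mul_nonneg hC (Real.rpow_nonneg hS_nonneg _)) hb0.le,
      ENNReal.ofReal_mul hC,
      ← ENNReal.ofReal_rpow_of_nonneg hS_nonneg (le_of_lt (one_div_pos.mpr ha))]
  rw [hconv, ← ENNReal.rpow_mul, mul_one_div_cancel hb0.ne', ENNReal.rpow_one]


end Main

/-- **Necessity of the testing conditions** (Theorem 1.1, easy direction).
If the bilinear positive operator satisfies the two-weight bound with constant `C`,
then both Sawyer-type testing conditions hold with the same constant `C`. -/
theorem testing_conditions_necessary
    {Ω : Type*} {m : MeasurableSpace Ω} {μ : Measure Ω} [SigmaFinite μ]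
    (ℱ : Filtration ℤ m) [SigmaFiniteFiltration μ ℱ]
    (p q : ℝ) (hp : 1 < p) (hpq : p ≤ q)
    (α : ℤ → Ω → ℝ) (hα_nonneg : ∀ i, 0 ≤ α i)
    (hα_meas : ∀ i, StronglyMeasurable[ℱ i] (α i))
    (hα_bdd : ∀ i, ∃ B : ℝ, ∀ x, α i x ≤ B)
    (ω σ : Ω → ℝ) (hω_nonneg : 0 ≤ ω) (hσ_nonneg : 0 ≤ σ)
    (hω_meas : Measurable ω) (hσ_meas : Measurable σ)
    (hω_int : Integrable ω μ) (hσ_int : Integrable σ μ)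
    (C : ℝ) (hC : 0 ≤ C)
    (hbound : ∀ f g : Ω → ℝ, Measurable f → Measurable g → 0 ≤ f → 0 ≤ g →
      Integrable (fun x => f x * σ x) μ → Integrable (fun x => g x * ω x) μ →
      Integrable (fun x => f x ^ p * σ x) μ →
      Integrable (fun x => g x ^ (q / (q - 1)) * ω x) μ →
      ∫⁻ x, ∑' i : ℤ, ENNReal.ofReal
          (α i x * (μ[fun y => f y * σ y|ℱ i]) x * (μ[fun y => g y * ω y|ℱ i]) x) ∂μ
        ≤ ENNReal.ofReal (C * (∫ x, f x ^ p * σ x ∂μ) ^ (1 / p)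
            * (∫ x, g x ^ (q / (q - 1)) * ω x ∂μ) ^ (1 - 1 / q))) :
    ∀ i : ℤ, ∀ E : Set Ω, MeasurableSet[ℱ i] E → μ E < ∞ →
      ((∫⁻ x in E, (∑' j : {j : ℤ // i ≤ j},
            ENNReal.ofReal ((μ[σ|ℱ j.1]) x * α j.1 x)) ^ q
          * ENNReal.ofReal (ω x) ∂μ) ^ (1 / q)
        ≤ ENNReal.ofReal C * (∫⁻ x in E, ENNReal.ofReal (σ x) ∂μ) ^ (1 / p))
      ∧ ((∫⁻ x in E, (∑' j : {j : ℤ // i ≤ j},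
            ENNReal.ofReal ((μ[ω|ℱ j.1]) x * α j.1 x)) ^ (p / (p - 1))
          * ENNReal.ofReal (σ x) ∂μ) ^ (1 - 1 / p)
        ≤ ENNReal.ofReal C * (∫⁻ x in E, ENNReal.ofReal (ω x) ∂μ) ^ (1 - 1 / q)) := by
  intro i E hE _hEμ
  have hq1 : 1 < q := lt_of_lt_of_le hp hpq
  have hp0 : (0:ℝ) < p := lt_trans one_pos hp
  have hq0 : (0:ℝ) < q := lt_trans one_pos hq1
  have hEm : MeasurableSet E := ℱ.le i E hE
  have hexpq : 1 / (q / (q - 1)) = 1 - 1 / q := by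
    rw [one_div_div, sub_div, div_self hq0.ne']
  have hexpp : 1 / (p / (p - 1)) = 1 - 1 / p := by
    rw [one_div_div, sub_div, div_self hp0.ne']
  have hind_nonneg : 0 ≤ E.indicator (fun _ => (1:ℝ)) :=
    fun x => Set.indicator_nonneg (fun _ _ => zero_le_one) x
  have hind_meas : Measurable (E.indicator (fun _ => (1:ℝ))) :=
    measurable_const.indicator hEm
  have hind_bd : ∀ x, ‖E.indicator (fun _ => (1:ℝ)) x‖ ≤ 1 := by
    intro x
    rw [Real.norm_eq_abs, abs_of_nonneg (hind_nonneg x)]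
    by_cases hx : x ∈ E
    · rw [Set.indicator_of_mem hx]
    · rw [Set.indicator_of_notMem hx]; exact zero_le_one
  constructor
  · -- first testing condition
    refine helper_main ℱ α hα_nonneg hα_meas hα_bdd ω σ hω_nonneg hσ_nonneg hω_meas hσ_meas
      hω_int hσ_int C hC p q (q / (q - 1)) hp0 hq1 ?_ i E hE ?_
    · rw [hexpq]; ring
    · intro u hu_meas hu_nonneg hMex
      obtain ⟨M, hM0, hM⟩ := hMex
      have h1 : Integrable (fun x => E.indicator (fun _ => (1:ℝ)) x * σ x) μ :=
        hσ_int.bdd_mul hind_meas.aestronglyMeasurable (Filter.Eventually.of_forall hind_bd)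
      have h2 : Integrable (fun x => u x * ω x) μ :=
        hω_int.bdd_mul hu_meas.aestronglyMeasurable (Filter.Eventually.of_forall fun x => by
          rw [Real.norm_eq_abs, abs_of_nonneg (hu_nonneg x)]; exact hM x)
      have hfp : (fun x => E.indicator (fun _ => (1:ℝ)) x ^ p * σ x) = E.indicator σ := by
        funext x
        by_cases hx : x ∈ E
        · simp [Set.indicator_of_mem hx, Real.one_rpow]
        · simp [Set.indicator_of_notMem hx, Real.zero_rpow hp0.ne']
      have h3 : Integrable (fun x => E.indicator (fun _ => (1:ℝ)) x ^ p * σ x) μ := by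
        rw [hfp]
        exact hσ_int.indicator hEm
      have h4 : Integrable (fun x => u x ^ (q / (q - 1)) * ω x) μ :=
        hω_int.bdd_mul (hu_meas.pow_const _).aestronglyMeasurable
          (Filter.Eventually.of_forall fun x => by
            rw [Real.norm_eq_abs, abs_of_nonneg (Real.rpow_nonneg (hu_nonneg x) _)]
            exact Real.rpow_le_rpow (hu_nonneg x) (hM x) (div_pos hq0 (by linarith)).le)
      have hb := hbound (E.indicator (fun _ => (1:ℝ))) u hind_meas hu_meas hind_nonneg
        hu_nonneg h1 h2 h3 h4
      have hfσ : (fun y => E.indicator (fun _ => (1:ℝ)) y * σ y) = E.indicator σ := by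
        funext y
        by_cases hy : y ∈ E
        · simp [Set.indicator_of_mem hy]
        · simp [Set.indicator_of_notMem hy]
      rw [hfσ, hfp, integral_indicator hEm] at hb
      rw [hexpq]
      exact hb
  · -- second testing condition
    rw [← hexpp, ← hexpq]
    have hp1' : 1 < p / (p - 1) := by
      rw [one_lt_div (by linarith)]
      linarith
    refine helper_main ℱ α hα_nonneg hα_meas hα_bdd σ ω hσ_nonneg hω_nonneg hσ_meas hω_meas
      hσ_int hω_int C hC (q / (q - 1)) (p / (p - 1)) p
      (div_pos hq0 (by linarith)) hp1' ?_ i E hE ?_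
    · rw [hexpp]; ring
    · intro u hu_meas hu_nonneg hMex
      obtain ⟨M, hM0, hM⟩ := hMex
      have h1 : Integrable (fun x => u x * σ x) μ :=
        hσ_int.bdd_mul hu_meas.aestronglyMeasurable (Filter.Eventually.of_forall fun x => by
          rw [Real.norm_eq_abs, abs_of_nonneg (hu_nonneg x)]; exact hM x)
      have h2 : Integrable (fun x => E.indicator (fun _ => (1:ℝ)) x * ω x) μ :=
        hω_int.bdd_mul hind_meas.aestronglyMeasurable (Filter.Eventually.of_forall hind_bd)
      have h3 : Integrable (fun x => u x ^ p * σ x) μ :=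
        hσ_int.bdd_mul (hu_meas.pow_const _).aestronglyMeasurable
          (Filter.Eventually.of_forall fun x => by
            rw [Real.norm_eq_abs, abs_of_nonneg (Real.rpow_nonneg (hu_nonneg x) _)]
            exact Real.rpow_le_rpow (hu_nonneg x) (hM x) hp0.le)
      have hgq : (fun x => E.indicator (fun _ => (1:ℝ)) x ^ (q / (q - 1)) * ω x)
          = E.indicator ω := by
        funext x
        by_cases hx : x ∈ E
        · simp [Set.indicator_of_mem hx, Real.one_rpow]
        · simp [Set.indicator_of_notMem hx,
            Real.zero_rpow (ne_of_gt (div_pos hq0 (by linarith : (0:ℝ) < q - 1)))]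
      have h4 : Integrable (fun x => E.indicator (fun _ => (1:ℝ)) x ^ (q / (q - 1)) * ω x) μ := by
        rw [hgq]
        exact hω_int.indicator hEm
      have hb := hbound u (E.indicator (fun _ => (1:ℝ))) hu_meas hind_meas hu_nonneg
        hind_nonneg h1 h2 h3 h4
      have hgω : (fun y => E.indicator (fun _ => (1:ℝ)) y * ω y) = E.indicator ω := by
        funext y
        by_cases hy : y ∈ E
        · simp [Set.indicator_of_mem hy]
        · simp [Set.indicator_of_notMem hy]
      rw [hgω, hgq, integral_indicator hEm] at hb
      have hswap : (fun x => ∑' j : ℤ, ENNReal.ofReal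
            (α j x * (μ[E.indicator ω|ℱ j]) x * (μ[fun y => u y * σ y|ℱ j]) x))
          = fun x => ∑' j : ℤ, ENNReal.ofReal
            (α j x * (μ[fun y => u y * σ y|ℱ j]) x * (μ[E.indicator ω|ℱ j]) x) :=
        funext fun x => tsum_congr fun j => by rw [mul_right_comm]
      rw [hswap, hexpq, mul_right_comm C ((∫ x in E, ω x ∂μ) ^ (1 - 1 / q))
        ((∫ x, u x ^ p * σ x ∂μ) ^ (1 / p))]
      exact hb
end

section
/- Let 1<p≤q<∞ with conjugate exponents p',q', and let σ, ω be weights. Suppose there is a constant C such that ‖T_α(fσ)‖_{L^{q,∞}(ω)} ≤ C ‖f‖_{L^p(σ)} for all nonnegative f ∈ L^p(σ), where ‖g‖_{L^{q,∞}(ω)} = sup_{λ>0} λ · ω({|g|>λ})^{1/q}. Then the testing condition holds: there is a constant C' depending only on p and q such that for every i∈ℤ and E∈𝓕_i⁰, (∫_E (Σ_{j≥i} 𝔼_j(ω) α_j)^{p'} σ dμ)^{1/p'} ≤ C' C · ω(E)^{1/q'}. -/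
open MeasureTheory Set Filter
open scoped ENNReal

section Aux
variable {Ω : Type*} {m : MeasurableSpace Ω} {m0 : MeasurableSpace Ω} {μ : Measure Ω}


lemma lintegral_mul_ofReal_condexp (hm : m ≤ m0) [SigmaFinite (μ.trim hm)]
    {k : Ω → ℝ} (hk_meas : Measurable k) (hk_int : Integrable k μ) (hk_nn : 0 ≤ᵐ[μ] k)
    {h : Ω → ℝ≥0∞} (hh : Measurable[m] h) :
    ∫⁻ x, h x * ENNReal.ofReal (k x) ∂μ = ∫⁻ x, h x * ENNReal.ofReal ((μ[k|m]) x) ∂μ := by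
  have hEk_sm : StronglyMeasurable[m] (μ[k|m]) := stronglyMeasurable_condExp
  have hEk_meas : Measurable (μ[k|m]) := (hEk_sm.mono hm).measurable
  have hh0 : Measurable[m0] h := hh.mono hm le_rfl
  have key : ∀ A : Set Ω, MeasurableSet[m] A →
      ∫⁻ x in A, ENNReal.ofReal (k x) ∂μ = ∫⁻ x in A, ENNReal.ofReal ((μ[k|m]) x) ∂μ := by
    intro A hA
    rw [← ofReal_integral_eq_lintegral_ofReal hk_int.restrict (ae_restrict_of_ae hk_nn),
        ← ofReal_integral_eq_lintegral_ofReal integrable_condExp.restrict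
          (ae_restrict_of_ae (condExp_nonneg hk_nn)),
        setIntegral_condExp hm hk_int hA]
  have htrim : (μ.withDensity fun x => ENNReal.ofReal (k x)).trim hm
      = (μ.withDensity fun x => ENNReal.ofReal ((μ[k|m]) x)).trim hm := by
    refine @Measure.ext Ω m _ _ fun A hA => ?_
    rw [trim_measurableSet_eq hm hA, trim_measurableSet_eq hm hA,
        withDensity_apply _ (hm A hA), withDensity_apply _ (hm A hA)]
    exact key A hA
  calc ∫⁻ x, h x * ENNReal.ofReal (k x) ∂μ
      = ∫⁻ x, ((fun x => ENNReal.ofReal (k x)) * h) x ∂μ := by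
        simp_rw [Pi.mul_apply, mul_comm]
    _ = ∫⁻ x, h x ∂(μ.withDensity fun x => ENNReal.ofReal (k x)) :=
        (lintegral_withDensity_eq_lintegral_mul μ
          (ENNReal.measurable_ofReal.comp hk_meas) hh0).symm
    _ = ∫⁻ x, h x ∂((μ.withDensity fun x => ENNReal.ofReal (k x)).trim hm) :=
        (lintegral_trim hm hh).symm
    _ = ∫⁻ x, h x ∂((μ.withDensity fun x => ENNReal.ofReal ((μ[k|m]) x)).trim hm) := by
        rw [htrim]
    _ = ∫⁻ x, h x ∂(μ.withDensity fun x => ENNReal.ofReal ((μ[k|m]) x)) :=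
        lintegral_trim hm hh
    _ = ∫⁻ x, ((fun x => ENNReal.ofReal ((μ[k|m]) x)) * h) x ∂μ :=
        lintegral_withDensity_eq_lintegral_mul μ
          (ENNReal.measurable_ofReal.comp hEk_meas) hh0
    _ = ∫⁻ x, h x * ENNReal.ofReal ((μ[k|m]) x) ∂μ := by
        simp_rw [Pi.mul_apply, mul_comm]

lemma lintegral_ofReal_condexp_mul (hm : m ≤ m0) [SigmaFinite (μ.trim hm)]
    {w k : Ω → ℝ} (hw_meas : Measurable w) (hw_int : Integrable w μ) (hw_nn : 0 ≤ᵐ[μ] w)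
    (hk_meas : Measurable k) (hk_int : Integrable k μ) (hk_nn : 0 ≤ᵐ[μ] k) :
    ∫⁻ x, ENNReal.ofReal ((μ[w|m]) x * k x) ∂μ
      = ∫⁻ x, ENNReal.ofReal (w x * (μ[k|m]) x) ∂μ := by
  have hEw : Measurable[m] fun x => ENNReal.ofReal ((μ[w|m]) x) :=
    ENNReal.measurable_ofReal.comp stronglyMeasurable_condExp.measurable
  have hEk : Measurable[m] fun x => ENNReal.ofReal ((μ[k|m]) x) :=
    ENNReal.measurable_ofReal.comp stronglyMeasurable_condExp.measurable
  calc ∫⁻ x, ENNReal.ofReal ((μ[w|m]) x * k x) ∂μ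
      = ∫⁻ x, ENNReal.ofReal ((μ[w|m]) x) * ENNReal.ofReal (k x) ∂μ := by
        refine lintegral_congr_ae ((condExp_nonneg (m := m) hw_nn).mono fun x hx => ?_)
        simp only [Pi.zero_apply] at hx
        dsimp only
        rw [ENNReal.ofReal_mul hx]
    _ = ∫⁻ x, ENNReal.ofReal ((μ[w|m]) x) * ENNReal.ofReal ((μ[k|m]) x) ∂μ :=
        lintegral_mul_ofReal_condexp hm hk_meas hk_int hk_nn hEw
    _ = ∫⁻ x, ENNReal.ofReal ((μ[k|m]) x) * ENNReal.ofReal ((μ[w|m]) x) ∂μ :=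
        lintegral_congr fun x => mul_comm _ _
    _ = ∫⁻ x, ENNReal.ofReal ((μ[k|m]) x) * ENNReal.ofReal (w x) ∂μ :=
        (lintegral_mul_ofReal_condexp hm hw_meas hw_int hw_nn hEk).symm
    _ = ∫⁻ x, ENNReal.ofReal (w x * (μ[k|m]) x) ∂μ := by
        refine lintegral_congr_ae (hw_nn.mono fun x hx => ?_)
        simp only [Pi.zero_apply] at hx
        dsimp only
        rw [ENNReal.ofReal_mul hx, mul_comm]

end Aux

section WH
variable {Ω : Type*} {m0 : MeasurableSpace Ω}


lemma weak_holder {ν : Measure Ω} {T : Ω → ℝ≥0∞} (hT : Measurable T)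
    {q : ℝ} (hq : 1 < q) {W K : ℝ≥0∞} (hνW : ν Set.univ ≤ W) (hW : W ≠ ∞)
    (hwk : ∀ t : ℝ, 0 < t →
      ENNReal.ofReal t * (ν {x | ENNReal.ofReal t < T x}) ^ (1/q) ≤ K) :
    ∫⁻ x, T x ∂ν ≤ ENNReal.ofReal (q / (q-1)) * K * W ^ (1 - 1/q) := by
  have hq0 : 0 < q := lt_trans one_pos hq
  have hq1 : 0 < q - 1 := sub_pos.mpr hq
  by_cases hW0 : W = 0
  · have hν0 : ν = 0 := by
      refine Measure.measure_univ_eq_zero.mp (le_antisymm ?_ (zero_le))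
      exact hW0 ▸ hνW
    simp [hν0]
  by_cases hK0 : K = 0
  · have hnull : ∀ t : ℝ, 0 < t → ν {x | ENNReal.ofReal t < T x} = 0 := by
      intro t ht
      have h := hwk t ht
      rw [hK0, nonpos_iff_eq_zero, mul_eq_zero] at h
      rcases h with h | h
      · exact absurd h (by simp [ENNReal.ofReal_eq_zero, not_le, ht])
      · rw [ENNReal.rpow_eq_zero_iff] at h
        rcases h with ⟨h, _⟩ | ⟨_, h⟩
        · exact h
        · exfalso; have : (0:ℝ) < 1/q := by positivity
          linarith
    have hTz : ∀ᵐ x ∂ν, T x = 0 := by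
      rw [ae_iff]
      refine measure_mono_null (fun x hx => ?_)
        (measure_iUnion_null fun n : ℕ => hnull (1/(n+1)) (by positivity))
      simp only [mem_setOf_eq] at hx
      obtain ⟨n, hn⟩ := ENNReal.exists_inv_nat_lt hx
      refine Set.mem_iUnion.mpr ⟨n, ?_⟩
      have hle : ENNReal.ofReal (1/(n+1)) ≤ ((n:ℝ≥0∞))⁻¹ := by
        rcases Nat.eq_zero_or_pos n with h0 | hpos
        · simp [h0]
        · rw [one_div, ENNReal.ofReal_inv_of_pos (by positivity)]
          refine ENNReal.inv_le_inv' ?_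
          rw [← ENNReal.ofReal_natCast n]
          exact ENNReal.ofReal_le_ofReal (by push_cast; linarith)
      exact lt_of_le_of_lt hle hn
    rw [lintegral_congr_ae hTz, lintegral_const, zero_mul]
    exact zero_le
  by_cases hKtop : K = ⊤
  · refine le_trans le_top (le_of_eq ?_)
    rw [hKtop, ENNReal.mul_top (by simp [ENNReal.ofReal_eq_zero, not_le]; positivity),
      ENNReal.top_mul]
    simp only [ne_eq, ENNReal.rpow_eq_zero_iff, not_or, not_and]
    constructor
    · intro h; exact absurd h hW0
    · intro h; exact absurd h hW
  -- main case
  have hk : 0 < K.toReal := ENNReal.toReal_pos hK0 hKtop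
  have hw : 0 < W.toReal := ENNReal.toReal_pos hW0 hW
  set k : ℝ := K.toReal with hkdef
  set w : ℝ := W.toReal with hwdef
  set t₀ : ℝ := k * w ^ (-(1/q)) with ht₀def
  have ht₀ : 0 < t₀ := mul_pos hk (Real.rpow_pos_of_pos hw _)
  have hB : ∀ t : ℝ, 0 < t →
      ν {x | ENNReal.ofReal t < T x} ≤ K ^ q * (ENNReal.ofReal t) ^ (-q) := by
    intro t ht
    have ha0 : ENNReal.ofReal t ≠ 0 := by simp [ENNReal.ofReal_eq_zero, not_le]; positivity
    have hatop : ENNReal.ofReal t ≠ ⊤ := ENNReal.ofReal_ne_top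
    have h2 : (ν {x | ENNReal.ofReal t < T x}) ^ (1/q) ≤ K / ENNReal.ofReal t := by
      rw [ENNReal.le_div_iff_mul_le (Or.inl ha0) (Or.inl hatop), mul_comm]
      exact hwk t ht
    have h3 := ENNReal.rpow_le_rpow h2 hq0.le
    rw [← ENNReal.rpow_mul, one_div, inv_mul_cancel₀ hq0.ne', ENNReal.rpow_one] at h3
    calc ν {x | ENNReal.ofReal t < T x} ≤ (K / ENNReal.ofReal t) ^ q := h3
      _ = K ^ q * (ENNReal.ofReal t) ^ (-q) := by
        rw [ENNReal.div_rpow_of_nonneg _ _ hq0.le, ENNReal.rpow_neg, div_eq_mul_inv]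
  have hWK : W = ENNReal.ofReal w := (ENNReal.ofReal_toReal hW).symm
  have hKk : K = ENNReal.ofReal k := (ENNReal.ofReal_toReal hKtop).symm
  have hreal : w * t₀ + k ^ q * (t₀ ^ (1-q) / (q-1)) = q/(q-1) * k * w ^ (1-1/q) := by
    have e1 : w * w ^ (-(1/q)) = w ^ (1-1/q) := by
      rw [show (1:ℝ) - 1/q = 1 + -(1/q) by ring, Real.rpow_add hw, Real.rpow_one]
    have e2 : t₀ ^ ((1:ℝ)-q) = k ^ ((1:ℝ)-q) * w ^ (1-1/q) := by
      rw [ht₀def, Real.mul_rpow hk.le (Real.rpow_pos_of_pos hw _).le,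
        ← Real.rpow_mul hw.le]
      congr 1
      rw [show -(1/q) * (1-q) = 1 - 1/q by field_simp; ring]
    have e3 : k ^ q * k ^ ((1:ℝ)-q) = k := by
      rw [← Real.rpow_add hk]; norm_num
    calc w * t₀ + k ^ q * (t₀ ^ (1-q) / (q-1))
        = k * (w * w ^ (-(1/q))) + (k ^ q * k ^ ((1:ℝ)-q)) * w ^ (1-1/q) / (q-1) := by
          rw [e2, ht₀def]; ring
      _ = k * w ^ (1-1/q) + k * w ^ (1-1/q) / (q-1) := by rw [e1, e3]
      _ = q/(q-1) * k * w ^ (1-1/q) := by field_simp; ring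
  have main : ∀ M : ℕ, ∫⁻ x, min (T x) M ∂ν
      ≤ ENNReal.ofReal (q / (q-1)) * K * W ^ (1 - 1/q) := by
    intro M
    have hmin_ne_top : ∀ x, min (T x) (M:ℝ≥0∞) ≠ ∞ :=
      fun x => ((min_le_right _ _).trans_lt (ENNReal.natCast_lt_top M)).ne
    set TM : Ω → ℝ := fun x => (min (T x) M).toReal with hTMdef
    have hTM_meas : Measurable TM := (hT.min measurable_const).ennreal_toReal
    have h1 : ∫⁻ x, min (T x) M ∂ν = ∫⁻ x, ENNReal.ofReal (TM x) ∂ν :=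
      lintegral_congr fun x => (ENNReal.ofReal_toReal (hmin_ne_top x)).symm
    rw [h1, lintegral_eq_lintegral_meas_lt ν
      (Eventually.of_forall fun x => ENNReal.toReal_nonneg) hTM_meas.aemeasurable]
    have hsplit : Ioi (0:ℝ) = Ioc 0 t₀ ∪ Ioi t₀ := (Set.Ioc_union_Ioi_eq_Ioi ht₀.le).symm
    rw [hsplit, lintegral_union measurableSet_Ioi Set.Ioc_disjoint_Ioi_same]
    have p1 : ∫⁻ t in Ioc (0:ℝ) t₀, ν {x | t < TM x} ≤ W * ENNReal.ofReal t₀ := by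
      calc ∫⁻ t in Ioc (0:ℝ) t₀, ν {x | t < TM x}
          ≤ ∫⁻ _ in Ioc (0:ℝ) t₀, W :=
            setLIntegral_mono' measurableSet_Ioc fun t _ =>
              le_trans (measure_mono (subset_univ _)) hνW
        _ = W * volume (Ioc (0:ℝ) t₀) := setLIntegral_const _ _
        _ = W * ENNReal.ofReal t₀ := by rw [Real.volume_Ioc, sub_zero]
    have hsub2 : ∀ t : ℝ, 0 < t → {x | t < TM x} ⊆ {x | ENNReal.ofReal t < T x} := by
      intro t ht x hx
      have h := (ENNReal.ofReal_lt_iff_lt_toReal ht.le (hmin_ne_top x)).mpr hx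
      exact lt_of_lt_of_le h (min_le_left _ _)
    have hIoiInt : IntegrableOn (fun t : ℝ => t ^ (-q)) (Ioi t₀) :=
      integrableOn_Ioi_rpow_of_lt (by linarith) ht₀
    have p2 : ∫⁻ t in Ioi t₀, ν {x | t < TM x}
        ≤ K ^ q * ENNReal.ofReal (t₀ ^ (1-q) / (q-1)) := by
      calc ∫⁻ t in Ioi t₀, ν {x | t < TM x}
          ≤ ∫⁻ t in Ioi t₀, K ^ q * (ENNReal.ofReal t) ^ (-q) := by
            refine setLIntegral_mono' measurableSet_Ioi fun t ht => ?_
            have ht' : 0 < t := lt_trans ht₀ ht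
            exact le_trans (measure_mono (hsub2 t ht')) (hB t ht')
        _ = K ^ q * ∫⁻ t in Ioi t₀, (ENNReal.ofReal t) ^ (-q) :=
            lintegral_const_mul _ (ENNReal.measurable_ofReal.pow measurable_const)
        _ = K ^ q * ENNReal.ofReal (t₀ ^ (1-q) / (q-1)) := by
          congr 1
          have hcongr : ∫⁻ t in Ioi t₀, (ENNReal.ofReal t) ^ (-q)
              = ∫⁻ t in Ioi t₀, ENNReal.ofReal (t ^ (-q)) := by
            refine setLIntegral_congr_fun measurableSet_Ioi
              (fun t ht => ?_)
            exact ENNReal.ofReal_rpow_of_pos (lt_trans ht₀ ht)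
          rw [hcongr, ← ofReal_integral_eq_lintegral_ofReal hIoiInt ?_]
          · congr 1
            rw [integral_Ioi_rpow_of_lt (by linarith) ht₀]
            rw [show -q + 1 = 1 - q by ring,
              div_eq_div_iff (by linarith : (1:ℝ) - q ≠ 0) (by linarith : q - (1:ℝ) ≠ 0)]
            ring
          · filter_upwards [ae_restrict_mem measurableSet_Ioi] with t ht
            exact Real.rpow_nonneg (lt_trans ht₀ ht).le _
    calc (∫⁻ t in Ioc (0:ℝ) t₀, ν {x | t < TM x})
          + ∫⁻ t in Ioi t₀, ν {x | t < TM x}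
        ≤ W * ENNReal.ofReal t₀ + K ^ q * ENNReal.ofReal (t₀ ^ (1-q) / (q-1)) :=
          add_le_add p1 p2
      _ = ENNReal.ofReal (w * t₀ + k ^ q * (t₀ ^ (1-q) / (q-1))) := by
          rw [ENNReal.ofReal_add (by positivity) (by positivity), hWK, hKk,
            ← ENNReal.ofReal_mul hw.le, ENNReal.ofReal_rpow_of_pos hk,
            ← ENNReal.ofReal_mul (by positivity)]
      _ = ENNReal.ofReal (q/(q-1) * k * w ^ (1-1/q)) := by rw [hreal]
      _ = ENNReal.ofReal (q / (q-1)) * K * W ^ (1 - 1/q) := by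
          rw [ENNReal.ofReal_mul (by positivity), ENNReal.ofReal_mul (by positivity),
            hWK, hKk, ENNReal.ofReal_rpow_of_pos hw]
  have hsupmin : ∀ a : ℝ≥0∞, ⨆ M : ℕ, min a (M:ℝ≥0∞) = a := by
    intro a
    refine le_antisymm (iSup_le fun M => min_le_left _ _) ?_
    rcases eq_or_ne a ⊤ with rfl | ha
    · calc (⊤:ℝ≥0∞) = ⨆ M : ℕ, (M:ℝ≥0∞) := ENNReal.iSup_natCast.symm
        _ ≤ ⨆ M : ℕ, min ⊤ (M:ℝ≥0∞) := by simp
    · obtain ⟨M, hM⟩ := ENNReal.exists_nat_gt ha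
      exact le_iSup_of_le M (le_of_eq (min_eq_left hM.le).symm)
  calc ∫⁻ x, T x ∂ν = ∫⁻ x, ⨆ M : ℕ, min (T x) M ∂ν :=
        lintegral_congr fun x => (hsupmin (T x)).symm
    _ = ⨆ M : ℕ, ∫⁻ x, min (T x) M ∂ν :=
        lintegral_iSup (fun M => hT.min measurable_const)
          (fun M N hMN x => min_le_min le_rfl (Nat.cast_le.mpr hMN))
    _ ≤ ENNReal.ofReal (q / (q-1)) * K * W ^ (1 - 1/q) := iSup_le main

end WH

/-- **Necessity of the testing condition for the weak type estimate** (Theorem 1.5,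
easy direction).  If `‖T_α(fσ)‖_{L^{q,∞}(ω)} ≤ C ‖f‖_{L^p(σ)}` for all nonnegative
`f ∈ L^p(σ)`, then the testing condition holds with constant `C' · C`, where `C'`
depends only on `p` and `q`. -/
theorem weak_type_implies_testing
    {Ω : Type*} {m : MeasurableSpace Ω} {μ : Measure Ω} [SigmaFinite μ]
    (ℱ : Filtration ℤ m) [SigmaFiniteFiltration μ ℱ]
    (p q : ℝ) (hp : 1 < p) (hpq : p ≤ q)
    (α : ℤ → Ω → ℝ) (hα_nonneg : ∀ i, 0 ≤ α i)
    (hα_meas : ∀ i, StronglyMeasurable[ℱ i] (α i))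
    (hα_bdd : ∀ i, ∃ B : ℝ, ∀ x, α i x ≤ B)
    (ω σ : Ω → ℝ) (hω_nonneg : 0 ≤ ω) (hσ_nonneg : 0 ≤ σ)
    (hω_meas : Measurable ω) (hσ_meas : Measurable σ)
    (hω_int : Integrable ω μ) (hσ_int : Integrable σ μ)
    (C : ℝ) (hC : 0 ≤ C)
    (hweak : ∀ f : Ω → ℝ, Measurable f → 0 ≤ f →
      Integrable (fun x => f x * σ x) μ → Integrable (fun x => f x ^ p * σ x) μ →
      ∀ lam : ℝ, 0 < lam →
        ENNReal.ofReal lam *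
          (∫⁻ x in {x | ENNReal.ofReal lam <
              ∑' i : ℤ, ENNReal.ofReal (α i x * (μ[fun y => f y * σ y|ℱ i]) x)},
            ENNReal.ofReal (ω x) ∂μ) ^ (1 / q)
        ≤ ENNReal.ofReal (C * (∫ x, f x ^ p * σ x ∂μ) ^ (1 / p))) :
    ∃ C' : ℝ, 0 < C' ∧
      ∀ i : ℤ, ∀ E : Set Ω, MeasurableSet[ℱ i] E → μ E < ∞ →
        (∫⁻ x in E, (∑' j : {j : ℤ // i ≤ j},
              ENNReal.ofReal ((μ[ω|ℱ j.1]) x * α j.1 x)) ^ (p / (p - 1))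
            * ENNReal.ofReal (σ x) ∂μ) ^ (1 - 1 / p)
          ≤ ENNReal.ofReal (C' * C) * (∫⁻ x in E, ENNReal.ofReal (ω x) ∂μ) ^ (1 - 1 / q) := by
  have hq1 : 1 < q := lt_of_lt_of_le hp hpq
  have hp0 : 0 < p := one_pos.trans hp
  have hq0 : 0 < q := one_pos.trans hq1
  have hpm1 : 0 < p - 1 := sub_pos.mpr hp
  set p' : ℝ := p / (p - 1) with hp'def
  have hp'_pos : 0 < p' := div_pos hp0 hpm1
  have hp'1 : 1 < p' := (one_lt_div hpm1).mpr (by linarith)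
  have hexp : 1 - 1 / p = 1 / p' := by rw [hp'def]; field_simp
  have hexp_pos : 0 < 1 - 1 / p := by rw [hexp]; positivity
  refine ⟨q / (q - 1), div_pos hq0 (by linarith), ?_⟩
  intro i E hE hμE
  have hEm : MeasurableSet E := ℱ.le i E hE
  set W : ℝ≥0∞ := ∫⁻ x in E, ENNReal.ofReal (ω x) ∂μ with hWdef
  have hWtop : W ≠ ∞ := by
    refine ne_of_lt (lt_of_le_of_lt ?_ hω_int.lintegral_lt_top)
    exact lintegral_mono' Measure.restrict_le_self le_rfl
  have hωn : 0 ≤ᵐ[μ] ω := Eventually.of_forall hω_nonneg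
  set Φ : Ω → ℝ≥0∞ := fun x => ∑' j : {j : ℤ // i ≤ j},
    ENNReal.ofReal ((μ[ω|ℱ j.1]) x * α j.1 x) with hΦdef
  have hcesm : ∀ j : ℤ, StronglyMeasurable[ℱ j] (μ[ω|ℱ j]) :=
    fun j => stronglyMeasurable_condExp
  have hcem : ∀ j : ℤ, Measurable (μ[ω|ℱ j]) :=
    fun j => ((hcesm j).mono (ℱ.le j)).measurable
  have hαm : ∀ j : ℤ, Measurable (α j) := fun j => ((hα_meas j).mono (ℱ.le j)).measurable
  have hΦmeas : Measurable Φ := Measurable.ennreal_tsum fun j =>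
    ENNReal.measurable_ofReal.comp ((hcem j.1).mul (hαm j.1))
  set R : ℝ≥0∞ := ENNReal.ofReal (q / (q - 1) * C) * W ^ (1 - 1 / q) with hRdef
  -- the key estimate for truncations
  have key : ∀ n : ℕ,
      (∫⁻ x in E, (min (Φ x) n) ^ p' * ENNReal.ofReal (σ x) ∂μ) ^ (1 - 1 / p) ≤ R := by
    intro n
    set Ψ : Ω → ℝ≥0∞ := fun x => min (Φ x) n with hΨdef
    have hΨmeas : Measurable Ψ := hΦmeas.min measurable_const
    have hΨtop : ∀ x, Ψ x ≠ ∞ :=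
      fun x => ((min_le_right _ _).trans_lt (ENNReal.natCast_lt_top n)).ne
    set A : ℝ≥0∞ := ∫⁻ x in E, Ψ x ^ p' * ENNReal.ofReal (σ x) ∂μ with hAdef
    set f : Ω → ℝ := fun x => (Ψ x ^ (p' - 1)).toReal with hfdef
    have hf_nonneg : ∀ x, 0 ≤ f x := fun x => ENNReal.toReal_nonneg
    have hf_meas : Measurable f := (hΨmeas.pow measurable_const).ennreal_toReal
    have hf_bdd : ∀ x, f x ≤ (n : ℝ) ^ (p' - 1) := by
      intro x
      have h1 : Ψ x ^ (p' - 1) ≤ (n : ℝ≥0∞) ^ (p' - 1) :=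
        ENNReal.rpow_le_rpow (min_le_right _ _) (by linarith)
      calc f x ≤ ((n : ℝ≥0∞) ^ (p' - 1)).toReal :=
            ENNReal.toReal_mono
              (ENNReal.rpow_ne_top_of_nonneg (by linarith) (ENNReal.natCast_ne_top n)) h1
        _ = (n : ℝ) ^ (p' - 1) := by rw [← ENNReal.toReal_rpow, ENNReal.toReal_natCast]
    set F : Ω → ℝ := E.indicator f with hFdef
    have hF_meas : Measurable F := hf_meas.indicator hEm
    have hF_nonneg : 0 ≤ F := fun x => Set.indicator_nonneg (fun y _ => hf_nonneg y) x
    have hF_bdd : ∀ x, F x ≤ (n : ℝ) ^ (p' - 1) := by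
      intro x
      by_cases hx : x ∈ E
      · rw [hFdef, Set.indicator_of_mem hx]; exact hf_bdd x
      · rw [hFdef, Set.indicator_of_notMem hx]; positivity
    have hFσ_int : Integrable (fun x => F x * σ x) μ :=
      hσ_int.bdd_mul hF_meas.aestronglyMeasurable
        (c := (n : ℝ) ^ (p' - 1)) (Eventually.of_forall fun x => by
          rw [Real.norm_eq_abs, abs_of_nonneg (hF_nonneg x)]; exact hF_bdd x)
    have hFp_meas : Measurable fun x => F x ^ p := hF_meas.pow measurable_const
    have hFp_int : Integrable (fun x => F x ^ p * σ x) μ :=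
      hσ_int.bdd_mul hFp_meas.aestronglyMeasurable
        (c := ((n : ℝ) ^ (p' - 1)) ^ p) (Eventually.of_forall fun x => by
          rw [Real.norm_eq_abs, abs_of_nonneg (Real.rpow_nonneg (hF_nonneg x) p)]
          exact Real.rpow_le_rpow (hF_nonneg x) (hF_bdd x) hp0.le)
    have hFσ_nn : 0 ≤ᵐ[μ] fun x => F x * σ x :=
      Eventually.of_forall fun x => mul_nonneg (hF_nonneg x) (hσ_nonneg x)
    set T : Ω → ℝ≥0∞ := fun x =>
      ∑' i' : ℤ, ENNReal.ofReal (α i' x * (μ[fun y => F y * σ y|ℱ i']) x) with hTdef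
    have hGsm : ∀ j : ℤ, StronglyMeasurable[ℱ j] (μ[fun y => F y * σ y|ℱ j]) :=
      fun j => stronglyMeasurable_condExp
    have hGm : ∀ j : ℤ, Measurable (μ[fun y => F y * σ y|ℱ j]) :=
      fun j => ((hGsm j).mono (ℱ.le j)).measurable
    have hTmeas : Measurable T := Measurable.ennreal_tsum fun j =>
      ENNReal.measurable_ofReal.comp ((hαm j).mul (hGm j))
    -- Step 1: A ≤ ∫⁻_E ofReal f * Φ * ofReal σ
    have step1 : A ≤ ∫⁻ x in E,
        ENNReal.ofReal (f x) * Φ x * ENNReal.ofReal (σ x) ∂μ := by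
      refine setLIntegral_mono' hEm fun x _ => ?_
      rcases eq_or_ne (Ψ x) 0 with h0 | h0
      · rw [h0, ENNReal.zero_rpow_of_pos hp'_pos, zero_mul]
        exact zero_le
      · have he : Ψ x ^ ((p' - 1) + 1) = Ψ x ^ (p' - 1) * Ψ x := by
          rw [ENNReal.rpow_add _ _ h0 (hΨtop x), ENNReal.rpow_one]
        have hψ : Ψ x ^ p' = ENNReal.ofReal (f x) * Ψ x := by
          rw [hfdef]
          rw [ENNReal.ofReal_toReal
            (ENNReal.rpow_ne_top_of_nonneg (by linarith) (hΨtop x))]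
          rw [← he]
          congr 1
          ring
        rw [hψ]
        exact mul_le_mul_left (mul_le_mul_right (min_le_left _ _) _) _
    -- Step 2: expand Φ as tsum
    have step2 : ∫⁻ x in E, ENNReal.ofReal (f x) * Φ x * ENNReal.ofReal (σ x) ∂μ
        = ∑' j : {j : ℤ // i ≤ j}, ∫⁻ x in E,
            ENNReal.ofReal (f x) * ENNReal.ofReal ((μ[ω|ℱ j.1]) x * α j.1 x)
              * ENNReal.ofReal (σ x) ∂μ := by
      rw [← lintegral_tsum fun j => (Measurable.aemeasurable (by
        exact ((ENNReal.measurable_ofReal.comp hf_meas).mul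
          (ENNReal.measurable_ofReal.comp ((hcem j.1).mul (hαm j.1)))).mul
          (ENNReal.measurable_ofReal.comp hσ_meas)))]
      refine lintegral_congr fun x => ?_
      rw [hΦdef]
      rw [← ENNReal.tsum_mul_left, ← ENNReal.tsum_mul_right]
    -- Step 3: per-term duality
    have step3 : ∀ j : {j : ℤ // i ≤ j},
        ∫⁻ x in E, ENNReal.ofReal (f x) * ENNReal.ofReal ((μ[ω|ℱ j.1]) x * α j.1 x)
            * ENNReal.ofReal (σ x) ∂μ
        = ∫⁻ x in E, ENNReal.ofReal (ω x)
            * ENNReal.ofReal (α j.1 x * (μ[fun y => F y * σ y|ℱ j.1]) x) ∂μ := by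
      intro j
      set k : Ω → ℝ := α j.1 * fun y => F y * σ y with hkdef
      have hk_meas : Measurable k := (hαm j.1).mul (hF_meas.mul hσ_meas)
      obtain ⟨B, hB⟩ := hα_bdd j.1
      have hk_int : Integrable k μ :=
        hFσ_int.bdd_mul (hαm j.1).aestronglyMeasurable
          (c := max B 0) (Eventually.of_forall fun x => by
            rw [Real.norm_eq_abs, abs_of_nonneg (hα_nonneg j.1 x)]
            exact le_max_of_le_left (hB x))
      have hk_nn : 0 ≤ᵐ[μ] k := Eventually.of_forall fun x =>
        mul_nonneg (hα_nonneg j.1 x) (mul_nonneg (hF_nonneg x) (hσ_nonneg x))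
      -- LHS = ∫⁻ ofReal (𝔼ω * k)
      have ha : ∫⁻ x in E, ENNReal.ofReal (f x)
            * ENNReal.ofReal ((μ[ω|ℱ j.1]) x * α j.1 x) * ENNReal.ofReal (σ x) ∂μ
          = ∫⁻ x, ENNReal.ofReal ((μ[ω|ℱ j.1]) x * k x) ∂μ := by
        rw [← lintegral_indicator hEm]
        refine lintegral_congr_ae ((condExp_nonneg (m := ℱ j.1) hωn).mono fun x hx => ?_)
        simp only [Pi.zero_apply] at hx
        by_cases hxE : x ∈ E
        · rw [Set.indicator_of_mem hxE]
          have hFx : F x = f x := Set.indicator_of_mem hxE f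
          rw [hkdef]
          simp only [Pi.mul_apply]
          rw [hFx, ENNReal.ofReal_mul hx,
            ENNReal.ofReal_mul hx,
            ENNReal.ofReal_mul (hα_nonneg j.1 x),
            ENNReal.ofReal_mul (hf_nonneg x)]
          ring
        · rw [Set.indicator_of_notMem hxE]
          have hFx : F x = 0 := Set.indicator_of_notMem hxE f
          rw [hkdef]
          simp only [Pi.mul_apply]
          rw [hFx, zero_mul, mul_zero, mul_zero, ENNReal.ofReal_zero]
      -- self-adjointness
      have hb : ∫⁻ x, ENNReal.ofReal ((μ[ω|ℱ j.1]) x * k x) ∂μ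
          = ∫⁻ x, ENNReal.ofReal (ω x * (μ[k|ℱ j.1]) x) ∂μ :=
        lintegral_ofReal_condexp_mul (ℱ.le j.1) hω_meas hω_int hωn hk_meas hk_int hk_nn
      -- pull-out
      have hpull : μ[k|ℱ j.1] =ᵐ[μ] α j.1 * μ[fun y => F y * σ y|ℱ j.1] := by
        rw [hkdef]
        exact condExp_mul_of_stronglyMeasurable_left (hα_meas j.1) (hkdef ▸ hk_int) hFσ_int
      -- localization to E
      have hEj : MeasurableSet[ℱ j.1] E := ℱ.mono j.2 _ hE
      have hloc : μ[fun y => F y * σ y|ℱ j.1]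
          =ᵐ[μ] E.indicator (1 : Ω → ℝ) * μ[fun y => F y * σ y|ℱ j.1] := by
        have hprod : (fun y => F y * σ y)
            = E.indicator (1 : Ω → ℝ) * fun y => F y * σ y := by
          funext y
          by_cases hy : y ∈ E
          · simp [Set.indicator_of_mem hy]
          · have : F y = 0 := Set.indicator_of_notMem hy f
            simp [Set.indicator_of_notMem hy, this]
        nth_rewrite 1 [hprod]
        exact condExp_mul_of_stronglyMeasurable_left
          (stronglyMeasurable_const.indicator hEj) (hprod ▸ hFσ_int) hFσ_int
      rw [ha, hb, ← lintegral_indicator hEm]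
      refine lintegral_congr_ae ?_
      filter_upwards [hpull, hloc] with x h1 h2
      rw [h1]
      simp only [Pi.mul_apply]
      by_cases hxE : x ∈ E
      · rw [Set.indicator_of_mem hxE, ENNReal.ofReal_mul (hω_nonneg x)]
      · rw [Set.indicator_of_notMem hxE]
        have : (μ[fun y => F y * σ y|ℱ j.1]) x = 0 := by
          rw [h2]; simp [Set.indicator_of_notMem hxE]
        rw [this, mul_zero, mul_zero, ENNReal.ofReal_zero]
    -- Step 4: sum the terms and compare with T
    have step4 : ∑' j : {j : ℤ // i ≤ j}, ∫⁻ x in E, ENNReal.ofReal (ω x)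
          * ENNReal.ofReal (α j.1 x * (μ[fun y => F y * σ y|ℱ j.1]) x) ∂μ
        ≤ ∫⁻ x in E, ENNReal.ofReal (ω x) * T x ∂μ := by
      rw [← lintegral_tsum fun j => (Measurable.aemeasurable (by
        exact (ENNReal.measurable_ofReal.comp hω_meas).mul
          (ENNReal.measurable_ofReal.comp ((hαm j.1).mul (hGm j.1)))))]
      refine lintegral_mono fun x => ?_
      rw [ENNReal.tsum_mul_left]
      refine mul_le_mul_right ?_ _
      exact ENNReal.tsum_comp_le_tsum_of_injective Subtype.val_injective
        fun i' => ENNReal.ofReal (α i' x * (μ[fun y => F y * σ y|ℱ i']) x)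
    -- Step 5: weighted measure and weak-type bound
    set ν : Measure Ω := (μ.restrict E).withDensity fun x => ENNReal.ofReal (ω x) with hνdef
    have hν_lint : ∫⁻ x, T x ∂ν = ∫⁻ x in E, ENNReal.ofReal (ω x) * T x ∂μ := by
      rw [hνdef, lintegral_withDensity_eq_lintegral_mul _
        (show Measurable fun x => ENNReal.ofReal (ω x) from
          ENNReal.measurable_ofReal.comp hω_meas) hTmeas]
      exact lintegral_congr fun x => rfl
    have hν_univ : ν Set.univ ≤ W := by
      rw [hνdef, withDensity_apply _ MeasurableSet.univ, Measure.restrict_univ]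
    set K : ℝ≥0∞ := ENNReal.ofReal (C * (∫ x, F x ^ p * σ x ∂μ) ^ (1 / p)) with hKdef
    have hwk : ∀ t : ℝ, 0 < t →
        ENNReal.ofReal t * (ν {x | ENNReal.ofReal t < T x}) ^ (1 / q) ≤ K := by
      intro t ht
      have hset : MeasurableSet {x | ENNReal.ofReal t < T x} :=
        measurableSet_lt measurable_const hTmeas
      have hν_le : ν {x | ENNReal.ofReal t < T x}
          ≤ ∫⁻ x in {x | ENNReal.ofReal t < T x}, ENNReal.ofReal (ω x) ∂μ := by
        rw [hνdef, withDensity_apply _ hset]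
        exact lintegral_mono' (Measure.restrict_mono (le_refl _) Measure.restrict_le_self) le_rfl
      calc ENNReal.ofReal t * (ν {x | ENNReal.ofReal t < T x}) ^ (1 / q)
          ≤ ENNReal.ofReal t * (∫⁻ x in {x | ENNReal.ofReal t < T x},
              ENNReal.ofReal (ω x) ∂μ) ^ (1 / q) :=
            mul_le_mul_right (ENNReal.rpow_le_rpow hν_le (by positivity)) _
        _ ≤ K := hweak F hF_meas hF_nonneg hFσ_int hFp_int t ht
    have hweakH : ∫⁻ x, T x ∂ν ≤ ENNReal.ofReal (q / (q - 1)) * K * W ^ (1 - 1 / q) :=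
      weak_holder hTmeas hq1 hν_univ hWtop hwk
    -- Step 6: identify K with A
    have hA_eq : ∫⁻ x, ENNReal.ofReal (F x ^ p * σ x) ∂μ = A := by
      rw [hAdef, ← lintegral_indicator hEm]
      refine lintegral_congr fun x => ?_
      by_cases hx : x ∈ E
      · rw [Set.indicator_of_mem hx]
        have hFx : F x = f x := Set.indicator_of_mem hx f
        have hfp : f x ^ p = (Ψ x ^ p').toReal := by
          rw [hfdef, ENNReal.toReal_rpow, ← ENNReal.rpow_mul,
            show (p' - 1) * p = p' by rw [hp'def]; field_simp; ring]
        rw [hFx, hfp, ENNReal.ofReal_mul ENNReal.toReal_nonneg,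
          ENNReal.ofReal_toReal
            (ENNReal.rpow_ne_top_of_nonneg hp'_pos.le (hΨtop x))]
      · rw [Set.indicator_of_notMem hx]
        have hFx : F x = 0 := Set.indicator_of_notMem hx f
        rw [hFx, Real.zero_rpow hp0.ne', zero_mul, ENNReal.ofReal_zero]
    have hAtop : A ≠ ∞ := by
      have h1 : A ≤ (n : ℝ≥0∞) ^ p' * ∫⁻ x in E, ENNReal.ofReal (σ x) ∂μ := by
        rw [hAdef, ← lintegral_const_mul _ (show Measurable fun x => ENNReal.ofReal (σ x) from
          ENNReal.measurable_ofReal.comp hσ_meas)]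
        refine setLIntegral_mono' hEm fun x _ => ?_
        exact mul_le_mul_left (ENNReal.rpow_le_rpow (min_le_right _ _) hp'_pos.le) _
      refine ne_of_lt (lt_of_le_of_lt h1 (ENNReal.mul_lt_top ?_ ?_))
      · exact (ENNReal.rpow_ne_top_of_nonneg hp'_pos.le (ENNReal.natCast_ne_top n)).lt_top
      · exact lt_of_le_of_lt (lintegral_mono' Measure.restrict_le_self le_rfl)
          hσ_int.lintegral_lt_top
    have hint_eq : ∫ x, F x ^ p * σ x ∂μ = A.toReal := by
      rw [integral_eq_lintegral_of_nonneg_ae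
        (Eventually.of_forall fun x =>
          mul_nonneg (Real.rpow_nonneg (hF_nonneg x) p) (hσ_nonneg x))
        (hFp_meas.mul hσ_meas).aestronglyMeasurable, hA_eq]
    have hK_eq : K = ENNReal.ofReal C * A ^ (1 / p) := by
      rw [hKdef, hint_eq, ENNReal.ofReal_mul hC,
        ← ENNReal.ofReal_rpow_of_nonneg ENNReal.toReal_nonneg (by positivity),
        ENNReal.ofReal_toReal hAtop]
    -- Step 7: combine everything
    have hmain : A ≤ (ENNReal.ofReal (q / (q - 1)) * ENNReal.ofReal C * W ^ (1 - 1 / q))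
        * A ^ (1 / p) := by
      calc A ≤ ∫⁻ x in E, ENNReal.ofReal (f x) * Φ x * ENNReal.ofReal (σ x) ∂μ := step1
        _ = ∑' j : {j : ℤ // i ≤ j}, ∫⁻ x in E,
              ENNReal.ofReal (f x) * ENNReal.ofReal ((μ[ω|ℱ j.1]) x * α j.1 x)
                * ENNReal.ofReal (σ x) ∂μ := step2
        _ = ∑' j : {j : ℤ // i ≤ j}, ∫⁻ x in E, ENNReal.ofReal (ω x)
              * ENNReal.ofReal (α j.1 x * (μ[fun y => F y * σ y|ℱ j.1]) x) ∂μ :=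
            tsum_congr step3
        _ ≤ ∫⁻ x in E, ENNReal.ofReal (ω x) * T x ∂μ := step4
        _ = ∫⁻ x, T x ∂ν := hν_lint.symm
        _ ≤ ENNReal.ofReal (q / (q - 1)) * K * W ^ (1 - 1 / q) := hweakH
        _ = (ENNReal.ofReal (q / (q - 1)) * ENNReal.ofReal C * W ^ (1 - 1 / q))
            * A ^ (1 / p) := by rw [hK_eq]; ring
    rcases eq_or_ne A 0 with hA0 | hA0
    · rw [hA0, ENNReal.zero_rpow_of_pos hexp_pos]
      exact zero_le
    · have h2 := mul_le_mul_left hmain (A ^ (-(1 / p)))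
      have hl : A * A ^ (-(1 / p)) = A ^ (1 - 1 / p) := by
        nth_rewrite 1 [← ENNReal.rpow_one A]
        rw [← ENNReal.rpow_add _ _ hA0 hAtop]
        congr 1
      have hr : (ENNReal.ofReal (q / (q - 1)) * ENNReal.ofReal C * W ^ (1 - 1 / q))
            * A ^ (1 / p) * A ^ (-(1 / p))
          = ENNReal.ofReal (q / (q - 1)) * ENNReal.ofReal C * W ^ (1 - 1 / q) := by
        rw [mul_assoc, ← ENNReal.rpow_add _ _ hA0 hAtop,
          show 1 / p + -(1 / p) = (0:ℝ) by ring, ENNReal.rpow_zero, mul_one]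
      rw [hl, hr] at h2
      rw [hRdef, ENNReal.ofReal_mul (le_of_lt (div_pos hq0 (by linarith)))]
      exact h2
  -- Final assembly via monotone convergence
  have hLsup : ∫⁻ x in E, Φ x ^ p' * ENNReal.ofReal (σ x) ∂μ
      = ⨆ n : ℕ, ∫⁻ x in E, (min (Φ x) n) ^ p' * ENNReal.ofReal (σ x) ∂μ := by
    rw [← lintegral_iSup (f := fun (n : ℕ) x => (min (Φ x) n) ^ p' * ENNReal.ofReal (σ x))
      (fun n => ((hΦmeas.min measurable_const).pow measurable_const).mul
        (show Measurable fun x => ENNReal.ofReal (σ x) from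
          ENNReal.measurable_ofReal.comp hσ_meas))
      (fun M N hMN x => mul_le_mul_left
        (ENNReal.rpow_le_rpow (min_le_min le_rfl (Nat.cast_le.mpr hMN)) hp'_pos.le) _)]
    refine lintegral_congr fun x => ?_
    rw [← ENNReal.iSup_mul]
    congr 1
    refine le_antisymm ?_ (iSup_le fun M => ENNReal.rpow_le_rpow (min_le_left _ _) hp'_pos.le)
    rcases eq_or_ne (Φ x) ∞ with htop | htop
    · rw [htop, ENNReal.top_rpow_of_pos hp'_pos]
      have h1 : ∀ M : ℕ, (M : ℝ≥0∞) ≤ ⨆ m : ℕ, min (⊤ : ℝ≥0∞) m ^ p' := by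
        intro M
        refine le_iSup_of_le M ?_
        rw [min_eq_right le_top]
        rcases Nat.eq_zero_or_pos M with h0 | hpos
        · simp [h0]
        · calc (M : ℝ≥0∞) = (M : ℝ≥0∞) ^ (1 : ℝ) := (ENNReal.rpow_one _).symm
            _ ≤ (M : ℝ≥0∞) ^ p' := ENNReal.rpow_le_rpow_of_exponent_le
              (by exact_mod_cast Nat.one_le_iff_ne_zero.mpr hpos.ne') hp'1.le
      calc (⊤ : ℝ≥0∞) = ⨆ M : ℕ, (M : ℝ≥0∞) := ENNReal.iSup_natCast.symm
        _ ≤ ⨆ M : ℕ, min (⊤ : ℝ≥0∞) M ^ p' := iSup_le fun M => h1 M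
    · obtain ⟨M, hM⟩ := ENNReal.exists_nat_gt htop
      exact le_iSup_of_le M (by rw [min_eq_left hM.le])
  rw [hLsup]
  have hfinal : (⨆ n : ℕ, ∫⁻ x in E, (min (Φ x) n) ^ p' * ENNReal.ofReal (σ x) ∂μ) ≤ R ^ p' := by
    refine iSup_le fun n => ?_
    have h1 := ENNReal.rpow_le_rpow (key n) hp'_pos.le
    rwa [← ENNReal.rpow_mul, hexp, one_div_mul_cancel hp'_pos.ne', ENNReal.rpow_one] at h1
  have h2 := ENNReal.rpow_le_rpow hfinal hexp_pos.le
  rw [← ENNReal.rpow_mul] at h2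
  have h3 : p' * (1 - 1 / p) = 1 := by rw [hexp]; field_simp
  rwa [h3, ENNReal.rpow_one] at h2
end

section
/- Let i∈ℤ, h ∈ 𝓛⁺, k∈ℤ and Ω₀ ∈ 𝓕_i⁰, and set P₀ = {2^{k-1} < 𝔼_i(h) ≤ 2^k} ∩ Ω₀. Define the 'stopped' set E(P₀) = P₀ ∩ ⋂_{j≥i} {𝔼_j(h) ≤ 2^{k+1}} (i.e. P₀ ∩ {τ = ∞} where τ = inf{j ≥ i : 𝔼_j(h) > 2^{k+1}}). Then μ(P₀) ≤ 2 μ(E(P₀)). -/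
open MeasureTheory
open scoped ENNReal

/-- **Measure estimate for principal sets.**  For
`P₀ = {2^{k-1} < 𝔼ᵢ(h) ≤ 2^k} ∩ Ω₀` and the stopped set
`E(P₀) = P₀ ∩ ⋂_{j ≥ i} {𝔼_j(h) ≤ 2^{k+1}}`, one has `μ(P₀) ≤ 2 μ(E(P₀))`. -/
theorem principal_set_measure_estimate
    {Ω : Type*} {m : MeasurableSpace Ω} {μ : Measure Ω} [SigmaFinite μ]
    (ℱ : Filtration ℤ m) [SigmaFiniteFiltration μ ℱ]
    (i : ℤ) (h : Ω → ℝ) (hh_nonneg : 0 ≤ h) (hh_meas : Measurable h)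
    (hh_int : Integrable h μ)
    (k : ℤ) (Ω₀ : Set Ω) (hΩ₀_meas : MeasurableSet[ℱ i] Ω₀) (hΩ₀_fin : μ Ω₀ < ∞) :
    μ ({x | (2 : ℝ) ^ (k - 1) < (μ[h|ℱ i]) x ∧ (μ[h|ℱ i]) x ≤ (2 : ℝ) ^ k} ∩ Ω₀)
      ≤ 2 * μ (({x | (2 : ℝ) ^ (k - 1) < (μ[h|ℱ i]) x ∧ (μ[h|ℱ i]) x ≤ (2 : ℝ) ^ k} ∩ Ω₀)
          ∩ ⋂ j ∈ {j : ℤ | i ≤ j}, {x | (μ[h|ℱ j]) x ≤ (2 : ℝ) ^ (k + 1)}) := by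
  classical
  set g : ℤ → Ω → ℝ := fun j => μ[h|ℱ j] with hg
  set P₀ : Set Ω :=
    {x | (2 : ℝ) ^ (k - 1) < g i x ∧ g i x ≤ (2 : ℝ) ^ k} ∩ Ω₀ with hP₀def
  set E : Set Ω := P₀ ∩ ⋂ j ∈ {j : ℤ | i ≤ j}, {x | g j x ≤ (2 : ℝ) ^ (k + 1)} with hEdef
  -- measurability of g j level sets w.r.t. ℱ j
  have hg_meas : ∀ j : ℤ, Measurable[ℱ j] (g j) := fun j =>
    (stronglyMeasurable_condExp (m := ℱ j)).measurable
  have hle : ∀ (j : ℤ) (c : ℝ), MeasurableSet[ℱ j] {x | g j x ≤ c} := fun j c =>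
    measurableSet_le (hg_meas j) measurable_const
  have hlt : ∀ (j : ℤ) (c : ℝ), MeasurableSet[ℱ j] {x | c < g j x} := fun j c =>
    measurableSet_lt measurable_const (hg_meas j)
  have hP₀F : MeasurableSet[ℱ i] P₀ := by
    refine MeasurableSet.inter ?_ hΩ₀_meas
    have : {x | (2 : ℝ) ^ (k - 1) < g i x ∧ g i x ≤ (2 : ℝ) ^ k}
        = {x | (2 : ℝ) ^ (k - 1) < g i x} ∩ {x | g i x ≤ (2 : ℝ) ^ k} := rfl
    rw [this]
    exact (hlt i _).inter (hle i _)
  have hP₀_meas : MeasurableSet P₀ := ℱ.le i _ hP₀F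
  have hE_meas : MeasurableSet E := by
    refine hP₀_meas.inter (MeasurableSet.biInter (Set.to_countable _) fun j _ => ?_)
    exact ℱ.le j _ (hle j _)
  have hP₀_fin : μ P₀ < ∞ := lt_of_le_of_lt (measure_mono Set.inter_subset_right) hΩ₀_fin
  -- first exceedance sets
  set B : ℕ → Set Ω := fun n =>
    (P₀ ∩ {x | (2 : ℝ) ^ (k + 1) < g (i + n) x}) ∩
      ⋂ (s : ℕ) (_ : s < n), {x | g (i + s) x ≤ (2 : ℝ) ^ (k + 1)} with hBdef
  have hBF : ∀ n : ℕ, MeasurableSet[ℱ (i + n)] (B n) := by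
    intro n
    refine MeasurableSet.inter (MeasurableSet.inter ?_ ?_) ?_
    · exact ℱ.mono (by linarith [Int.ofNat_nonneg n]) _ hP₀F
    · exact hlt (i + n) _
    · refine MeasurableSet.iInter fun s => MeasurableSet.iInter fun hs => ?_
      have hsn : (s : ℤ) ≤ (n : ℤ) := by exact_mod_cast hs.le
      exact ℱ.mono (by linarith) _ (hle (i + s) _)
  have hB_meas : ∀ n : ℕ, MeasurableSet (B n) := fun n => ℱ.le _ _ (hBF n)
  have hB_sub : ∀ n : ℕ, B n ⊆ P₀ := fun n =>
    (Set.inter_subset_left.trans Set.inter_subset_left)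
  have hB_disj' : ∀ a b : ℕ, a < b → Disjoint (B a) (B b) := by
    intro a b hab'
    refine Set.disjoint_left.mpr fun x hxa hxb => ?_
    have h1 : (2 : ℝ) ^ (k + 1) < g (i + a) x := hxa.1.2
    have h2 : g (i + a) x ≤ (2 : ℝ) ^ (k + 1) := by
      have := hxb.2
      simp only [Set.mem_iInter] at this
      exact this a hab'
    linarith
  have hB_disj : Pairwise (Function.onFun Disjoint B) := by
    intro a b hab
    rcases lt_or_gt_of_ne hab with h' | h'
    · exact hB_disj' a b h'
    · exact (hB_disj' b a h').symm
  -- P₀ ⊆ E ∪ ⋃ B n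
  have hcover : P₀ ⊆ E ∪ ⋃ n, B n := by
    intro x hx
    by_cases hxE : x ∈ E
    · exact Or.inl hxE
    · right
      have : ∃ n : ℕ, (2 : ℝ) ^ (k + 1) < g (i + n) x := by
        by_contra hno
        push_neg at hno
        refine hxE ⟨hx, ?_⟩
        simp only [Set.mem_iInter, Set.mem_setOf_eq]
        intro j hj
        have : j = i + ((j - i).toNat : ℤ) := by
          rw [Int.toNat_of_nonneg (by linarith)]; ring
        rw [this]
        exact hno _
      refine Set.mem_iUnion.mpr ⟨Nat.find this, ⟨⟨hx, Nat.find_spec this⟩, ?_⟩⟩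
      simp only [Set.mem_iInter, Set.mem_setOf_eq]
      intro s hs
      exact le_of_not_gt (Nat.find_min this hs)
  set A : Set Ω := ⋃ n, B n with hAdef
  have hA_meas : MeasurableSet A := MeasurableSet.iUnion hB_meas
  have hA_sub : A ⊆ P₀ := Set.iUnion_subset hB_sub
  have hA_fin : μ A < ∞ := lt_of_le_of_lt (measure_mono hA_sub) hP₀_fin
  have hμA : μ A = ∑' n, μ (B n) := measure_iUnion hB_disj hB_meas
  -- Markov estimate on each B n
  have hkey : ∀ n : ℕ, (2 : ℝ) ^ (k + 1) * (μ (B n)).toReal ≤ ∫ x in B n, h x ∂μ := by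
    intro n
    have hfin : μ (B n) ≠ ∞ :=
      (lt_of_le_of_lt (measure_mono (hB_sub n)) hP₀_fin).ne
    have h1 : (2 : ℝ) ^ (k + 1) * (μ (B n)).toReal ≤ ∫ x in B n, g (i + n) x ∂μ := by
      refine setIntegral_ge_of_const_le_real (hB_meas n) hfin
        (fun x hx => le_of_lt hx.1.2) ?_
      exact (integrable_condExp (m := ℱ (i + n))).integrableOn
    have h2 : ∫ x in B n, g (i + n) x ∂μ = ∫ x in B n, h x ∂μ :=
      setIntegral_condExp (ℱ.le (i + n)) hh_int (hBF n)
    linarith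
  -- sum over n
  have hInt_A : IntegrableOn h A μ := hh_int.integrableOn
  have hHasSum : HasSum (fun n => ∫ x in B n, h x ∂μ) (∫ x in A, h x ∂μ) :=
    hasSum_integral_iUnion hB_meas hB_disj hInt_A
  have hsummable : Summable fun n => (μ (B n)).toReal := by
    refine ENNReal.summable_toReal ?_
    rw [← hμA]; exact hA_fin.ne
  have htoRealA : (μ A).toReal = ∑' n, (μ (B n)).toReal := by
    rw [hμA]
    exact ENNReal.tsum_toReal_eq fun n =>
      (lt_of_le_of_lt (measure_mono (hB_sub n)) hP₀_fin).ne
  have hsum_le : (2 : ℝ) ^ (k + 1) * (μ A).toReal ≤ ∫ x in A, h x ∂μ := by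
    rw [htoRealA, ← tsum_mul_left, ← hHasSum.tsum_eq]
    exact Summable.tsum_le_tsum hkey (hsummable.mul_left _) hHasSum.summable
  -- upper bound on ∫_{P₀} h
  have hup1 : ∫ x in A, h x ∂μ ≤ ∫ x in P₀, h x ∂μ :=
    setIntegral_mono_set hh_int.integrableOn
      (Filter.Eventually.of_forall fun x => hh_nonneg x) hA_sub.eventuallyLE
  have hup2 : ∫ x in P₀, h x ∂μ = ∫ x in P₀, g i x ∂μ :=
    (setIntegral_condExp (ℱ.le i) hh_int hP₀F).symm
  have hup3 : ∫ x in P₀, g i x ∂μ ≤ (2 : ℝ) ^ k * (μ P₀).toReal := by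
    have := setIntegral_mono_on (integrable_condExp (m := ℱ i)).integrableOn
      (integrableOn_const hP₀_fin.ne) hP₀_meas
      (fun x hx => hx.1.2)
    rw [setIntegral_const] at this
    simp only [smul_eq_mul, mul_comm] at this
    exact this
  -- combine: 2 * μ(A) ≤ μ(P₀) in ℝ
  have hpow : (2 : ℝ) ^ (k + 1) = 2 * (2 : ℝ) ^ k := by
    rw [zpow_add_one₀ (by norm_num : (2:ℝ) ≠ 0)]; ring
  have hk_pos : (0 : ℝ) < (2 : ℝ) ^ k := zpow_pos (by norm_num) k
  have hA_half : 2 * (μ A).toReal ≤ (μ P₀).toReal := by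
    have : (2 : ℝ) ^ (k + 1) * (μ A).toReal ≤ (2 : ℝ) ^ k * (μ P₀).toReal := by
      calc (2 : ℝ) ^ (k + 1) * (μ A).toReal ≤ ∫ x in A, h x ∂μ := hsum_le
        _ ≤ ∫ x in P₀, h x ∂μ := hup1
        _ = ∫ x in P₀, g i x ∂μ := hup2
        _ ≤ (2 : ℝ) ^ k * (μ P₀).toReal := hup3
    have h' : (2 : ℝ) ^ k * (2 * (μ A).toReal) ≤ (2 : ℝ) ^ k * (μ P₀).toReal := by
      rw [hpow] at this; linarith
    exact le_of_mul_le_mul_left h' hk_pos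
  -- subadditivity
  have hE_fin : μ E < ∞ :=
    lt_of_le_of_lt (measure_mono Set.inter_subset_left) hP₀_fin
  have hsubadd : (μ P₀).toReal ≤ (μ E).toReal + (μ A).toReal := by
    have h1 : μ P₀ ≤ μ E + μ A :=
      (measure_mono hcover).trans (measure_union_le _ _)
    have h2 : (μ P₀).toReal ≤ (μ E + μ A).toReal :=
      ENNReal.toReal_mono (by finiteness) h1
    rwa [ENNReal.toReal_add hE_fin.ne hA_fin.ne] at h2
  have hfinal : (μ P₀).toReal ≤ 2 * (μ E).toReal := by linarith
  have : (μ P₀).toReal ≤ (2 * μ E).toReal := by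
    rwa [ENNReal.toReal_mul, ENNReal.toReal_ofNat]
  exact (ENNReal.toReal_le_toReal hP₀_fin.ne (by finiteness)).mp this
end

section
/- Let i∈ℤ, h ∈ 𝓛⁺, k∈ℤ and Ω₀ ∈ 𝓕_i⁰, and set P₀ = {2^{k-1} < 𝔼_i(h) ≤ 2^k} ∩ Ω₀ and E(P₀) = P₀ ∩ ⋂_{j≥i} {𝔼_j(h) ≤ 2^{k+1}}. Then the conditional sparsity property holds: χ_{P₀} ≤ 2 𝔼_i(χ_{E(P₀)}) μ-a.e. on P₀, i.e. χ_{P₀} ≤ 2 𝔼_i(χ_{E(P₀)}) χ_{P₀} μ-a.e. -/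
open MeasureTheory
open scoped ENNReal

/-- Auxiliary maximal-inequality step: for an `ℱ i`-measurable set `T` of finite measure on
which `𝔼ᵢ(h) ≤ 2^k`, the part of `T` where the martingale ever exceeds `2^(k+1)` has measure
at most half of `μ T`. -/
private lemma sparsity_measure_ineq
    {Ω : Type*} {m : MeasurableSpace Ω} {μ : Measure Ω} [SigmaFinite μ]
    (ℱ : Filtration ℤ m) [SigmaFiniteFiltration μ ℱ]
    (i k : ℤ) (h : Ω → ℝ) (hh_nonneg : 0 ≤ h) (hh_int : Integrable h μ)
    (T : Set Ω) (hT : MeasurableSet[ℱ i] T) (hTfin : μ T ≠ ∞)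
    (hTbound : ∀ x ∈ T, (μ[h|ℱ i]) x ≤ (2 : ℝ) ^ k) :
    2 * (μ (T ∩ ⋃ n : ℕ, {x | (2 : ℝ) ^ (k + 1) < (μ[h|ℱ (i + (n : ℤ))]) x})).toReal
      ≤ (μ T).toReal := by
  classical
  set B : ℕ → Set Ω := fun n => {x | (2 : ℝ) ^ (k + 1) < (μ[h|ℱ (i + (n : ℤ))]) x} with hB
  have hB_filt : ∀ n : ℕ, MeasurableSet[ℱ (i + (n : ℤ))] (B n) := fun n =>
    measurableSet_lt measurable_const stronglyMeasurable_condExp.measurable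
  have hB_amb : ∀ n : ℕ, MeasurableSet (B n) := fun n => ℱ.le _ _ (hB_filt n)
  set C : ℕ → Set Ω := fun n => B n \ ⋃ m ∈ Finset.range n, B m with hC
  have hCB : ∀ n, C n ⊆ B n := fun n => Set.diff_subset
  have hC_filt : ∀ n : ℕ, MeasurableSet[ℱ (i + (n : ℤ))] (C n) := by
    intro n
    have hmono : ∀ m : ℕ, m ≤ n → MeasurableSet[ℱ (i + (n : ℤ))] (B m) := by
      intro m hmn
      exact ℱ.mono (by omega) _ (hB_filt m)
    exact (hmono n le_rfl).diff
      (MeasurableSet.biUnion (Finset.range n).countable_toSet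
        (fun m hm => hmono m (le_of_lt (Finset.mem_range.mp hm))))
  have hC_amb : ∀ n : ℕ, MeasurableSet (C n) := fun n => ℱ.le _ _ (hC_filt n)
  have hC_disj : Pairwise (Function.onFun Disjoint C) := by
    have key : ∀ a b : ℕ, a < b → Disjoint (C a) (C b) := by
      intro a b hab
      refine Set.disjoint_left.mpr ?_
      intro x hxa hxb
      exact hxb.2 (Set.mem_biUnion (Finset.mem_range.mpr hab) hxa.1)
    exact fun a b hab => hab.lt_or_gt.elim (fun h' => key a b h') (fun h' => (key b a h').symm)
  have hUC : (⋃ n, C n) = ⋃ n, B n := by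
    apply Set.Subset.antisymm (Set.iUnion_mono fun n => Set.diff_subset)
    intro x hx
    rw [Set.mem_iUnion] at hx
    obtain ⟨n, hn⟩ := hx
    have hex : ∃ n, x ∈ B n := ⟨n, hn⟩
    refine Set.mem_iUnion.mpr ⟨Nat.find hex, Nat.find_spec hex, ?_⟩
    intro hmem
    rw [Set.mem_iUnion₂] at hmem
    obtain ⟨m', hm', hxm⟩ := hmem
    exact Nat.find_min hex (Finset.mem_range.mp hm') hxm
  have hTamb : MeasurableSet T := ℱ.le i _ hT
  have hTCfin : ∀ n : ℕ, μ (T ∩ C n) ≠ ∞ := fun n =>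
    (lt_of_le_of_lt (measure_mono Set.inter_subset_left) hTfin.lt_top).ne
  -- per-piece inequality
  have key : ∀ n : ℕ, (2 : ℝ) ^ (k + 1) * (μ (T ∩ C n)).toReal
      ≤ ∫ x in T ∩ C n, h x ∂μ := by
    intro n
    have hTC_filt : MeasurableSet[ℱ (i + (n : ℤ))] (T ∩ C n) :=
      ((ℱ.mono (le_add_of_nonneg_right (by exact_mod_cast Nat.zero_le n)) _ hT).inter
        (hC_filt n))
    rw [← setIntegral_condExp (ℱ.le (i + (n : ℤ))) hh_int hTC_filt]
    have hconst : ∫ _x in T ∩ C n, (2 : ℝ) ^ (k + 1) ∂μ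
        = (μ (T ∩ C n)).toReal * (2 : ℝ) ^ (k + 1) := by
      rw [setIntegral_const]; simp [smul_eq_mul, measureReal_def]
    calc (2 : ℝ) ^ (k + 1) * (μ (T ∩ C n)).toReal
        = ∫ _x in T ∩ C n, (2 : ℝ) ^ (k + 1) ∂μ := by rw [hconst]; ring
      _ ≤ ∫ x in T ∩ C n, (μ[h|ℱ (i + (n : ℤ))]) x ∂μ := by
          refine setIntegral_mono_on
            (integrableOn_const (hTCfin n))
            integrable_condExp.integrableOn
            (hTamb.inter (hC_amb n)) ?_
          intro x hx
          exact le_of_lt (hCB n hx.2)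
  -- sum the pieces
  have hdisjTC : Pairwise (Function.onFun Disjoint fun n => T ∩ C n) :=
    hC_disj.mono fun a b hd => hd.mono Set.inter_subset_right Set.inter_subset_right
  have hmeasTC : ∀ n, MeasurableSet (T ∩ C n) := fun n => hTamb.inter (hC_amb n)
  have hUnionEq : (⋃ n, (T ∩ C n)) = T ∩ ⋃ n, B n := by
    rw [← Set.inter_iUnion, hUC]
  have hRHS : HasSum (fun n => ∫ x in T ∩ C n, h x ∂μ)
      (∫ x in T ∩ ⋃ n, B n, h x ∂μ) := by
    rw [← hUnionEq]
    exact hasSum_integral_iUnion hmeasTC hdisjTC hh_int.integrableOn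
  have hmeasSum : μ (T ∩ ⋃ n, B n) = ∑' n, μ (T ∩ C n) := by
    rw [← hUnionEq]
    exact measure_iUnion hdisjTC hmeasTC
  have hfinU : μ (T ∩ ⋃ n, B n) ≠ ∞ :=
    (lt_of_le_of_lt (measure_mono Set.inter_subset_left) hTfin.lt_top).ne
  have hLHS0 : HasSum (fun n => (μ (T ∩ C n)).toReal) (μ (T ∩ ⋃ n, B n)).toReal := by
    have h1 := ENNReal.hasSum_toReal (f := fun n => μ (T ∩ C n)) (by rw [← hmeasSum]; exact hfinU)
    have h2 : (∑' n, ((μ (T ∩ C n)).toReal)) = (μ (T ∩ ⋃ n, B n)).toReal := by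
      rw [hmeasSum, ENNReal.tsum_toReal_eq hTCfin]
    rwa [h2] at h1
  have hLHS : HasSum (fun n => (2 : ℝ) ^ (k + 1) * (μ (T ∩ C n)).toReal)
      ((2 : ℝ) ^ (k + 1) * (μ (T ∩ ⋃ n, B n)).toReal) := hLHS0.mul_left _
  have hmain : (2 : ℝ) ^ (k + 1) * (μ (T ∩ ⋃ n, B n)).toReal
      ≤ ∫ x in T ∩ ⋃ n, B n, h x ∂μ := hasSum_le key hLHS hRHS
  have hsub : ∫ x in T ∩ ⋃ n, B n, h x ∂μ ≤ ∫ x in T, h x ∂μ :=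
    setIntegral_mono_set hh_int.integrableOn
      (Filter.Eventually.of_forall fun x => hh_nonneg x)
      (HasSubset.Subset.eventuallyLE Set.inter_subset_left)
  have hTop : ∫ x in T, h x ∂μ ≤ (2 : ℝ) ^ k * (μ T).toReal := by
    rw [← setIntegral_condExp (ℱ.le i) hh_int hT]
    calc ∫ x in T, (μ[h|ℱ i]) x ∂μ ≤ ∫ _x in T, (2 : ℝ) ^ k ∂μ :=
          setIntegral_mono_on integrable_condExp.integrableOn
            (integrableOn_const hTfin) hTamb hTbound
      _ = (2 : ℝ) ^ k * (μ T).toReal := by rw [setIntegral_const]; simp [smul_eq_mul, measureReal_def]; ring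
  have h2k : (0 : ℝ) < (2 : ℝ) ^ k := by positivity
  have hkk : (2 : ℝ) ^ (k + 1) = 2 * (2 : ℝ) ^ k := by
    rw [zpow_add_one₀ (two_ne_zero)]; ring
  nlinarith [hmain.trans (hsub.trans hTop), ENNReal.toReal_nonneg (a := μ (T ∩ ⋃ n, B n))]

/-- **Conditional sparsity of principal sets** (Property P.3).  For
`P₀ = {2^{k-1} < 𝔼ᵢ(h) ≤ 2^k} ∩ Ω₀` and the stopped set
`E(P₀) = P₀ ∩ ⋂_{j ≥ i} {𝔼_j(h) ≤ 2^{k+1}}`, one has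
`χ_{P₀} ≤ 2 𝔼ᵢ(χ_{E(P₀)})` μ-a.e. on `P₀`. -/
theorem principal_set_conditional_sparsity
    {Ω : Type*} {m : MeasurableSpace Ω} {μ : Measure Ω} [SigmaFinite μ]
    (ℱ : Filtration ℤ m) [SigmaFiniteFiltration μ ℱ]
    (i : ℤ) (h : Ω → ℝ) (hh_nonneg : 0 ≤ h) (hh_meas : Measurable h)
    (hh_int : Integrable h μ)
    (k : ℤ) (Ω₀ : Set Ω) (hΩ₀_meas : MeasurableSet[ℱ i] Ω₀) (hΩ₀_fin : μ Ω₀ < ∞)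
    (P₀ EP₀ : Set Ω)
    (hP₀ : P₀ = {x | (2 : ℝ) ^ (k - 1) < (μ[h|ℱ i]) x ∧ (μ[h|ℱ i]) x ≤ (2 : ℝ) ^ k} ∩ Ω₀)
    (hEP₀ : EP₀ = P₀ ∩ ⋂ j ∈ {j : ℤ | i ≤ j}, {x | (μ[h|ℱ j]) x ≤ (2 : ℝ) ^ (k + 1)}) :
    ∀ᵐ x ∂μ, x ∈ P₀ →
      (1 : ℝ) ≤ 2 * (μ[EP₀.indicator (fun _ => (1 : ℝ))|ℱ i]) x := by
  classical
  set F : Ω → ℝ := μ[EP₀.indicator (fun _ => (1 : ℝ))|ℱ i] with hF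
  -- basic measurability facts
  have hP₀_filt : MeasurableSet[ℱ i] P₀ := by
    rw [hP₀]
    refine MeasurableSet.inter ?_ hΩ₀_meas
    have h1 : MeasurableSet[ℱ i] {x | (2 : ℝ) ^ (k - 1) < (μ[h|ℱ i]) x} :=
      measurableSet_lt measurable_const stronglyMeasurable_condExp.measurable
    have h2 : MeasurableSet[ℱ i] {x | (μ[h|ℱ i]) x ≤ (2 : ℝ) ^ k} :=
      measurableSet_le stronglyMeasurable_condExp.measurable measurable_const
    exact (Set.setOf_and ▸ h1.inter h2 :)
  have hP₀Ω₀ : P₀ ⊆ Ω₀ := by rw [hP₀]; exact Set.inter_subset_right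
  have hEP₀P₀ : EP₀ ⊆ P₀ := by rw [hEP₀]; exact Set.inter_subset_left
  have hEP₀_amb : MeasurableSet EP₀ := by
    rw [hEP₀]
    refine (ℱ.le i _ hP₀_filt).inter ?_
    refine MeasurableSet.biInter (Set.to_countable _) fun j hj => ?_
    exact ℱ.le j _ (measurableSet_le stronglyMeasurable_condExp.measurable measurable_const)
  have hind_int : Integrable (EP₀.indicator (fun _ => (1 : ℝ))) μ := by
    rw [integrable_indicator_iff hEP₀_amb]
    exact integrableOn_const
      ((lt_of_le_of_lt (measure_mono (hEP₀P₀.trans hP₀Ω₀)) hΩ₀_fin).ne)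
  -- the union set where the martingale exceeds 2^(k+1)
  set U : Set Ω := ⋃ n : ℕ, {x | (2 : ℝ) ^ (k + 1) < (μ[h|ℱ (i + (n : ℤ))]) x} with hU
  -- key measure inequality on ℱ i-measurable subsets of P₀
  have hkey : ∀ s : Set Ω, MeasurableSet[ℱ i] s → s ⊆ P₀ →
      (μ s).toReal ≤ 2 * (μ (s ∩ EP₀)).toReal := by
    intro s hs hsP
    have hsfin : μ s ≠ ∞ :=
      (lt_of_le_of_lt (measure_mono (hsP.trans hP₀Ω₀)) hΩ₀_fin).ne
    have hsb : ∀ x ∈ s, (μ[h|ℱ i]) x ≤ (2 : ℝ) ^ k := by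
      intro x hx
      have := hsP hx
      rw [hP₀] at this
      exact this.1.2
    have hmax := sparsity_measure_ineq ℱ i k h hh_nonneg hh_int s hs hsfin hsb
    -- s ∩ EP₀ = s \ U
    have hseq : s ∩ EP₀ = s \ U := by
      ext x
      constructor
      · rintro ⟨hxs, hxE⟩
        refine ⟨hxs, ?_⟩
        intro hxU
        rw [hU, Set.mem_iUnion] at hxU
        obtain ⟨n, hn⟩ := hxU
        rw [hEP₀] at hxE
        have := hxE.2
        rw [Set.mem_iInter₂] at this
        have hle : (μ[h|ℱ (i + (n : ℤ))]) x ≤ (2 : ℝ) ^ (k + 1) :=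
          this (i + (n : ℤ)) (show i ≤ i + (n : ℤ) by omega)
        have hgt : (2 : ℝ) ^ (k + 1) < (μ[h|ℱ (i + (n : ℤ))]) x := hn
        exact absurd hgt (not_lt.mpr hle)
      · rintro ⟨hxs, hxU⟩
        refine ⟨hxs, ?_⟩
        rw [hEP₀]
        refine ⟨hsP hxs, ?_⟩
        rw [Set.mem_iInter₂]
        intro j hj
        have hij : i ≤ j := hj
        by_contra hcon
        have hcon' : (2 : ℝ) ^ (k + 1) < (μ[h|ℱ j]) x := not_le.mp hcon
        apply hxU
        rw [hU, Set.mem_iUnion]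
        refine ⟨(j - i).toNat, ?_⟩
        have hji : i + ((j - i).toNat : ℤ) = j := by
          rw [Int.toNat_of_nonneg (by linarith : (0:ℤ) ≤ j - i)]
          ring
        show (2 : ℝ) ^ (k + 1) < (μ[h|ℱ (i + ((j - i).toNat : ℤ))]) x
        rw [hji]
        exact hcon'
    have hUmeas : MeasurableSet U := by
      refine MeasurableSet.iUnion fun n => ℱ.le (i + (n : ℤ)) _ ?_
      exact measurableSet_lt measurable_const stronglyMeasurable_condExp.measurable
    have hsplit : μ (s ∩ U) + μ (s \ U) = μ s := measure_inter_add_diff s hUmeas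
    have hfin1 : μ (s ∩ U) ≠ ∞ := (lt_of_le_of_lt (measure_mono Set.inter_subset_left) hsfin.lt_top).ne
    have hfin2 : μ (s \ U) ≠ ∞ := (lt_of_le_of_lt (measure_mono Set.diff_subset) hsfin.lt_top).ne
    have hsplit' : (μ (s ∩ U)).toReal + (μ (s \ U)).toReal = (μ s).toReal := by
      rw [← ENNReal.toReal_add hfin1 hfin2, hsplit]
    rw [hseq]
    linarith [hmax]
  -- the bad sets
  set N : ℕ → Set Ω := fun n => P₀ ∩ {x | 2 * F x ≤ 1 - 1 / ((n : ℝ) + 1)} with hN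
  have hN_filt : ∀ n, MeasurableSet[ℱ i] (N n) := by
    intro n
    exact hP₀_filt.inter
      (measurableSet_le (stronglyMeasurable_condExp.measurable.const_mul 2) measurable_const)
  have hN_zero : ∀ n, μ (N n) = 0 := by
    intro n
    have hNP : N n ⊆ P₀ := Set.inter_subset_left
    have hNfin : μ (N n) ≠ ∞ :=
      (lt_of_le_of_lt (measure_mono (hNP.trans hP₀Ω₀)) hΩ₀_fin).ne
    have h1 : (μ (N n)).toReal ≤ 2 * (μ (N n ∩ EP₀)).toReal := hkey (N n) (hN_filt n) hNP
    have h2 : 2 * (μ (N n ∩ EP₀)).toReal = ∫ x in N n, 2 * F x ∂μ := by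
      rw [integral_const_mul]
      congr 1
      rw [hF, setIntegral_condExp (ℱ.le i) hind_int (hN_filt n),
        setIntegral_indicator hEP₀_amb]
      simp [setIntegral_const, measureReal_def]
    have hNamb : MeasurableSet (N n) := ℱ.le i _ (hN_filt n)
    have h3 : ∫ x in N n, 2 * F x ∂μ ≤ (1 - 1 / ((n : ℝ) + 1)) * (μ (N n)).toReal := by
      calc ∫ x in N n, 2 * F x ∂μ ≤ ∫ _x in N n, (1 - 1 / ((n : ℝ) + 1)) ∂μ := by
            refine setIntegral_mono_on (integrable_condExp.const_mul 2).integrableOn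
              (integrableOn_const hNfin) hNamb ?_
            intro x hx
            exact hx.2
        _ = (1 - 1 / ((n : ℝ) + 1)) * (μ (N n)).toReal := by
            rw [setIntegral_const]; simp [smul_eq_mul, measureReal_def]; ring
    have hd : (0 : ℝ) < 1 / ((n : ℝ) + 1) := by positivity
    have ha : (0 : ℝ) ≤ (μ (N n)).toReal := ENNReal.toReal_nonneg
    have ha0 : (μ (N n)).toReal = 0 := by nlinarith [h1.trans (h2.le.trans h3)]
    exact (ENNReal.toReal_eq_zero_iff _).mp ha0 |>.resolve_right hNfin
  -- conclude
  rw [Filter.eventually_iff, mem_ae_iff]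
  refine measure_mono_null ?_ (measure_iUnion_null hN_zero)
  intro x hx
  simp only [Set.mem_compl_iff, Set.mem_setOf_eq, Classical.not_imp, not_le] at hx
  obtain ⟨hxP, hxF⟩ := hx
  obtain ⟨n, hn⟩ := exists_nat_one_div_lt (by linarith : (0 : ℝ) < 1 - 2 * F x)
  refine Set.mem_iUnion.mpr ⟨n, hxP, ?_⟩
  have : 1 / ((n : ℝ) + 1) < 1 - 2 * F x := by exact_mod_cast hn
  simp only [Set.mem_setOf_eq]
  linarith
end

section
/- (Carleson embedding over principal sets.) Let 1<p<∞ with conjugate exponent p' and let h ∈ 𝓛⁺ with ∫_Ω h^p dμ < ∞. Let (P_n)_{n∈ℕ} be a countable family of measurable sets together with indices i_n ∈ ℤ and integers k_n ∈ ℤ, and let (E_n)_{n∈ℕ} be pairwise disjoint measurable sets with E_n ⊆ P_n, such that for every n: (i) P_n ∈ 𝓕_{i_n}; (ii) χ_{P_n} ≤ 2 𝔼_{i_n}(χ_{E_n}) μ-a.e. on P_n; (iii) 2^{k_n - 1} < 𝔼_{i_n}(h) μ-a.e. on P_n. Then Σ_n μ(P_n) 2^{p(k_n - 1)} ≤ 2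 (p')^p ∫_Ω h^p dμ. -/
open MeasureTheory
open scoped ENNReal

section Auxiliary

open Set

/-- `∫⁻ t in Ioo 0 b, t^q = b^(q+1)/(q+1)` for `-1 < q`, `0 ≤ b`. -/
lemma lint_Ioo_rpow {q : ℝ} (hq : -1 < q) {b : ℝ} (hb : 0 ≤ b) :
    ∫⁻ t in Set.Ioo (0:ℝ) b, ENNReal.ofReal (t ^ q) = ENNReal.ofReal (b ^ (q+1) / (q+1)) := by
  rcases eq_or_lt_of_le hb with rfl | hb
  · simp [Real.zero_rpow (by linarith : q + 1 ≠ 0)]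
  · have hint : IntegrableOn (fun t : ℝ => t ^ q) (Set.Ioo 0 b) := by
      have := (intervalIntegral.intervalIntegrable_rpow' (a := 0) (b := b) hq).1
      exact this.mono_set Set.Ioo_subset_Ioc_self
    rw [← ofReal_integral_eq_lintegral_ofReal hint ?nn]
    case nn =>
      filter_upwards [self_mem_ae_restrict (measurableSet_Ioo (a := (0:ℝ)) (b := b))] with t ht
      exact Real.rpow_nonneg ht.1.le q
    congr 1
    rw [← MeasureTheory.integral_Ioc_eq_integral_Ioo,
      ← intervalIntegral.integral_of_le hb.le, integral_rpow (Or.inl hq)]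
    rw [Real.zero_rpow (by linarith : q + 1 ≠ 0)]
    ring

/-- Weak type (1,1) bound for the maximal function over a finite set of indices. -/
lemma weak_finset {Ω : Type*} {m : MeasurableSpace Ω} {μ : Measure Ω}
    (ℱ : Filtration ℤ m) [SigmaFiniteFiltration μ ℱ]
    {h : Ω → ℝ} (hh_nonneg : 0 ≤ h) (hh_int : Integrable h μ)
    {l : ℝ} (hl : 0 < l) (s : Finset ℤ) :
    ENNReal.ofReal l * μ (⋃ j ∈ s, {x | l < (μ[h|ℱ j]) x}) ≤
      ∫⁻ x in ⋃ j ∈ s, {x | l < (μ[h|ℱ j]) x}, ENNReal.ofReal (h x) ∂μ := by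
  classical
  have hS : ∀ j : ℤ, MeasurableSet[ℱ j] {x | l < (μ[h|ℱ j]) x} := fun j =>
    measurableSet_lt measurable_const stronglyMeasurable_condExp.measurable
  have hcond_nonneg : ∀ j : ℤ, 0 ≤ᵐ[μ] μ[h|ℱ j] := fun j =>
    condExp_nonneg (Filter.Eventually.of_forall hh_nonneg)
  induction s using Finset.induction_on_max with
  | empty => simp
  | insert a s hlt IH =>
    rw [Finset.set_biUnion_insert]
    set U : Set Ω := ⋃ j ∈ s, {x | l < (μ[h|ℱ j]) x} with hU
    have hU_a : MeasurableSet[ℱ a] U :=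
      Finset.measurableSet_biUnion s fun j hj => (ℱ.mono (hlt j hj).le) _ (hS j)
    set B : Set Ω := {x | l < (μ[h|ℱ a]) x} \ U with hB
    have hB_a : MeasurableSet[ℱ a] B := ((hS a).diff hU_a)
    have hB_m : MeasurableSet B := ℱ.le a _ hB_a
    have hsplit : {x | l < (μ[h|ℱ a]) x} ∪ U = U ∪ B := by
      rw [hB, Set.union_diff_self, Set.union_comm]
    have hdisj : Disjoint U B := disjoint_sdiff_self_right
    -- the key estimate on B
    have keyB : ENNReal.ofReal l * μ B ≤ ∫⁻ x in B, ENNReal.ofReal (h x) ∂μ := by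
      have h1 : ENNReal.ofReal l * μ B = ∫⁻ _ in B, ENNReal.ofReal l ∂μ :=
        (setLIntegral_const B _).symm
      have h2 : ∫⁻ _ in B, ENNReal.ofReal l ∂μ ≤ ∫⁻ x in B, ENNReal.ofReal ((μ[h|ℱ a]) x) ∂μ := by
        refine setLIntegral_mono
          ((stronglyMeasurable_condExp.mono (ℱ.le a)).measurable.ennreal_ofReal) ?_
        exact fun x hx => ENNReal.ofReal_le_ofReal (le_of_lt hx.1)
      have h3 : ∫⁻ x in B, ENNReal.ofReal ((μ[h|ℱ a]) x) ∂μ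
          = ENNReal.ofReal (∫ x in B, (μ[h|ℱ a]) x ∂μ) :=
        (ofReal_integral_eq_lintegral_ofReal (integrable_condExp.integrableOn)
          (ae_restrict_of_ae (hcond_nonneg a))).symm
      have h4 : ∫ x in B, (μ[h|ℱ a]) x ∂μ = ∫ x in B, h x ∂μ :=
        setIntegral_condExp (ℱ.le a) hh_int hB_a
      have h5 : ENNReal.ofReal (∫ x in B, h x ∂μ) = ∫⁻ x in B, ENNReal.ofReal (h x) ∂μ :=
        ofReal_integral_eq_lintegral_ofReal hh_int.integrableOn
          (ae_restrict_of_ae (Filter.Eventually.of_forall hh_nonneg))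
      calc ENNReal.ofReal l * μ B ≤ ∫⁻ x in B, ENNReal.ofReal ((μ[h|ℱ a]) x) ∂μ := h1 ▸ h2
        _ = _ := by rw [h3, h4, h5]
    calc ENNReal.ofReal l * μ ({x | l < (μ[h|ℱ a]) x} ∪ U)
        = ENNReal.ofReal l * (μ U + μ B) := by rw [hsplit, measure_union hdisj hB_m]
      _ = ENNReal.ofReal l * μ U + ENNReal.ofReal l * μ B := by rw [mul_add]
      _ ≤ (∫⁻ x in U, ENNReal.ofReal (h x) ∂μ) + ∫⁻ x in B, ENNReal.ofReal (h x) ∂μ :=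
          add_le_add IH keyB
      _ = ∫⁻ x in U ∪ B, ENNReal.ofReal (h x) ∂μ := (lintegral_union hB_m hdisj).symm
      _ = _ := by rw [hsplit]

lemma weak_countable {Ω : Type*} {m : MeasurableSpace Ω} {μ : Measure Ω}
    (ℱ : Filtration ℤ m) [SigmaFiniteFiltration μ ℱ]
    {h : Ω → ℝ} (hh_nonneg : 0 ≤ h) (hh_int : Integrable h μ)
    (i : ℕ → ℤ) {l : ℝ} (hl : 0 < l) :
    ENNReal.ofReal l * μ (⋃ n : ℕ, {x | l < (μ[h|ℱ (i n)]) x}) ≤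
      ∫⁻ x in ⋃ n : ℕ, {x | l < (μ[h|ℱ (i n)]) x}, ENNReal.ofReal (h x) ∂μ := by
  classical
  set S : ℤ → Set Ω := fun j => {x | l < (μ[h|ℱ j]) x} with hSdef
  set V : ℕ → Set Ω := fun N => ⋃ n ∈ Finset.range N, S (i n) with hVdef
  have hVmono : Monotone V := fun N M hNM =>
    Set.biUnion_subset_biUnion_left (by exact_mod_cast Finset.range_subset_range.2 hNM)
  have hVU : ⋃ N, V N = ⋃ n : ℕ, S (i n) := by
    apply Set.Subset.antisymm
    · exact Set.iUnion_subset fun N => Set.iUnion₂_subset fun n _ =>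
        Set.subset_iUnion (fun n => S (i n)) n
    · refine Set.iUnion_subset fun n => Set.subset_iUnion_of_subset (n+1) ?_
      intro x hx
      exact Set.mem_biUnion (Finset.self_mem_range_succ n) hx
  have hmU : μ (⋃ n : ℕ, S (i n)) = ⨆ N, μ (V N) := by
    rw [← hVU]; exact hVmono.measure_iUnion
  rw [hmU, ENNReal.mul_iSup]
  refine iSup_le fun N => ?_
  have himg : V N = ⋃ j ∈ (Finset.range N).image i, S j := by
    ext x
    simp only [hVdef, Set.mem_iUnion, Finset.mem_image, Finset.mem_range, exists_prop]
    constructor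
    · rintro ⟨n, hn, hx⟩; exact ⟨i n, ⟨n, hn, rfl⟩, hx⟩
    · rintro ⟨j, ⟨n, hn, rfl⟩, hx⟩; exact ⟨n, hn, hx⟩
  calc ENNReal.ofReal l * μ (V N)
      ≤ ∫⁻ x in V N, ENNReal.ofReal (h x) ∂μ := by
        rw [himg]; exact weak_finset ℱ hh_nonneg hh_int hl _
    _ ≤ _ := lintegral_mono_set (hVU ▸ Set.subset_iUnion V N)

/-- Doob's `L^p` maximal inequality for the countable family of conditional expectations. -/
lemma doob_lp {Ω : Type*} {m : MeasurableSpace Ω} {μ : Measure Ω} [SigmaFinite μ]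
    (ℱ : Filtration ℤ m) [SigmaFiniteFiltration μ ℱ]
    {p : ℝ} (hp : 1 < p)
    {h : Ω → ℝ} (hh_nonneg : 0 ≤ h) (hh_meas : Measurable h) (hh_int : Integrable h μ)
    (i : ℕ → ℤ) :
    ∫⁻ x, (⨆ n : ℕ, ENNReal.ofReal ((μ[h|ℱ (i n)]) x)) ^ p ∂μ ≤
      ENNReal.ofReal (p / (p - 1)) ^ p * ∫⁻ x, ENNReal.ofReal (h x) ^ p ∂μ := by
  classical
  have hp0 : (0:ℝ) < p := lt_trans one_pos hp
  set q : ℝ := p / (p - 1) with hqdef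
  have hpq : p.HolderConjugate q := Real.HolderConjugate.conjExponent hp
  set T : Ω → ℝ≥0∞ := fun x => ⨆ n : ℕ, ENNReal.ofReal ((μ[h|ℱ (i n)]) x) with hTdef
  have hT_meas : Measurable T :=
    Measurable.iSup fun n => (stronglyMeasurable_condExp.mono (ℱ.le _)).measurable.ennreal_ofReal
  set A : ℝ≥0∞ := ∫⁻ x, ENNReal.ofReal (h x) ^ p ∂μ with hAdef
  set L : ℝ≥0∞ := ∫⁻ x, ENNReal.ofReal (h x) ∂μ with hLdef
  have hL_fin : L ≠ ∞ := by
    rw [hLdef, ← ofReal_integral_eq_lintegral_ofReal hh_int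
      (Filter.Eventually.of_forall hh_nonneg)]
    exact ENNReal.ofReal_ne_top
  -- the main estimate for the truncated maximal function
  have main : ∀ N : ℕ, ∫⁻ x, (min (T x) N) ^ p ∂μ ≤ ENNReal.ofReal q ^ p * A := by
    intro N
    set TN : Ω → ℝ≥0∞ := fun x => min (T x) N with hTNdef
    have hTN_meas : Measurable TN := hT_meas.min measurable_const
    have hTN_ne_top : ∀ x, TN x ≠ ∞ :=
      fun x => ((min_le_right _ _).trans_lt (ENNReal.natCast_lt_top N)).ne
    set f : Ω → ℝ := fun x => (TN x).toReal with hfdef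
    have hf_meas : Measurable f := hTN_meas.ennreal_toReal
    have hf_nn : 0 ≤ᵐ[μ] f := Filter.Eventually.of_forall fun x => ENNReal.toReal_nonneg
    set X : ℝ≥0∞ := ∫⁻ x, TN x ^ p ∂μ with hXdef
    -- layer cake
    have lc0 : ∫⁻ x, ENNReal.ofReal (f x ^ p) ∂μ = X := by
      refine lintegral_congr fun x => ?_
      show ENNReal.ofReal ((TN x).toReal ^ p) = TN x ^ p
      rw [← ENNReal.ofReal_rpow_of_nonneg ENNReal.toReal_nonneg hp0.le,
        ENNReal.ofReal_toReal (hTN_ne_top x)]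
    have lc : X = ENNReal.ofReal p *
        ∫⁻ t in Ioi (0:ℝ), μ {a | t < f a} * ENNReal.ofReal (t ^ (p - 1)) := by
      rw [← lc0]
      exact lintegral_rpow_eq_lintegral_meas_lt_mul μ hf_nn hf_meas.aemeasurable hp0
    -- identify the superlevel sets
    have hset : ∀ t : ℝ, 0 < t → t < (N:ℝ) → {a | t < f a} = {a | ENNReal.ofReal t < T a} := by
      intro t ht htN
      ext a
      simp only [Set.mem_setOf_eq, hfdef]
      rw [← ENNReal.ofReal_lt_iff_lt_toReal ht.le (hTN_ne_top a), hTNdef, lt_min_iff]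
      have : ENNReal.ofReal t < (N:ℝ≥0∞) := by
        rw [← ENNReal.ofReal_natCast N]
        exact ENNReal.ofReal_lt_ofReal_iff_of_nonneg ht.le |>.2 htN
      exact ⟨fun hh => hh.1, fun hh => ⟨hh, this⟩⟩
    have hset' : ∀ t : ℝ, 0 < t → (N:ℝ) ≤ t → {a | t < f a} = ∅ := by
      intro t ht htN
      ext a
      simp only [Set.mem_setOf_eq, Set.mem_empty_iff_false, iff_false, not_lt, hfdef]
      calc (TN a).toReal ≤ ((N:ℝ≥0∞)).toReal :=
            ENNReal.toReal_mono (ENNReal.natCast_ne_top N) (min_le_right _ _)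
        _ = (N:ℝ) := by simp
        _ ≤ t := htN
    -- the superlevel sets of T as countable unions
    have hUeq : ∀ t : ℝ, 0 ≤ t →
        {a | ENNReal.ofReal t < T a} = ⋃ n : ℕ, {x | t < (μ[h|ℱ (i n)]) x} := by
      intro t ht
      ext a
      simp only [Set.mem_setOf_eq, hTdef, lt_iSup_iff, Set.mem_iUnion]
      constructor
      · rintro ⟨n, hn⟩
        refine ⟨n, ?_⟩
        by_contra hle
        exact absurd (hn.trans_le (ENNReal.ofReal_le_ofReal (not_lt.1 hle))) (lt_irrefl _)
      · rintro ⟨n, hn⟩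
        exact ⟨n, (ENNReal.ofReal_lt_ofReal_iff_of_nonneg ht).2 hn⟩
    -- weak-type bound in terms of T
    have hUmeas : ∀ t : ℝ, MeasurableSet {a | ENNReal.ofReal t < T a} := fun t =>
      measurableSet_lt measurable_const hT_meas
    have hweak : ∀ t : ℝ, 0 < t →
        ENNReal.ofReal t * μ {a | ENNReal.ofReal t < T a} ≤
          ∫⁻ x in {a | ENNReal.ofReal t < T a}, ENNReal.ofReal (h x) ∂μ := by
      intro t ht
      rw [hUeq t ht.le]
      exact weak_countable ℱ hh_nonneg hh_int i ht
    -- restrict the layer-cake integral to (0, N)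
    have hres : (∫⁻ t in Ioi (0:ℝ), μ {a | t < f a} * ENNReal.ofReal (t ^ (p - 1)))
        = ∫⁻ t in Ioo (0:ℝ) N, μ {a | ENNReal.ofReal t < T a} * ENNReal.ofReal (t ^ (p - 1)) := by
      have e1 : ∀ t ∈ Ioi (0:ℝ), μ {a | t < f a} * ENNReal.ofReal (t ^ (p-1))
          = (Ioo (0:ℝ) N).indicator
            (fun t => μ {a | ENNReal.ofReal t < T a} * ENNReal.ofReal (t ^ (p-1))) t := by
        intro t ht
        by_cases htN : t < (N:ℝ)
        · rw [Set.indicator_of_mem (Set.mem_Ioo.mpr ⟨ht, htN⟩), hset t ht htN]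
        · rw [Set.indicator_of_notMem (fun hmem => htN hmem.2), hset' t ht (not_lt.1 htN),
            measure_empty, zero_mul]
      rw [setLIntegral_congr_fun_ae measurableSet_Ioi (ae_of_all _ e1),
        lintegral_indicator measurableSet_Ioo _,
        Measure.restrict_restrict measurableSet_Ioo,
        Set.inter_eq_left.mpr Set.Ioo_subset_Ioi_self]
    -- pointwise bound using the weak-type inequality
    have hbd : ∀ t ∈ Ioo (0:ℝ) N,
        μ {a | ENNReal.ofReal t < T a} * ENNReal.ofReal (t ^ (p-1))
          ≤ ENNReal.ofReal (t ^ (p-2)) *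
            ∫⁻ x in {a | ENNReal.ofReal t < T a}, ENNReal.ofReal (h x) ∂μ := by
      intro t ht
      have h1 : ENNReal.ofReal (t ^ (p-1)) = ENNReal.ofReal (t ^ (p-2)) * ENNReal.ofReal t := by
        rw [← ENNReal.ofReal_mul (Real.rpow_nonneg ht.1.le _)]
        congr 1
        conv_lhs => rw [show p - 1 = (p-2) + 1 by ring]
        rw [Real.rpow_add ht.1, Real.rpow_one]
      calc μ {a | ENNReal.ofReal t < T a} * ENNReal.ofReal (t ^ (p-1))
          = ENNReal.ofReal (t ^ (p-2)) * (ENNReal.ofReal t * μ {a | ENNReal.ofReal t < T a}) := by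
            rw [h1]; ring
        _ ≤ _ := mul_le_mul_right (hweak t ht.1) _
    have hX1 : X ≤ ENNReal.ofReal p * ∫⁻ t in Ioo (0:ℝ) N, ENNReal.ofReal (t ^ (p-2)) *
        (∫⁻ x in {a | ENNReal.ofReal t < T a}, ENNReal.ofReal (h x) ∂μ) ∂volume := by
      rw [lc, hres]
      exact mul_le_mul_right (setLIntegral_mono' measurableSet_Ioo hbd) _
    -- finiteness of X
    have hrpow_meas : Measurable fun t : ℝ => ENNReal.ofReal (t ^ (p-2)) :=
      (measurable_id.pow measurable_const).ennreal_ofReal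
    have hJ : ∫⁻ t in Ioo (0:ℝ) N, ENNReal.ofReal (t ^ (p-2)) ∂volume
        = ENNReal.ofReal ((N:ℝ) ^ (p-1) / (p-1)) := by
      rw [lint_Ioo_rpow (by linarith : (-1:ℝ) < p - 2) (Nat.cast_nonneg N),
        show p-2+1 = p-1 by ring]
    have hXfin : X ≠ ⊤ := by
      have hb2 : ∫⁻ t in Ioo (0:ℝ) N, ENNReal.ofReal (t ^ (p-2)) *
          (∫⁻ x in {a | ENNReal.ofReal t < T a}, ENNReal.ofReal (h x) ∂μ) ∂volume
            ≤ ∫⁻ t in Ioo (0:ℝ) N, ENNReal.ofReal (t ^ (p-2)) * L ∂volume :=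
        setLIntegral_mono' measurableSet_Ioo fun t _ =>
          mul_le_mul_right (setLIntegral_le_lintegral _ _) _
      have hb3 : ∫⁻ t in Ioo (0:ℝ) N, ENNReal.ofReal (t ^ (p-2)) * L ∂volume
          = ENNReal.ofReal ((N:ℝ) ^ (p-1) / (p-1)) * L := by
        rw [lintegral_mul_const L hrpow_meas, hJ]
      refine ne_top_of_le_ne_top ?_ (hX1.trans (mul_le_mul_right (hb2.trans_eq hb3) _))
      exact ENNReal.mul_ne_top ENNReal.ofReal_ne_top
        (ENNReal.mul_ne_top ENNReal.ofReal_ne_top hL_fin)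
    -- rewrite inner set-integral with an if-then-else and swap the order of integration
    have hIeq : ∀ t : ℝ, (∫⁻ x in {a | ENNReal.ofReal t < T a}, ENNReal.ofReal (h x) ∂μ)
        = ∫⁻ x, (if ENNReal.ofReal t < T x then ENNReal.ofReal (h x) else 0) ∂μ := by
      intro t
      rw [← lintegral_indicator (hUmeas t) _]
      exact lintegral_congr fun x => by rw [Set.indicator_apply]; rfl
    have hswap : ∫⁻ t in Ioo (0:ℝ) N, ENNReal.ofReal (t ^ (p-2)) *
        (∫⁻ x in {a | ENNReal.ofReal t < T a}, ENNReal.ofReal (h x) ∂μ) ∂volume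
        = ∫⁻ x, ∫⁻ t in Ioo (0:ℝ) N, ENNReal.ofReal (t ^ (p-2)) *
            (if ENNReal.ofReal t < T x then ENNReal.ofReal (h x) else 0) ∂volume ∂μ := by
      have e2 : ∀ t : ℝ, ENNReal.ofReal (t ^ (p-2)) *
          (∫⁻ x in {a | ENNReal.ofReal t < T a}, ENNReal.ofReal (h x) ∂μ)
          = ∫⁻ x, ENNReal.ofReal (t ^ (p-2)) *
              (if ENNReal.ofReal t < T x then ENNReal.ofReal (h x) else 0) ∂μ := by
        intro t
        rw [hIeq t, ← lintegral_const_mul _ (Measurable.ite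
          (measurableSet_lt measurable_const hT_meas) hh_meas.ennreal_ofReal measurable_const)]
      rw [lintegral_congr e2]
      refine lintegral_lintegral_swap ?_
      have hWset : MeasurableSet {tx : ℝ × Ω | ENNReal.ofReal tx.1 < T tx.2} :=
        measurableSet_lt (measurable_fst.ennreal_ofReal) (hT_meas.comp measurable_snd)
      refine Measurable.aemeasurable ?_
      exact ((measurable_fst.pow measurable_const).ennreal_ofReal).mul
        (Measurable.ite hWset ((hh_meas.comp measurable_snd).ennreal_ofReal) measurable_const)
    -- compute the inner integral
    have hinner : ∀ x, (∫⁻ t in Ioo (0:ℝ) N, ENNReal.ofReal (t ^ (p-2)) *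
        (if ENNReal.ofReal t < T x then ENNReal.ofReal (h x) else 0) ∂volume)
        = ENNReal.ofReal (1/(p-1)) * (TN x ^ (p-1) * ENNReal.ofReal (h x)) := by
      intro x
      set b : ℝ := (TN x).toReal with hbdef
      have hb0 : 0 ≤ b := ENNReal.toReal_nonneg
      have hbN : b ≤ (N:ℝ) := by
        have := ENNReal.toReal_mono (ENNReal.natCast_ne_top N) (min_le_right (T x) (N:ℝ≥0∞))
        simpa using this
      have e3 : ∀ t ∈ Ioo (0:ℝ) N, ENNReal.ofReal (t ^ (p-2)) *
          (if ENNReal.ofReal t < T x then ENNReal.ofReal (h x) else 0)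
          = (Iio b).indicator (fun t => ENNReal.ofReal (t ^ (p-2)) * ENNReal.ofReal (h x)) t := by
        intro t ht
        have hiff : (ENNReal.ofReal t < T x) ↔ t < b := by
          have htN' : ENNReal.ofReal t < (N:ℝ≥0∞) := by
            rw [← ENNReal.ofReal_natCast N]
            exact (ENNReal.ofReal_lt_ofReal_iff_of_nonneg ht.1.le).2 ht.2
          rw [hbdef, ← ENNReal.ofReal_lt_iff_lt_toReal ht.1.le (hTN_ne_top x), hTNdef]
          simp only [lt_min_iff]
          exact ⟨fun hh => ⟨hh, htN'⟩, fun hh => hh.1⟩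
        by_cases hc : t < b
        · rw [Set.indicator_of_mem (Set.mem_Iio.mpr hc), if_pos (hiff.2 hc)]
        · rw [Set.indicator_of_notMem (fun hm => hc (Set.mem_Iio.mp hm)),
            if_neg (fun hcc => hc (hiff.1 hcc)), mul_zero]
      rw [setLIntegral_congr_fun_ae measurableSet_Ioo (ae_of_all _ e3),
        lintegral_indicator measurableSet_Iio _,
        Measure.restrict_restrict measurableSet_Iio]
      have hseteq : Iio b ∩ Ioo (0:ℝ) N = Ioo (0:ℝ) b := by
        ext t
        constructor
        · rintro ⟨h1', h2'⟩; exact ⟨h2'.1, h1'⟩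
        · rintro ⟨h1', h2'⟩; exact ⟨h2', ⟨h1', lt_of_lt_of_le h2' hbN⟩⟩
      rw [hseteq, lintegral_mul_const _ hrpow_meas,
        lint_Ioo_rpow (by linarith : (-1:ℝ) < p - 2) hb0]
      have : b ^ (p-2+1) / (p-2+1) = (1/(p-1)) * b ^ (p-1) := by
        rw [show p-2+1 = p-1 by ring]; ring
      rw [this, ENNReal.ofReal_mul (one_div_nonneg.2 (by linarith)), mul_assoc]
      congr 1
      rw [← ENNReal.ofReal_rpow_of_nonneg hb0 (by linarith : (0:ℝ) ≤ p - 1), hbdef,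
        ENNReal.ofReal_toReal (hTN_ne_top x)]
    -- putting it together: X ≤ ofReal q * ∫ (TN^(p-1)) * h
    have hX2 : X ≤ ENNReal.ofReal q *
        ∫⁻ x, ENNReal.ofReal (h x) * TN x ^ (p-1) ∂μ := by
      refine hX1.trans ?_
      have hmul_meas : Measurable fun x => TN x ^ (p-1) * ENNReal.ofReal (h x) :=
        (hTN_meas.pow measurable_const).mul hh_meas.ennreal_ofReal
      rw [hswap, lintegral_congr hinner,
        lintegral_const_mul _ hmul_meas, ← mul_assoc, ← ENNReal.ofReal_mul hp0.le]
      have : p * (1/(p-1)) = q := by rw [hqdef]; ring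
      rw [this]
      refine mul_le_mul_right (le_of_eq (lintegral_congr fun x => mul_comm _ _)) _
    -- Hölder
    have hH := ENNReal.lintegral_mul_le_Lp_mul_Lq (f := fun x => ENNReal.ofReal (h x))
      (g := fun x => TN x ^ (p-1)) μ hpq hh_meas.ennreal_ofReal.aemeasurable
      ((hTN_meas.pow measurable_const).aemeasurable)
    have hBX : (∫⁻ x, (TN x ^ (p-1)) ^ q ∂μ) = X := by
      refine lintegral_congr fun x => ?_
      rw [← ENNReal.rpow_mul, hpq.sub_one_mul_conj]
    have hX3 : X ≤ ENNReal.ofReal q * (A ^ (1/p) * X ^ (1/q)) := by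
      refine hX2.trans (mul_le_mul_right ?_ _)
      calc ∫⁻ x, ENNReal.ofReal (h x) * TN x ^ (p-1) ∂μ
          = ∫⁻ x, ((fun y => ENNReal.ofReal (h y)) * fun y => TN y ^ (p-1)) x ∂μ :=
            lintegral_congr fun x => rfl
        _ ≤ (∫⁻ x, ENNReal.ofReal (h x) ^ p ∂μ) ^ (1/p) *
              (∫⁻ x, (TN x ^ (p-1)) ^ q ∂μ) ^ (1/q) := hH
        _ = A ^ (1/p) * X ^ (1/q) := by rw [hBX]
    -- conclude
    by_cases hX0 : X = 0
    · rw [hX0]; exact zero_le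
    have hq0 : 0 < q := hpq.symm.pos
    have hXq0 : X ^ (1/q) ≠ 0 := by
      simp only [ne_eq, ENNReal.rpow_eq_zero_iff, not_or]
      exact ⟨fun hc => hX0 hc.1, fun hc => hXfin hc.1⟩
    have hXqt : X ^ (1/q) ≠ ⊤ := by
      simp only [ne_eq, ENNReal.rpow_eq_top_iff, not_or]
      constructor
      · rintro ⟨-, hneg⟩; exact absurd hneg (not_lt.2 (one_div_nonneg.2 hq0.le))
      · rintro ⟨htop, -⟩; exact hXfin htop
    have h11 : 1/p + 1/q = (1:ℝ) := by
      rw [one_div, one_div]; exact hpq.inv_add_inv_eq_one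
    have hXsplit : X = X ^ (1/p) * X ^ (1/q) := by
      rw [← ENNReal.rpow_add _ _ hX0 hXfin, h11, ENNReal.rpow_one]
    have hcancel : X ^ (1/p) ≤ ENNReal.ofReal q * A ^ (1/p) := by
      rw [← ENNReal.mul_le_mul_iff_left hXq0 hXqt, ← hXsplit]
      calc X ≤ ENNReal.ofReal q * (A ^ (1/p) * X ^ (1/q)) := hX3
        _ = ENNReal.ofReal q * A ^ (1/p) * X ^ (1/q) := by rw [mul_assoc]
    have hfinal : X ≤ ENNReal.ofReal q ^ p * A := by
      have h1p : (1/p) * p = 1 := by field_simp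
      calc X = (X ^ (1/p)) ^ p := by rw [← ENNReal.rpow_mul, h1p, ENNReal.rpow_one]
        _ ≤ (ENNReal.ofReal q * A ^ (1/p)) ^ p := ENNReal.rpow_le_rpow hcancel hp0.le
        _ = ENNReal.ofReal q ^ p * (A ^ (1/p)) ^ p := ENNReal.mul_rpow_of_nonneg _ _ hp0.le
        _ = ENNReal.ofReal q ^ p * A := by rw [← ENNReal.rpow_mul, h1p, ENNReal.rpow_one]
    exact hfinal
  -- monotone convergence in N
  have hsup : ∀ x, (⨆ N : ℕ, (min (T x) (N:ℝ≥0∞)) ^ p) = T x ^ p := by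
    intro x
    refine le_antisymm (iSup_le fun N => ENNReal.rpow_le_rpow (min_le_left _ _) hp0.le) ?_
    by_cases hx : T x = ⊤
    · rw [hx, ENNReal.top_rpow_of_pos hp0]
      have : ∀ N : ℕ, (N:ℝ≥0∞) ≤ (min (⊤:ℝ≥0∞) (N:ℝ≥0∞)) ^ p := by
        intro N
        rw [min_eq_right le_top]
        rcases Nat.eq_zero_or_pos N with rfl | hN
        · simp
        · conv_lhs => rw [← ENNReal.rpow_one (N:ℝ≥0∞)]
          exact ENNReal.rpow_le_rpow_of_exponent_le (by exact_mod_cast hN) hp.le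
      calc (⊤:ℝ≥0∞) = ⨆ N : ℕ, (N:ℝ≥0∞) := ENNReal.iSup_natCast.symm
        _ ≤ ⨆ N : ℕ, (min (⊤:ℝ≥0∞) (N:ℝ≥0∞)) ^ p := iSup_mono this
    · obtain ⟨N, hN⟩ := ENNReal.exists_nat_gt hx
      exact le_iSup_of_le N (by rw [min_eq_left hN.le])
  calc ∫⁻ x, T x ^ p ∂μ = ∫⁻ x, ⨆ N : ℕ, (min (T x) (N:ℝ≥0∞)) ^ p ∂μ :=
        lintegral_congr fun x => (hsup x).symm
    _ = ⨆ N : ℕ, ∫⁻ x, (min (T x) (N:ℝ≥0∞)) ^ p ∂μ := by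
        refine lintegral_iSup (fun N => (hT_meas.min measurable_const).pow measurable_const)
          (fun N M hNM x => ?_)
        exact ENNReal.rpow_le_rpow (min_le_min le_rfl (by exact_mod_cast hNM)) hp0.le
    _ ≤ ENNReal.ofReal q ^ p * A := iSup_le main

/-- Pairing a nonnegative `ℱ j`-measurable function against `𝔼[χ_E | ℱ j]`. -/
lemma pair_condexp {Ω : Type*} {m : MeasurableSpace Ω} {μ : Measure Ω} [SigmaFinite μ]
    (ℱ : Filtration ℤ m) [SigmaFiniteFiltration μ ℱ] (j : ℤ)
    {Eset : Set Ω} (hE : MeasurableSet Eset) (hEfin : μ Eset ≠ ∞)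
    {W : Ω → ℝ≥0∞} (hW : Measurable[ℱ j] W) :
    ∫⁻ x, W x * ENNReal.ofReal ((μ[Eset.indicator (fun _ => (1:ℝ))|ℱ j]) x) ∂μ
      = ∫⁻ x in Eset, W x ∂μ := by
  classical
  set e : Ω → ℝ := μ[Eset.indicator (fun _ => (1:ℝ))|ℱ j] with hedef
  have he_meas : Measurable e := (stronglyMeasurable_condExp.mono (ℱ.le j)).measurable
  have hχ_int : Integrable (Eset.indicator fun _ => (1:ℝ)) μ := by
    rw [integrable_indicator_iff hE]
    exact integrableOn_const hEfin
  have he_nonneg : 0 ≤ᵐ[μ] e :=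
    condExp_nonneg (Filter.Eventually.of_forall fun x => Set.indicator_nonneg
      (fun _ _ => zero_le_one) x)
  have hW_m : Measurable W := hW.mono (ℱ.le j) le_rfl
  -- the two relevant measures agree on `ℱ j`
  have htrim : (μ.withDensity fun x => ENNReal.ofReal (e x)).trim (ℱ.le j)
      = (μ.restrict Eset).trim (ℱ.le j) := by
    refine @Measure.ext Ω (ℱ j) _ _ (fun s hs => ?_)
    rw [trim_measurableSet_eq (ℱ.le j) hs, trim_measurableSet_eq (ℱ.le j) hs,
      withDensity_apply _ (ℱ.le j _ hs), Measure.restrict_apply (ℱ.le j _ hs)]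
    have h1 : ∫⁻ x in s, ENNReal.ofReal (e x) ∂μ = ENNReal.ofReal (∫ x in s, e x ∂μ) :=
      (ofReal_integral_eq_lintegral_ofReal integrable_condExp.integrableOn
        (ae_restrict_of_ae he_nonneg)).symm
    have h2 : ∫ x in s, e x ∂μ = ∫ x in s, Eset.indicator (fun _ => (1:ℝ)) x ∂μ :=
      setIntegral_condExp (ℱ.le j) hχ_int hs
    have h3 : ∫ x in s, Eset.indicator (fun _ => (1:ℝ)) x ∂μ = (μ (s ∩ Eset)).toReal := by
      rw [setIntegral_indicator hE, setIntegral_const, smul_eq_mul, mul_one, measureReal_def]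
    rw [h1, h2, h3, ENNReal.ofReal_toReal
      (((measure_mono Set.inter_subset_right).trans_lt hEfin.lt_top).ne)]
  calc ∫⁻ x, W x * ENNReal.ofReal (e x) ∂μ
      = ∫⁻ x, W x ∂(μ.withDensity fun x => ENNReal.ofReal (e x)) := by
        rw [lintegral_withDensity_eq_lintegral_mul μ he_meas.ennreal_ofReal hW_m]
        exact lintegral_congr fun x => (mul_comm _ _)
    _ = ∫⁻ x, W x ∂((μ.withDensity fun x => ENNReal.ofReal (e x)).trim (ℱ.le j)) :=
        (lintegral_trim (ℱ.le j) hW).symm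
    _ = ∫⁻ x, W x ∂((μ.restrict Eset).trim (ℱ.le j)) := by rw [htrim]
    _ = ∫⁻ x in Eset, W x ∂μ := lintegral_trim (ℱ.le j) hW

end Auxiliary

/-- **Carleson embedding over principal sets** (Lemma 3.2).  If `(Pₙ)` is a countable
family of sets with indices `iₙ`, levels `kₙ` and pairwise disjoint subsets `Eₙ ⊆ Pₙ`
satisfying the conditional sparsity `χ_{Pₙ} ≤ 2 𝔼_{iₙ}(χ_{Eₙ})` a.e. on `Pₙ` and the
level condition `2^{kₙ-1} < 𝔼_{iₙ}(h)` a.e. on `Pₙ`, then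
`Σₙ μ(Pₙ) 2^{p(kₙ-1)} ≤ 2 (p')^p ∫ h^p dμ`. -/
theorem carleson_embedding_principal_sets
    {Ω : Type*} {m : MeasurableSpace Ω} {μ : Measure Ω} [SigmaFinite μ]
    (ℱ : Filtration ℤ m) [SigmaFiniteFiltration μ ℱ]
    (p : ℝ) (hp : 1 < p)
    (h : Ω → ℝ) (hh_nonneg : 0 ≤ h) (hh_meas : Measurable h) (hh_int : Integrable h μ)
    (hhp_int : Integrable (fun x => h x ^ p) μ)
    (P E : ℕ → Set Ω) (i : ℕ → ℤ) (k : ℕ → ℤ)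
    (hP_meas : ∀ n, MeasurableSet[ℱ (i n)] (P n))
    (hE_meas : ∀ n, MeasurableSet (E n))
    (hE_sub : ∀ n, E n ⊆ P n)
    (hE_disj : Pairwise (Function.onFun Disjoint E))
    (hsparse : ∀ n, ∀ᵐ x ∂μ, x ∈ P n →
      (1 : ℝ) ≤ 2 * (μ[(E n).indicator (fun _ => (1 : ℝ))|ℱ (i n)]) x)
    (hlevel : ∀ n, ∀ᵐ x ∂μ, x ∈ P n →
      (2 : ℝ) ^ ((k n : ℝ) - 1) < (μ[h|ℱ (i n)]) x) :
    ∑' n : ℕ, μ (P n) * ENNReal.ofReal ((2 : ℝ) ^ (p * ((k n : ℝ) - 1)))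
      ≤ ENNReal.ofReal (2 * (p / (p - 1)) ^ p * ∫ x, h x ^ p ∂μ) := by
  classical
  have hp0 : (0:ℝ) < p := lt_trans one_pos hp
  set T : Ω → ℝ≥0∞ := fun x => ⨆ n : ℕ, ENNReal.ofReal ((μ[h|ℱ (i n)]) x) with hTdef
  have hA : (∫⁻ x, ENNReal.ofReal (h x) ^ p ∂μ) = ENNReal.ofReal (∫ x, h x ^ p ∂μ) := by
    rw [show (∫⁻ x, ENNReal.ofReal (h x) ^ p ∂μ) = ∫⁻ x, ENNReal.ofReal (h x ^ p) ∂μ from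
      lintegral_congr fun x => ENNReal.ofReal_rpow_of_nonneg (hh_nonneg x) hp0.le]
    exact (ofReal_integral_eq_lintegral_ofReal hhp_int
      (Filter.Eventually.of_forall fun x => Real.rpow_nonneg (hh_nonneg x) p)).symm
  have hdoob := doob_lp ℱ hp hh_nonneg hh_meas hh_int i
  -- the estimate for a single principal set
  have key : ∀ n : ℕ, μ (P n) * ENNReal.ofReal ((2:ℝ) ^ (p * ((k n : ℝ) - 1)))
      ≤ 2 * ∫⁻ x in E n, (ENNReal.ofReal ((μ[h|ℱ (i n)]) x)) ^ p ∂μ := by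
    intro n
    set c : ℝ := (2:ℝ) ^ ((k n : ℝ) - 1) with hcdef
    have hc : 0 < c := Real.rpow_pos_of_pos two_pos _
    set g : Ω → ℝ := μ[h|ℱ (i n)] with hgdef
    have hg_meas : Measurable g := (stronglyMeasurable_condExp.mono (ℱ.le _)).measurable
    have hPm : MeasurableSet (P n) := ℱ.le _ _ (hP_meas n)
    have hg_nonneg : 0 ≤ᵐ[μ] g := condExp_nonneg (Filter.Eventually.of_forall hh_nonneg)
    -- μ (P n) is finite
    have hPfin : μ (P n) ≠ ∞ := by
      have h1 : ENNReal.ofReal c * μ (P n) = ∫⁻ _ in P n, ENNReal.ofReal c ∂μ :=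
        (setLIntegral_const _ _).symm
      have h2 : (∫⁻ _ in P n, ENNReal.ofReal c ∂μ) ≤ ∫⁻ x in P n, ENNReal.ofReal (g x) ∂μ := by
        refine setLIntegral_mono_ae hg_meas.ennreal_ofReal.aemeasurable ?_
        filter_upwards [hlevel n] with x hx hxP
        exact ENNReal.ofReal_le_ofReal (le_of_lt (hx hxP))
      have h4 : (∫⁻ x, ENNReal.ofReal (g x) ∂μ) = ENNReal.ofReal (∫ x, g x ∂μ) :=
        (ofReal_integral_eq_lintegral_ofReal integrable_condExp hg_nonneg).symm
      have hne : ENNReal.ofReal c * μ (P n) ≠ ⊤ := by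
        rw [h1]
        exact (((h2.trans (setLIntegral_le_lintegral _ _)).trans_eq h4).trans_lt
          ENNReal.ofReal_lt_top).ne
      intro htop
      apply hne
      rw [htop, ENNReal.mul_top (by simp [ENNReal.ofReal_eq_zero, not_le]; linarith)]
    have hEfin : μ (E n) ≠ ∞ := ((measure_mono (hE_sub n)).trans_lt hPfin.lt_top).ne
    set e : Ω → ℝ := μ[(E n).indicator (fun _ => (1:ℝ))|ℱ (i n)] with hedef
    have he_meas : Measurable e := (stronglyMeasurable_condExp.mono (ℱ.le _)).measurable
    set W : Ω → ℝ≥0∞ := (P n).indicator (fun x => (ENNReal.ofReal (g x)) ^ p) with hWdef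
    have hW_Fmeas : Measurable[ℱ (i n)] W :=
      Measurable.indicator
        ((stronglyMeasurable_condExp.measurable.ennreal_ofReal).pow measurable_const)
        (hP_meas n)
    have hW_m : Measurable W := hW_Fmeas.mono (ℱ.le _) le_rfl
    -- pointwise a.e. estimate
    have hae : ∀ᵐ x ∂μ, (P n).indicator (fun _ => ENNReal.ofReal (c ^ p)) x
        ≤ 2 * (W x * ENNReal.ofReal (e x)) := by
      filter_upwards [hsparse n, hlevel n] with x hs hl
      by_cases hxP : x ∈ P n
      · rw [Set.indicator_of_mem hxP]
        have h2e : (1:ℝ≥0∞) ≤ 2 * ENNReal.ofReal (e x) := by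
          calc (1:ℝ≥0∞) = ENNReal.ofReal 1 := by simp
            _ ≤ ENNReal.ofReal (2 * e x) := ENNReal.ofReal_le_ofReal (hs hxP)
            _ = 2 * ENNReal.ofReal (e x) := by
                rw [ENNReal.ofReal_mul (by norm_num : (0:ℝ) ≤ 2), ENNReal.ofReal_ofNat]
        have hWx : ENNReal.ofReal (c ^ p) ≤ W x := by
          rw [hWdef, Set.indicator_of_mem hxP, ← ENNReal.ofReal_rpow_of_pos hc]
          exact ENNReal.rpow_le_rpow (ENNReal.ofReal_le_ofReal (hl hxP).le) hp0.le
        calc ENNReal.ofReal (c ^ p) = 1 * ENNReal.ofReal (c ^ p) := (one_mul _).symm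
          _ ≤ (2 * ENNReal.ofReal (e x)) * W x := mul_le_mul' h2e hWx
          _ = 2 * (W x * ENNReal.ofReal (e x)) := by ring
      · rw [Set.indicator_of_notMem hxP]; exact zero_le
    have hmeas2 : Measurable fun x => W x * ENNReal.ofReal (e x) :=
      hW_m.mul he_meas.ennreal_ofReal
    have hstep : μ (P n) * ENNReal.ofReal (c ^ p)
        ≤ 2 * ∫⁻ x, W x * ENNReal.ofReal (e x) ∂μ := by
      have hlhs : μ (P n) * ENNReal.ofReal (c ^ p)
          = ∫⁻ x, (P n).indicator (fun _ => ENNReal.ofReal (c ^ p)) x ∂μ := by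
        rw [lintegral_indicator hPm, setLIntegral_const, mul_comm]
      rw [hlhs, ← lintegral_const_mul _ hmeas2]
      exact lintegral_mono_ae hae
    have hpair := pair_condexp ℱ (i n) (hE_meas n) hEfin hW_Fmeas
    have hWE : (∫⁻ x in E n, W x ∂μ) = ∫⁻ x in E n, (ENNReal.ofReal (g x)) ^ p ∂μ :=
      setLIntegral_congr_fun_ae (hE_meas n) (ae_of_all _ fun x hx => by
        rw [hWdef, Set.indicator_of_mem (hE_sub n hx)])
    have hexp : ENNReal.ofReal ((2:ℝ) ^ (p * ((k n : ℝ) - 1))) = ENNReal.ofReal (c ^ p) := by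
      rw [hcdef, mul_comm p, Real.rpow_mul (by norm_num : (0:ℝ) ≤ 2)]
    rw [hexp]
    calc μ (P n) * ENNReal.ofReal (c ^ p)
        ≤ 2 * ∫⁻ x, W x * ENNReal.ofReal (e x) ∂μ := hstep
      _ = 2 * ∫⁻ x in E n, W x ∂μ := by rw [hpair]
      _ = 2 * ∫⁻ x in E n, (ENNReal.ofReal (g x)) ^ p ∂μ := by rw [hWE]
  -- summing up
  have hsum : (∑' n : ℕ, μ (P n) * ENNReal.ofReal ((2:ℝ) ^ (p * ((k n : ℝ) - 1))))
      ≤ 2 * ∫⁻ x, T x ^ p ∂μ := by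
    have hFmeas : ∀ n : ℕ, Measurable fun x =>
        (E n).indicator (fun y => (ENNReal.ofReal ((μ[h|ℱ (i n)]) y)) ^ p) x := fun n =>
      Measurable.indicator
        (((stronglyMeasurable_condExp.mono (ℱ.le _)).measurable.ennreal_ofReal).pow
          measurable_const) (hE_meas n)
    calc (∑' n : ℕ, μ (P n) * ENNReal.ofReal ((2:ℝ) ^ (p * ((k n : ℝ) - 1))))
        ≤ ∑' n : ℕ, 2 * ∫⁻ x in E n, (ENNReal.ofReal ((μ[h|ℱ (i n)]) x)) ^ p ∂μ :=
          ENNReal.tsum_le_tsum key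
      _ = 2 * ∑' n : ℕ, ∫⁻ x in E n, (ENNReal.ofReal ((μ[h|ℱ (i n)]) x)) ^ p ∂μ :=
          ENNReal.tsum_mul_left
      _ = 2 * ∫⁻ x, ∑' n : ℕ,
            (E n).indicator (fun y => (ENNReal.ofReal ((μ[h|ℱ (i n)]) y)) ^ p) x ∂μ := by
          congr 1
          rw [tsum_congr fun n => (lintegral_indicator (hE_meas n) _).symm]
          exact (lintegral_tsum fun n => (hFmeas n).aemeasurable).symm
      _ ≤ 2 * ∫⁻ x, T x ^ p ∂μ := by
          refine mul_le_mul_right (lintegral_mono fun x => ?_) _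
          by_cases hx : ∃ n, x ∈ E n
          · obtain ⟨n0, hn0⟩ := hx
            have hz : ∀ n, n ≠ n0 →
                (E n).indicator (fun y => (ENNReal.ofReal ((μ[h|ℱ (i n)]) y)) ^ p) x = 0 :=
              fun n hn => Set.indicator_of_notMem
                (fun hmem => Set.disjoint_left.1 (hE_disj hn) hmem hn0) _
            rw [tsum_eq_single n0 hz, Set.indicator_of_mem hn0]
            exact ENNReal.rpow_le_rpow
              (le_iSup (fun n => ENNReal.ofReal ((μ[h|ℱ (i n)]) x)) n0) hp0.le
          · have hz : ∀ n : ℕ,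
                (E n).indicator (fun y => (ENNReal.ofReal ((μ[h|ℱ (i n)]) y)) ^ p) x = 0 :=
              fun n => Set.indicator_of_notMem (fun hc => hx ⟨n, hc⟩) _
            rw [tsum_congr hz, tsum_zero]
            exact zero_le
  have hq_pos : (0:ℝ) < p / (p - 1) := div_pos hp0 (by linarith)
  calc (∑' n : ℕ, μ (P n) * ENNReal.ofReal ((2:ℝ) ^ (p * ((k n : ℝ) - 1))))
      ≤ 2 * ∫⁻ x, T x ^ p ∂μ := hsum
    _ ≤ 2 * (ENNReal.ofReal (p / (p - 1)) ^ p * ∫⁻ x, ENNReal.ofReal (h x) ^ p ∂μ) :=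
        mul_le_mul_right hdoob _
    _ = ENNReal.ofReal (2 * (p / (p - 1)) ^ p * ∫ x, h x ^ p ∂μ) := by
        rw [hA, ENNReal.ofReal_mul (mul_nonneg (by norm_num)
          (Real.rpow_nonneg hq_pos.le p)), ENNReal.ofReal_mul (by norm_num : (0:ℝ) ≤ 2),
          ENNReal.ofReal_ofNat, ENNReal.ofReal_rpow_of_pos hq_pos, mul_assoc]
end

section
/- (Testing estimate under A_p and A*_∞.) Let 1<p<∞ with conjugate exponent p', and let v, ω be weights with σ := ω^{1-p'} ∈ 𝓛⁺. Suppose (v,ω) satisfies the two-weight A_p condition with constant [v,ω]_{A_p}, the smallest C such that sup_{j∈ℤ} 𝔼_j(v) 𝔼_j(ω^{1-p'})^{p/p'} ≤ C μ-a.e., and σ satisfies the A*_∞ condition with constant [σ]_{A*_∞}, the smallest C such that ∫_E *M_i(σχ_E) dμ ≤ C σ(E) for all i∈ℤ and E∈𝓕_i⁰. Then there is an absolute constant C' such that for every i∈ℤ and E∈𝓕_i⁰, ∫_E (*M_i(σ χ_E))^p v dμ ≤ C' [v,ω]_{A_p} [σ]_{A*_∞} σ(E). -/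
open MeasureTheory
open scoped ENNReal

/-- **Testing estimate under `A_p` and `A*_∞`** (proof of Theorem 1.6 (2)):
if `(v,ω) ∈ A_p` and `σ = ω^{1-p'} ∈ A*_∞`, then for every `i ∈ ℤ` and `E ∈ 𝓕ᵢ⁰`,
`∫_E (*Mᵢ(σχ_E))^p v dμ ≤ C' [v,ω]_{A_p} [σ]_{A*_∞} σ(E)` with an absolute
constant `C'`. -/
theorem testing_estimate_Ap_Ainfty
    {Ω : Type*} {m : MeasurableSpace Ω} {μ : Measure Ω} [SigmaFinite μ]
    (ℱ : Filtration ℤ m) [SigmaFiniteFiltration μ ℱ]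
    (p : ℝ) (hp : 1 < p)
    (v ω σ : Ω → ℝ)
    (hv_nonneg : 0 ≤ v) (hω_nonneg : 0 ≤ ω) (hσ_nonneg : 0 ≤ σ)
    (hv_meas : Measurable v) (hω_meas : Measurable ω) (hσ_meas : Measurable σ)
    (hv_int : Integrable v μ) (hσ_int : Integrable σ μ)
    (hσ_def : σ = fun x => ω x ^ (1 - p / (p - 1)))
    -- `(v,ω) ∈ A_p` with constant `Ap`
    (Ap : ℝ) (hAp_nonneg : 0 ≤ Ap)
    (hAp : ∀ j : ℤ, ∀ᵐ x ∂μ,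
      (μ[v|ℱ j]) x * (μ[σ|ℱ j]) x ^ (p / (p / (p - 1))) ≤ Ap)
    -- `σ ∈ A*_∞` with constant `Ainf`
    (Ainf : ℝ) (hAinf_nonneg : 0 ≤ Ainf)
    (hAinf : ∀ i : ℤ, ∀ E : Set Ω, MeasurableSet[ℱ i] E → μ E < ∞ →
      ∫⁻ x in E, (⨆ j : {j : ℤ // i ≤ j},
          ENNReal.ofReal |(μ[E.indicator σ|ℱ j.1]) x|) ∂μ
        ≤ ENNReal.ofReal Ainf * ∫⁻ x in E, ENNReal.ofReal (σ x) ∂μ) :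
    ∃ C' : ℝ, 0 < C' ∧
      ∀ i : ℤ, ∀ E : Set Ω, MeasurableSet[ℱ i] E → μ E < ∞ →
        ∫⁻ x in E, (⨆ j : {j : ℤ // i ≤ j},
            ENNReal.ofReal |(μ[E.indicator σ|ℱ j.1]) x|) ^ p
            * ENNReal.ofReal (v x) ∂μ
          ≤ ENNReal.ofReal (C' * Ap * Ainf) * ∫⁻ x in E, ENNReal.ofReal (σ x) ∂μ := by
  classical
  have hp0 : (0:ℝ) < p := by linarith
  have hp1 : (0:ℝ) < p - 1 := by linarith
  refine ⟨p, hp0, ?_⟩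
  intro i E hE hEfin
  have hEm : MeasurableSet E := ℱ.le i E hE
  set f : Ω → ℝ := E.indicator σ with hfdef
  have hf_int : Integrable f μ := hσ_int.indicator hEm
  have hf_nonneg : ∀ x, 0 ≤ f x := fun x =>
    Set.indicator_nonneg (fun y _ => hσ_nonneg y) x
  have hf_le : ∀ x, f x ≤ σ x := fun x =>
    Set.indicator_le_self' (fun y _ => hσ_nonneg y) x
  set g : ℤ → Ω → ℝ := fun j => μ[f|ℱ j] with hgdef
  set M : Ω → ℝ≥0∞ := fun x => ⨆ j : {j : ℤ // i ≤ j}, ENNReal.ofReal |g j.1 x| with hMdef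
  have hg_smeas : ∀ j, StronglyMeasurable[ℱ j] (g j) := fun j => stronglyMeasurable_condExp
  have hg_meas : ∀ j, Measurable (g j) := fun j =>
    ((hg_smeas j).mono (ℱ.le j)).measurable
  have hM_meas : Measurable M := by
    apply Measurable.iSup
    intro j
    exact (hg_meas j.1).abs.ennreal_ofReal
  -- the conditional expectation facts, combined per index j
  have hexp : p / (p / (p - 1)) = p - 1 := by
    rw [div_div_eq_mul_div, mul_comm, mul_div_assoc, div_self (ne_of_gt hp0), mul_one]
  have hcond : ∀ j : ℤ, ∀ᵐ x ∂μ, 0 ≤ g j x ∧ g j x ≤ (μ[σ|ℱ j]) x ∧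
      0 ≤ (μ[v|ℱ j]) x ∧ (μ[v|ℱ j]) x * (μ[σ|ℱ j]) x ^ (p - 1) ≤ Ap := by
    intro j
    have h1 := hAp j
    simp only [hexp] at h1
    filter_upwards [h1, condExp_nonneg (Filter.Eventually.of_forall hf_nonneg),
      condExp_mono hf_int hσ_int (Filter.Eventually.of_forall hf_le),
      condExp_nonneg (Filter.Eventually.of_forall hv_nonneg)] with x hx1 hx2 hx3 hx4
    exact ⟨hx2, hx3, hx4, hx1⟩
  -- σ(E) is finite
  have hσE_fin : (∫⁻ x in E, ENNReal.ofReal (σ x) ∂μ) ≠ ∞ := by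
    refine ne_of_lt (lt_of_le_of_lt (setLIntegral_le_lintegral _ _) ?_)
    rw [← ofReal_integral_eq_lintegral_ofReal hσ_int (Filter.Eventually.of_forall hσ_nonneg)]
    exact ENNReal.ofReal_lt_top
  have hAinfE := hAinf i E hE hEfin
  have hMlint_fin : (∫⁻ x in E, M x ∂μ) ≠ ∞ :=
    ne_of_lt (lt_of_le_of_lt hAinfE
      (ENNReal.mul_lt_top ENNReal.ofReal_lt_top (lt_of_le_of_ne le_top hσE_fin)))
  have hMfin_ae : ∀ᵐ x ∂(μ.restrict E), M x < ∞ := ae_lt_top hM_meas hMlint_fin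
  -- the weighted measure
  set ν : Measure Ω := μ.withDensity (fun x => ENNReal.ofReal (v x)) with hνdef
  have hw_meas : Measurable fun x => ENNReal.ofReal (v x) := hv_meas.ennreal_ofReal
  -- key level-set estimate via stopping-time decomposition
  have key : ∀ t : ℝ, 0 < t →
      ν (E ∩ {x | ENNReal.ofReal t < M x})
        ≤ ENNReal.ofReal (Ap * t ^ (1 - p)) * μ (E ∩ {x | ENNReal.ofReal t < M x}) := by
    intro t ht
    set c : ℝ := Ap * t ^ (1 - p) with hcdef
    have hc : 0 ≤ c := mul_nonneg hAp_nonneg (Real.rpow_nonneg ht.le _)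
    set P : ℤ → Ω → Prop := fun j x => i ≤ j ∧ ENNReal.ofReal t < ENNReal.ofReal |g j x|
      with hPdef
    set S : ℤ → Set Ω := fun j => E ∩ {x | P j x ∧ ∀ j', P j' x → j ≤ j'} with hSdef
    have hS_measF : ∀ j, i ≤ j → MeasurableSet[ℱ j] (S j) := by
      intro j hij
      refine MeasurableSet.inter (ℱ.mono hij E hE) ?_
      have h1 : MeasurableSet[ℱ j] {x | P j x} := by
        simp only [hPdef, hij, true_and]
        have hgj : Measurable[ℱ j] (g j) := (hg_smeas j).measurable
        exact (ENNReal.measurable_ofReal.comp (measurable_abs.comp hgj)) measurableSet_Ioi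
      have h2 : MeasurableSet[ℱ j] {x | ∀ j', P j' x → j ≤ j'} := by
        have : {x | ∀ j', P j' x → j ≤ j'} = ⋂ j' : ℤ, {x | P j' x → j ≤ j'} := by
          ext x; simp [Set.mem_iInter]
        rw [this]
        refine MeasurableSet.iInter fun j' => ?_
        by_cases hjj : j ≤ j'
        · have : {x | P j' x → j ≤ j'} = Set.univ := by
            ext x; simp [hjj]
          rw [this]; exact MeasurableSet.univ
        by_cases hij' : i ≤ j'
        · have : {x | P j' x → j ≤ j'} =
              {x | ENNReal.ofReal t < ENNReal.ofReal |g j' x|}ᶜ := by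
            ext x; simp [hPdef, hij', hjj]
          rw [this]
          refine MeasurableSet.compl ?_
          have hgj : Measurable[ℱ j] (g j') :=
            ((hg_smeas j').mono (ℱ.mono (le_of_not_ge hjj))).measurable
          exact (ENNReal.measurable_ofReal.comp (measurable_abs.comp hgj)) measurableSet_Ioi
        · have : {x | P j' x → j ≤ j'} = Set.univ := by
            ext x; simp [hPdef, hij']
          rw [this]; exact MeasurableSet.univ
      exact MeasurableSet.inter h1 h2
    have hS_empty : ∀ j, ¬ i ≤ j → S j = ∅ := by
      intro j hij
      ext x; simp [hSdef, hPdef, hij]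
    have hS_meas : ∀ j, MeasurableSet (S j) := by
      intro j
      by_cases hij : i ≤ j
      · exact ℱ.le j _ (hS_measF j hij)
      · rw [hS_empty j hij]; exact MeasurableSet.empty
    have hS_disj : Pairwise (Function.onFun Disjoint S) := by
      intro j k hjk
      rw [Function.onFun, Set.disjoint_left]
      rintro x ⟨-, hxj, hminj⟩ ⟨-, hxk, hmink⟩
      exact hjk (le_antisymm (hminj k hxk) (hmink j hxj))
    have hcover : E ∩ {x | ENNReal.ofReal t < M x} = ⋃ j, S j := by
      ext x
      constructor
      · rintro ⟨hxE, hxM⟩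
        have : ∃ j : {j : ℤ // i ≤ j}, ENNReal.ofReal t < ENNReal.ofReal |g j.1 x| :=
          lt_iSup_iff.mp hxM
        obtain ⟨j0, hj0⟩ := this
        have hExz : ∃ z : ℤ, P z x := ⟨j0.1, j0.2, hj0⟩
        obtain ⟨lb, hlb, hmin⟩ :=
          Int.exists_least_of_bdd (P := fun z => P z x) ⟨i, fun z hz => hz.1⟩ hExz
        exact Set.mem_iUnion.mpr ⟨lb, hxE, hlb, hmin⟩
      · intro hx
        obtain ⟨j, hxE, ⟨hij, hgt⟩, -⟩ := Set.mem_iUnion.mp hx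
        refine ⟨hxE, lt_of_lt_of_le hgt ?_⟩
        exact le_iSup (fun j : {j : ℤ // i ≤ j} => ENNReal.ofReal |g j.1 x|) ⟨j, hij⟩
    -- per-piece bound
    have hpiece : ∀ j : ℤ, ν (S j) ≤ ENNReal.ofReal c * μ (S j) := by
      intro j
      by_cases hij : i ≤ j
      · have hμS : μ (S j) < ∞ :=
          lt_of_le_of_lt (measure_mono Set.inter_subset_left) hEfin
        -- a.e. pointwise bound on S j
        have hb : ∀ᵐ x ∂μ, x ∈ S j → (μ[v|ℱ j]) x ≤ c := by
          filter_upwards [hcond j] with x hx hxS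
          obtain ⟨h0f, hfσ, h0v, hApx⟩ := hx
          obtain ⟨-, ⟨⟨-, hgt⟩, -⟩⟩ := hxS
          have ht' : t < |g j x| :=
            (ENNReal.ofReal_lt_ofReal_iff_of_nonneg ht.le).mp hgt
          rw [abs_of_nonneg h0f] at ht'
          have htσ : t < (μ[σ|ℱ j]) x := lt_of_lt_of_le ht' hfσ
          have hσp : t ^ (p-1) ≤ ((μ[σ|ℱ j]) x) ^ (p-1) :=
            Real.rpow_le_rpow ht.le htσ.le (by linarith)
          have htp : (0:ℝ) < t ^ (p-1) := Real.rpow_pos_of_pos ht _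
          have h5 : (μ[v|ℱ j]) x * t ^ (p-1) ≤ Ap :=
            le_trans (mul_le_mul_of_nonneg_left hσp h0v) hApx
          have h6 : (μ[v|ℱ j]) x ≤ Ap / t ^ (p-1) := (le_div_iff₀ htp).mpr h5
          have h7 : c = Ap / t ^ (p-1) := by
            rw [hcdef, show (1 - p) = -(p-1) by ring, Real.rpow_neg ht.le,
              div_eq_mul_inv]
          rw [h7]; exact h6
        have hri : ∀ᵐ x ∂(μ.restrict (S j)), (μ[v|ℱ j]) x ≤ c :=
          (ae_restrict_iff' (hS_meas j)).mpr hb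
        have hint1 : ∫ x in S j, v x ∂μ = ∫ x in S j, (μ[v|ℱ j]) x ∂μ :=
          (setIntegral_condExp (ℱ.le j) hv_int (hS_measF j hij)).symm
        have hint2 : ∫ x in S j, (μ[v|ℱ j]) x ∂μ ≤ c * (μ (S j)).toReal := by
          have h8 : ∫ x in S j, (μ[v|ℱ j]) x ∂μ ≤ ∫ _x in S j, c ∂μ := by
            refine integral_mono_ae integrable_condExp.integrableOn ?_ hri
            exact integrableOn_const hμS.ne
          rw [setIntegral_const] at h8
          rw [mul_comm]
          simpa [Measure.real] using h8
        have hν1 : ν (S j) = ENNReal.ofReal (∫ x in S j, v x ∂μ) := by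
          rw [hνdef, withDensity_apply _ (hS_meas j),
            ← ofReal_integral_eq_lintegral_ofReal hv_int.integrableOn
              (Filter.Eventually.of_forall fun x => hv_nonneg x)]
        rw [hν1, hint1]
        calc ENNReal.ofReal (∫ x in S j, (μ[v|ℱ j]) x ∂μ)
            ≤ ENNReal.ofReal (c * (μ (S j)).toReal) := ENNReal.ofReal_le_ofReal hint2
          _ = ENNReal.ofReal c * μ (S j) := by
              rw [ENNReal.ofReal_mul hc, ENNReal.ofReal_toReal hμS.ne]
      · rw [hS_empty j hij]; simp
    rw [hcover, measure_iUnion hS_disj hS_meas, measure_iUnion hS_disj hS_meas]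
    calc (∑' j, ν (S j)) ≤ ∑' j, ENNReal.ofReal c * μ (S j) :=
          ENNReal.tsum_le_tsum hpiece
      _ = ENNReal.ofReal c * ∑' j, μ (S j) := ENNReal.tsum_mul_left
  -- now the layer cake argument
  set F : Ω → ℝ := fun x => (M x).toReal with hFdef
  have hF_meas : Measurable F := hM_meas.ennreal_toReal
  have hF_nonneg : ∀ x, 0 ≤ F x := fun x => ENNReal.toReal_nonneg
  have hLHS : ∫⁻ x in E, M x ^ p * ENNReal.ofReal (v x) ∂μ
      = ∫⁻ x in E, M x ^ p ∂ν := by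
    rw [hνdef, restrict_withDensity hEm,
      lintegral_withDensity_eq_lintegral_mul _ hw_meas (hM_meas.pow measurable_const)]
    simp only [Pi.mul_apply, mul_comm]
  have hν_ac : ν.restrict E ≪ μ.restrict E :=
    (withDensity_absolutelyContinuous μ _).restrict E
  have hMfin_ν : ∀ᵐ x ∂(ν.restrict E), M x < ∞ := hν_ac.ae_le hMfin_ae
  have hstep1 : ∫⁻ x in E, M x ^ p ∂ν = ∫⁻ x in E, ENNReal.ofReal (F x ^ p) ∂ν := by
    refine lintegral_congr_ae ?_
    filter_upwards [hMfin_ν] with x hx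
    have hFx : ENNReal.ofReal (F x) = M x := ENNReal.ofReal_toReal hx.ne
    rw [← ENNReal.ofReal_rpow_of_nonneg (hF_nonneg x) hp0.le, hFx]
  have hstep2 : ∫⁻ x in E, ENNReal.ofReal (F x ^ p) ∂ν
      = ENNReal.ofReal p * ∫⁻ t in Set.Ioi (0:ℝ),
          (ν.restrict E) {a | t < F a} * ENNReal.ofReal (t ^ (p - 1)) := by
    exact lintegral_rpow_eq_lintegral_meas_lt_mul (ν.restrict E)
      (Filter.Eventually.of_forall hF_nonneg) hF_meas.aemeasurable hp0
  -- bound the layer-cake integrand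
  have hsubset : ∀ t : ℝ, 0 < t → {a | t < F a} ∩ E ⊆ E ∩ {x | ENNReal.ofReal t < M x} := by
    intro t ht x hx
    obtain ⟨hxF, hxE⟩ := hx
    refine ⟨hxE, ?_⟩
    have hMx : M x ≠ ∞ := by
      intro h
      have hF0 : F x = 0 := by simp [hFdef, h]
      rw [Set.mem_setOf_eq, hF0] at hxF
      linarith
    exact (ENNReal.ofReal_lt_iff_lt_toReal ht.le hMx).mpr hxF
  have hanti : Antitone fun t : ℝ => μ (E ∩ {x | ENNReal.ofReal t < M x}) := by
    intro s t hst
    refine measure_mono ?_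
    rintro x ⟨hxE, hx⟩
    exact ⟨hxE, lt_of_le_of_lt (ENNReal.ofReal_le_ofReal hst) hx⟩
  have hstep3 : ∫⁻ t in Set.Ioi (0:ℝ),
        (ν.restrict E) {a | t < F a} * ENNReal.ofReal (t ^ (p - 1))
      ≤ ∫⁻ t in Set.Ioi (0:ℝ),
        ENNReal.ofReal Ap * μ (E ∩ {x | ENNReal.ofReal t < M x}) := by
    refine setLIntegral_mono (Measurable.const_mul (hanti.measurable) _) ?_
    intro t ht
    have ht' : (0:ℝ) < t := ht
    have h1 : (ν.restrict E) {a | t < F a} ≤ ν (E ∩ {x | ENNReal.ofReal t < M x}) := by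
      rw [Measure.restrict_apply (measurableSet_lt measurable_const hF_meas)]
      exact measure_mono (hsubset t ht')
    calc (ν.restrict E) {a | t < F a} * ENNReal.ofReal (t ^ (p - 1))
        ≤ (ENNReal.ofReal (Ap * t ^ (1-p)) * μ (E ∩ {x | ENNReal.ofReal t < M x}))
            * ENNReal.ofReal (t ^ (p - 1)) :=
          mul_le_mul_left (le_trans h1 (key t ht')) _
      _ = ENNReal.ofReal Ap * μ (E ∩ {x | ENNReal.ofReal t < M x}) := by
          rw [ENNReal.ofReal_mul hAp_nonneg, mul_assoc, mul_comm (μ _), ← mul_assoc,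
            mul_assoc (ENNReal.ofReal Ap), ← ENNReal.ofReal_mul
              (Real.rpow_nonneg ht'.le _), ← Real.rpow_add ht', add_comm,
            show p - 1 + (1 - p) = 0 by ring, Real.rpow_zero, ENNReal.ofReal_one, mul_one]
  have hstep4 : ∫⁻ t in Set.Ioi (0:ℝ), μ (E ∩ {x | ENNReal.ofReal t < M x})
      ≤ ∫⁻ x in E, M x ∂μ := by
    have hzero : μ ({x | M x = ∞} ∩ E) = 0 := by
      have h0 : (μ.restrict E) {x | ¬ M x < ∞} = 0 := ae_iff.mp hMfin_ae
      refine le_antisymm ?_ zero_le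
      calc μ ({x | M x = ∞} ∩ E)
          = (μ.restrict E) {x | M x = ∞} :=
            (Measure.restrict_apply (hM_meas (measurableSet_singleton ∞))).symm
        _ ≤ (μ.restrict E) {x | ¬ M x < ∞} :=
            measure_mono (fun x hx => by
              simp only [Set.mem_setOf_eq] at hx ⊢
              simp [hx])
        _ = 0 := h0
    have hsub2 : ∀ t : ℝ, 0 < t →
        E ∩ {x | ENNReal.ofReal t < M x} ⊆ ({a | t < F a} ∩ E) ∪ ({x | M x = ∞} ∩ E) := by
      intro t ht x hx
      obtain ⟨hxE, hxM⟩ := hx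
      by_cases hfin : M x = ∞
      · exact Or.inr ⟨hfin, hxE⟩
      · exact Or.inl ⟨(ENNReal.ofReal_lt_iff_lt_toReal ht.le hfin).mp hxM, hxE⟩
    have hmono : ∀ t ∈ Set.Ioi (0:ℝ), μ (E ∩ {x | ENNReal.ofReal t < M x})
        ≤ (μ.restrict E) {a | t < F a} := by
      intro t ht
      calc μ (E ∩ {x | ENNReal.ofReal t < M x})
          ≤ μ (({a | t < F a} ∩ E) ∪ ({x | M x = ∞} ∩ E)) :=
            measure_mono (hsub2 t ht)
        _ ≤ μ ({a | t < F a} ∩ E) + μ ({x | M x = ∞} ∩ E) := measure_union_le _ _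
        _ = μ ({a | t < F a} ∩ E) := by rw [hzero, add_zero]
        _ = (μ.restrict E) {a | t < F a} := by
            rw [Measure.restrict_apply (measurableSet_lt measurable_const hF_meas)]
    calc ∫⁻ t in Set.Ioi (0:ℝ), μ (E ∩ {x | ENNReal.ofReal t < M x})
        ≤ ∫⁻ t in Set.Ioi (0:ℝ), (μ.restrict E) {a | t < F a} := by
          refine setLIntegral_mono ?_ hmono
          exact Antitone.measurable (fun a b hab => measure_mono
            (fun x hx => lt_of_le_of_lt hab hx))
      _ = ∫⁻ x in E, ENNReal.ofReal (F x) ∂μ :=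
          (lintegral_eq_lintegral_meas_lt (μ.restrict E)
            (Filter.Eventually.of_forall hF_nonneg) hF_meas.aemeasurable).symm
      _ = ∫⁻ x in E, M x ∂μ := by
          refine lintegral_congr_ae ?_
          filter_upwards [hMfin_ae] with x hx
          exact ENNReal.ofReal_toReal hx.ne
  -- put everything together
  calc ∫⁻ x in E, M x ^ p * ENNReal.ofReal (v x) ∂μ
      = ∫⁻ x in E, ENNReal.ofReal (F x ^ p) ∂ν := by rw [hLHS, hstep1]
    _ = ENNReal.ofReal p * ∫⁻ t in Set.Ioi (0:ℝ),
          (ν.restrict E) {a | t < F a} * ENNReal.ofReal (t ^ (p - 1)) := hstep2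
    _ ≤ ENNReal.ofReal p * ∫⁻ t in Set.Ioi (0:ℝ),
          ENNReal.ofReal Ap * μ (E ∩ {x | ENNReal.ofReal t < M x}) :=
        mul_le_mul_right hstep3 _
    _ = ENNReal.ofReal p * (ENNReal.ofReal Ap *
          ∫⁻ t in Set.Ioi (0:ℝ), μ (E ∩ {x | ENNReal.ofReal t < M x})) := by
        rw [lintegral_const_mul' _ _ ENNReal.ofReal_ne_top]
    _ ≤ ENNReal.ofReal p * (ENNReal.ofReal Ap * (∫⁻ x in E, M x ∂μ)) :=
        mul_le_mul_right (mul_le_mul_right hstep4 _) _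
    _ ≤ ENNReal.ofReal p * (ENNReal.ofReal Ap *
          (ENNReal.ofReal Ainf * ∫⁻ x in E, ENNReal.ofReal (σ x) ∂μ)) :=
        mul_le_mul_right (mul_le_mul_right hAinfE _) _
    _ = ENNReal.ofReal (p * Ap * Ainf) * ∫⁻ x in E, ENNReal.ofReal (σ x) ∂μ := by
        rw [ENNReal.ofReal_mul (mul_nonneg hp0.le hAp_nonneg),
          ENNReal.ofReal_mul hp0.le]
        ring
end
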